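/- arXiv:2112.14287 — 10 statements merged into one kernel-verified Lean document; each statement's English description precedes it below -/
import Mathlib

section
/- Let q(z) = b_n z^n + ... + b_0 be a polynomial with complex coefficients and suppose ζ is a root of q of multiplicity m ≥ 1. For every ε > 0 there exists δ > 0 such that every polynomial p(z) = a_n z^n + ... + a_0 with max_{0≤i≤n} |a_i − b_i| < δ has at least m roots (counted with multiplicity) in the open disc of radius ε centered at ζ. -/
open Polynomial Metric

private lemma norm_mprod (s : Multiset ℂ) : ‖s.prod‖ = (s.map (fun z => ‖z‖)).prod := by
  induction s using Multiset.induction with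
  | empty => simp
  | cons a s ih => simp [norm_mul, ih]

private lemma mprod_mono (s : Multiset ℂ) (f g : ℂ → ℝ) (hf : ∀ u ∈ s, 0 ≤ f u)
    (h : ∀ u ∈ s, f u ≤ g u) : (s.map f).prod ≤ (s.map g).prod := by
  induction s using Multiset.induction with
  | empty => simp
  | cons a s ih =>
    simp only [Multiset.map_cons, Multiset.prod_cons]
    have h1 : 0 ≤ (s.map f).prod := Multiset.prod_nonneg (by
      intro x hx; obtain ⟨u, hu, rfl⟩ := Multiset.mem_map.mp hx
      exact hf u (Multiset.mem_cons_of_mem hu))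
    exact mul_le_mul (h a (Multiset.mem_cons_self a s))
      (ih (fun u hu => hf u (Multiset.mem_cons_of_mem hu))
        (fun u hu => h u (Multiset.mem_cons_of_mem hu))) h1
      (le_trans (hf a (Multiset.mem_cons_self a s)) (h a (Multiset.mem_cons_self a s)))

private lemma mprod_const (s : Multiset ℂ) (c : ℝ) :
    (s.map (fun _ => c)).prod = c ^ Multiset.card s := by
  simp [Multiset.map_const', Multiset.prod_replicate]

set_option maxHeartbeats 1600000 in
/-- Continuity of roots: if ζ is a root of q of multiplicity m ≥ 1, then any polynomial p
of degree at most n whose coefficients are δ-close to those of q has at least m roots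
(with multiplicity) in the open ε-disc around ζ. -/
theorem roots_continuity_at_least (n : ℕ) (q : Polynomial ℂ) (hqn : q.natDegree ≤ n)
    (ζ : ℂ) (m : ℕ) (hm : 1 ≤ m) (hmult : q.rootMultiplicity ζ = m)
    (ε : ℝ) (hε : 0 < ε) :
    ∃ δ > 0, ∀ p : Polynomial ℂ, p.natDegree ≤ n →
      (∀ i ≤ n, ‖p.coeff i - q.coeff i‖ < δ) →
      m ≤ (p.roots.filter (fun z => ‖z - ζ‖ < ε)).card := by
  have hq0 : q ≠ 0 := by
    intro h; rw [h, rootMultiplicity_zero] at hmult; omega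
  -- factor q = (X - ζ)^m * g
  obtain ⟨g, hg⟩ : (X - C ζ) ^ m ∣ q := hmult ▸ pow_rootMultiplicity_dvd q ζ
  have hqeval : ∀ z : ℂ, q.eval z = (z - ζ) ^ m * g.eval z := by
    intro z; rw [hg]; simp [eval_mul, eval_pow]
  -- bound on g over the closed ε-ball
  obtain ⟨G, hGb⟩ : ∃ G, ∀ z ∈ closedBall ζ ε, ‖g.eval z‖ ≤ G := by
    obtain ⟨x, -, hx⟩ := (isCompact_closedBall ζ ε).exists_isMaxOn
      ⟨ζ, mem_closedBall_self hε.le⟩ ((g.continuous_aeval.norm).continuousOn)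
    exact ⟨‖g.eval x‖, by simpa [IsMaxOn, IsMaxFilter] using fun z hz => hx hz⟩
  set G' : ℝ := max G 1 with hG'def
  have hG' : (0:ℝ) < G' := lt_of_lt_of_le one_pos (le_max_right _ _)
  -- a point w0 close to ζ where q doesn't vanish
  obtain ⟨w0, hw0d, hw0⟩ : ∃ w0 : ℂ, ‖w0 - ζ‖ ≤ ε / 2 ∧ q.eval w0 ≠ 0 := by
    by_contra hcon
    push_neg at hcon
    set z : ℕ → ℂ := fun j => ζ + (((ε/2) / ((j:ℝ)+1) : ℝ) : ℂ) with hzdef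
    have hzball : ∀ j : ℕ, ‖z j - ζ‖ ≤ ε / 2 := by
      intro j
      have h1 : (0:ℝ) < (j:ℝ) + 1 := by positivity
      have h2 : z j - ζ = (((ε/2) / ((j:ℝ)+1) : ℝ) : ℂ) := by rw [hzdef]; ring
      rw [h2, Complex.norm_real, Real.norm_eq_abs, abs_of_nonneg (by positivity),
        div_le_iff₀ h1]
      nlinarith
    have hzroot : ∀ j : ℕ, z j ∈ q.roots.toFinset := by
      intro j
      rw [Multiset.mem_toFinset, mem_roots hq0]
      exact hcon (z j) (hzball j)
    have hinj : Set.InjOn z (Finset.range (n+1)) := by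
      intro i _ j _ hij
      have h1 : ((ε/2) / ((i:ℝ)+1) : ℂ) = ((ε/2) / ((j:ℝ)+1) : ℂ) := by
        have := hij
        rw [hzdef] at this
        simpa using this
      have h2 : (ε/2) / ((i:ℝ)+1) = (ε/2) / ((j:ℝ)+1) := by
        exact_mod_cast h1
      have hi1 : (0:ℝ) < (i:ℝ) + 1 := by positivity
      have hj1 : (0:ℝ) < (j:ℝ) + 1 := by positivity
      have hε2 : (0:ℝ) < ε/2 := by positivity
      rw [div_eq_div_iff hi1.ne' hj1.ne'] at h2
      have h3 : ((j:ℝ) + 1) * (ε/2) = ((i:ℝ) + 1) * (ε/2) := by linarith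
      have h4 : (j:ℝ) + 1 = (i:ℝ) + 1 := mul_right_cancel₀ (ne_of_gt hε2) h3
      have : (i:ℝ) = j := by linarith
      exact_mod_cast this
    have hcard : n + 1 ≤ q.roots.toFinset.card := by
      calc n + 1 = (Finset.range (n+1)).card := (Finset.card_range _).symm
        _ ≤ q.roots.toFinset.card :=
          Finset.card_le_card_of_injOn z (fun j _ => hzroot j) hinj
    have : q.roots.toFinset.card ≤ n :=
      le_trans (Multiset.toFinset_card_le _) (le_trans (card_roots' q) hqn)
    omega
  set c0 : ℝ := ‖q.eval w0‖ with hc0def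
  have hc0 : (0:ℝ) < c0 := norm_pos_iff.mpr hw0
  -- leading coefficient
  set L : ℝ := ‖q.leadingCoeff‖ with hLdef
  have hL : (0:ℝ) < L := norm_pos_iff.mpr (leadingCoeff_ne_zero.mpr hq0)
  -- constants
  set M : ℝ := (1 + 2*ε) ^ m with hMdef
  have hM1 : (1:ℝ) ≤ M := one_le_pow₀ (by linarith)
  have hM : (0:ℝ) < M := lt_of_lt_of_le one_pos hM1
  set c1 : ℝ := (1/2:ℝ)^(m-1) * c0 / (2 * M * 3^n) with hc1def
  have hc1 : (0:ℝ) < c1 := by positivity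
  set r : ℝ := min (min 1 (ε/(2*m))) (c1/(2 * (m:ℝ)^m * G')) with hrdef
  have hmR : (0:ℝ) < (m:ℝ) := by exact_mod_cast hm
  have hr0 : (0:ℝ) < r := by
    apply lt_min (lt_min one_pos (by positivity)) (by positivity)
  have hr1 : r ≤ 1 := le_trans (min_le_left _ _) (min_le_left _ _)
  have hrε : (m:ℝ) * r ≤ ε / 2 := by
    have h1 : r ≤ ε/(2*(m:ℝ)) :=
      le_trans (min_le_left (min 1 (ε/(2*(m:ℝ)))) (c1/(2 * (m:ℝ)^m * G')))
        (min_le_right 1 (ε/(2*(m:ℝ))))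
    rw [le_div_iff₀ (by positivity)] at h1
    nlinarith
  have hrc1 : r * ((m:ℝ)^m * G') ≤ c1 / 2 := by
    have := min_le_right (min 1 (ε/(2*m))) (c1/(2 * (m:ℝ)^m * G'))
    have h2 : (0:ℝ) < (m:ℝ)^m * G' := by positivity
    calc r * ((m:ℝ)^m * G') ≤ (c1/(2 * (m:ℝ)^m * G')) * ((m:ℝ)^m * G') := by
          exact mul_le_mul this le_rfl h2.le (by positivity)
      _ = c1 / 2 := by field_simp
  set κ : ℝ := r^(m-1) * c1 with hκdef
  have hκ : (0:ℝ) < κ := by positivity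
  set R : ℝ := ‖ζ‖ + ε with hRdef
  set K : ℝ := (max 1 R) ^ n with hKdef
  have hK1 : (1:ℝ) ≤ K := one_le_pow₀ (le_max_left _ _)
  set A : ℝ := ((n:ℝ)+1) * K with hAdef
  have hA : (0:ℝ) < A := by positivity
  -- the δ
  refine ⟨min L (min (c0/(2*A)) (κ/(4*A))), lt_min hL (lt_min (by positivity) (by positivity)), ?_⟩
  set δ : ℝ := min L (min (c0/(2*A)) (κ/(4*A))) with hδdef
  have hδpos : (0:ℝ) < δ := lt_min hL (lt_min (by positivity) (by positivity))
  have hδL : δ ≤ L := min_le_left _ _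
  have hδc0 : δ * A ≤ c0 / 2 := by
    have := le_trans (min_le_right L _) (min_le_left (c0/(2*A)) (κ/(4*A)))
    calc δ * A ≤ (c0/(2*A)) * A := mul_le_mul this le_rfl hA.le (by positivity)
      _ = c0/2 := by field_simp
  have hδκ : δ * A ≤ κ / 4 := by
    have := le_trans (min_le_right L _) (min_le_right (c0/(2*A)) (κ/(4*A)))
    calc δ * A ≤ (κ/(4*A)) * A := mul_le_mul this le_rfl hA.le (by positivity)
      _ = κ/4 := by field_simp
  intro p hpn hclose
  by_contra hcard
  push_neg at hcard
  -- p ≠ 0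
  have hp0 : p ≠ 0 := by
    intro h
    have h1 := hclose q.natDegree hqn
    rw [h, coeff_zero, zero_sub, norm_neg, coeff_natDegree, ← hLdef] at h1
    exact absurd (lt_of_lt_of_le h1 hδL) (lt_irrefl _)
  -- difference bound
  have hdiff : ∀ z : ℂ, ‖z - ζ‖ ≤ ε → ‖p.eval z - q.eval z‖ ≤ δ * A := by
    intro z hz
    have hzn : ‖z‖ ≤ max 1 R := by
      have : ‖z‖ ≤ ‖ζ‖ + ‖z - ζ‖ := by
        calc ‖z‖ = ‖ζ + (z - ζ)‖ := by congr 1; ring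
          _ ≤ ‖ζ‖ + ‖z - ζ‖ := norm_add_le _ _
      exact le_trans (by linarith) (le_max_right 1 R)
    have hd : (p - q).natDegree < n + 1 :=
      Nat.lt_succ_of_le (le_trans (natDegree_sub_le p q) (max_le hpn hqn))
    calc ‖p.eval z - q.eval z‖ = ‖(p-q).eval z‖ := by rw [eval_sub]
      _ = ‖∑ i ∈ Finset.range (n+1), (p-q).coeff i * z^i‖ := by rw [eval_eq_sum_range' hd]
      _ ≤ ∑ i ∈ Finset.range (n+1), ‖(p-q).coeff i * z^i‖ := norm_sum_le _ _
      _ ≤ ∑ _i ∈ Finset.range (n+1), δ * K := by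
          apply Finset.sum_le_sum
          intro i hi
          have hin : i ≤ n := Nat.lt_succ_iff.mp (Finset.mem_range.mp hi)
          rw [norm_mul]
          have h1 : ‖(p-q).coeff i‖ ≤ δ := by
            rw [coeff_sub]; exact (hclose i hin).le
          have h2 : ‖z^i‖ ≤ K := by
            rw [norm_pow, hKdef]
            calc ‖z‖^i ≤ (max 1 R)^i := pow_le_pow_left₀ (norm_nonneg z) hzn i
              _ ≤ (max 1 R)^n := pow_le_pow_right₀ (le_max_left 1 R) hin
          exact mul_le_mul h1 h2 (norm_nonneg _) hδpos.le
      _ = δ * A := by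
          rw [Finset.sum_const, Finset.card_range, hAdef]
          push_cast; ring
  -- the factor s collecting roots near ζ
  set S : Multiset ℂ := p.roots.filter (fun z => ‖z - ζ‖ < ε) with hSdef
  have hScard : Multiset.card S < m := hcard
  have hSmem : ∀ a ∈ S, ‖a - ζ‖ < ε := by
    intro a ha
    exact (Multiset.mem_filter.mp ha).2
  set s : Polynomial ℂ := (S.map (fun a => X - C a)).prod with hsdef
  have hsmonic : s.Monic := monic_multiset_prod_of_monic _ _ (fun a _ => monic_X_sub_C a)
  have hsd : s ∣ p := by
    have h1 : S ≤ p.roots := Multiset.filter_le _ _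
    exact dvd_trans (Multiset.prod_dvd_prod_of_le (Multiset.map_le_map h1))
      (prod_multiset_X_sub_C_dvd p)
  obtain ⟨t, hpt⟩ := hsd
  have ht0 : t ≠ 0 := by
    intro h; rw [h, mul_zero] at hpt; exact hp0 hpt
  have hsroots : s.roots = S := roots_multiset_prod_X_sub_C S
  have hroots : p.roots = S + t.roots := by
    rw [hpt, roots_mul (hpt ▸ hp0), hsroots]
  -- all roots of t are ε-far from ζ
  have htfar : ∀ u ∈ t.roots, ε ≤ ‖u - ζ‖ := by
    have h1 : Multiset.card (S.filter (fun z => ‖z - ζ‖ < ε))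
        + Multiset.card (t.roots.filter (fun z => ‖z - ζ‖ < ε)) = Multiset.card S := by
      rw [← Multiset.card_add, ← Multiset.filter_add, ← hroots, ← hSdef]
    have h2 : S.filter (fun z => ‖z - ζ‖ < ε) = S := Multiset.filter_eq_self.mpr hSmem
    rw [h2] at h1
    have h3 : Multiset.card (t.roots.filter (fun z => ‖z - ζ‖ < ε)) = 0 := by omega
    intro u hu
    by_contra hcon
    push_neg at hcon
    have : u ∈ t.roots.filter (fun z => ‖z - ζ‖ < ε) := Multiset.mem_filter.mpr ⟨hu, hcon⟩
    rw [Multiset.card_eq_zero] at h3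
    rw [h3] at this
    exact absurd this (Multiset.notMem_zero u)
  -- factorization of t over ℂ
  have htc : Multiset.card t.roots = t.natDegree :=
    (splits_iff_card_roots).mp (IsAlgClosed.splits t)
  have htf : C t.leadingCoeff * (t.roots.map (fun a => X - C a)).prod = t :=
    C_leadingCoeff_mul_prod_multiset_X_sub_C htc
  have htcard : Multiset.card t.roots ≤ n := by
    rw [htc]
    calc t.natDegree ≤ p.natDegree := natDegree_le_of_dvd ⟨s, by rw [hpt]; ring⟩ hp0
      _ ≤ n := hpn
  have hteval : ∀ z : ℂ, ‖t.eval z‖ = ‖t.leadingCoeff‖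
      * (t.roots.map (fun u => ‖z - u‖)).prod := by
    intro z
    conv_lhs => rw [← htf]
    rw [eval_mul, eval_C, norm_mul, eval_multiset_prod, Multiset.map_map, norm_mprod,
      Multiset.map_map]
    refine congrArg (fun x => ‖t.leadingCoeff‖ * x) (congrArg Multiset.prod (Multiset.map_congr rfl ?_))
    intro u _
    simp
  have hseval : ∀ z : ℂ, ‖s.eval z‖ = (S.map (fun a => ‖z - a‖)).prod := by
    intro z
    rw [hsdef, eval_multiset_prod, Multiset.map_map, norm_mprod, Multiset.map_map]
    refine congrArg Multiset.prod (Multiset.map_congr rfl ?_)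
    intro u _
    simp
  -- comparison of |t| at two points of the ε/2 ball
  have htcomp : ∀ w : ℂ, ‖w - ζ‖ ≤ ε/2 → ‖t.eval w0‖ ≤ 3^n * ‖t.eval w‖ := by
    intro w hw
    have hkey : (t.roots.map (fun u => ‖w0 - u‖)).prod
        ≤ (t.roots.map (fun u => 3 * ‖w - u‖)).prod := by
      apply mprod_mono
      · intro u _; exact norm_nonneg _
      · intro u hu
        have h1 : ε/2 ≤ ‖w - u‖ := by
          have := htfar u hu
          have h2 : ‖u - ζ‖ ≤ ‖u - w‖ + ‖w - ζ‖ := by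
            calc ‖u - ζ‖ = ‖(u - w) + (w - ζ)‖ := by ring_nf
              _ ≤ ‖u - w‖ + ‖w - ζ‖ := norm_add_le _ _
          rw [norm_sub_rev u w] at h2
          linarith
        have h2 : ‖w0 - w‖ ≤ ε := by
          calc ‖w0 - w‖ = ‖(w0 - ζ) + (ζ - w)‖ := by congr 1; ring
            _ ≤ ‖w0 - ζ‖ + ‖ζ - w‖ := norm_add_le _ _
            _ ≤ ε/2 + ε/2 := by rw [norm_sub_rev ζ w]; exact add_le_add hw0d hw
            _ = ε := by ring
        calc ‖w0 - u‖ = ‖(w0 - w) + (w - u)‖ := by congr 1; ring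
          _ ≤ ‖w0 - w‖ + ‖w - u‖ := norm_add_le _ _
          _ ≤ ε + ‖w - u‖ := by linarith
          _ ≤ 3 * ‖w - u‖ := by linarith
    have hprod3 : (t.roots.map (fun u => 3 * ‖w - u‖)).prod
        = 3 ^ (Multiset.card t.roots) * (t.roots.map (fun u => ‖w - u‖)).prod := by
      rw [← mprod_const t.roots 3, ← Multiset.prod_map_mul]
    have hprodnn : (0:ℝ) ≤ (t.roots.map (fun u => ‖w - u‖)).prod := by
      apply Multiset.prod_nonneg
      intro x hx
      obtain ⟨u, _, rfl⟩ := Multiset.mem_map.mp hx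
      exact norm_nonneg _
    have h3 : (3:ℝ) ^ (Multiset.card t.roots) ≤ 3 ^ n :=
      pow_le_pow_right₀ (by norm_num) htcard
    rw [hteval, hteval]
    calc ‖t.leadingCoeff‖ * (t.roots.map (fun u => ‖w0 - u‖)).prod
        ≤ ‖t.leadingCoeff‖ * (3 ^ (Multiset.card t.roots)
            * (t.roots.map (fun u => ‖w - u‖)).prod) := by
          refine mul_le_mul le_rfl ?_ ?_ (norm_nonneg _)
          · rw [← hprod3]; exact hkey
          · apply Multiset.prod_nonneg
            intro x hx
            obtain ⟨u, _, rfl⟩ := Multiset.mem_map.mp hx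
            exact norm_nonneg _
      _ ≤ ‖t.leadingCoeff‖ * (3 ^ n * (t.roots.map (fun u => ‖w - u‖)).prod) := by
          exact mul_le_mul le_rfl (mul_le_mul h3 le_rfl hprodnn (by positivity))
            (by positivity) (norm_nonneg _)
      _ = 3^n * (‖t.leadingCoeff‖ * (t.roots.map (fun u => ‖w - u‖)).prod) := by ring
  -- test points
  set w : ℕ → ℂ := fun i => ζ + ((((i:ℝ)+1)*r : ℝ) : ℂ) with hwdef
  have hwd : ∀ i : ℕ, ‖w i - ζ‖ = ((i:ℝ)+1)*r := by
    intro i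
    rw [hwdef]
    simp only [add_sub_cancel_left]
    rw [Complex.norm_real, Real.norm_eq_abs, abs_of_nonneg (by positivity)]
  -- pigeonhole: some test point is r/2-far from all elements of S
  obtain ⟨i, him, hifar⟩ : ∃ i, i < m ∧ ∀ a ∈ S, r/2 ≤ ‖w i - a‖ := by
    by_contra hcon
    push_neg at hcon
    have hcon' : ∀ i : ℕ, ∃ a, i < m → (a ∈ S.toFinset ∧ ‖w i - a‖ < r/2) := by
      intro i
      by_cases h : i < m
      · obtain ⟨a, ha, hd⟩ := hcon i h
        exact ⟨a, fun _ => ⟨Multiset.mem_toFinset.mpr ha, hd⟩⟩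
      · exact ⟨0, fun h' => absurd h' h⟩
    choose f hf using hcon'
    have hmap : ∀ i ∈ Finset.range m, f i ∈ S.toFinset := by
      intro i hi
      exact (hf i (Finset.mem_range.mp hi)).1
    have hinj : Set.InjOn f (Finset.range m) := by
      intro i hi j hj hij
      by_contra hne
      have hi' := Finset.mem_range.mp hi
      have hj' := Finset.mem_range.mp hj
      have h1 : ‖w i - f i‖ < r/2 := (hf i hi').2
      have h2 : ‖w j - f j‖ < r/2 := (hf j hj').2
      have h3 : ‖w i - w j‖ < r := by
        calc ‖w i - w j‖ = ‖(w i - f i) + (f j - w j)‖ := by rw [hij]; congr 1; ring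
          _ ≤ ‖w i - f i‖ + ‖f j - w j‖ := norm_add_le _ _
          _ < r/2 + r/2 := by rw [norm_sub_rev (f j)]; exact add_lt_add h1 h2
          _ = r := by ring
      have h4 : w i - w j = ((((i:ℝ) - j) * r : ℝ) : ℂ) := by
        rw [hwdef]
        push_cast
        ring
      have h5 : ‖w i - w j‖ = |(i:ℝ) - j| * r := by
        rw [h4, Complex.norm_real, Real.norm_eq_abs, abs_mul, abs_of_nonneg hr0.le]
      have h6 : (1:ℝ) ≤ |(i:ℝ) - j| := by
        rcases (by omega : i + 1 ≤ j ∨ j + 1 ≤ i) with h | h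
        · refine le_abs.mpr (Or.inr ?_)
          have : (i:ℝ) + 1 ≤ j := by exact_mod_cast h
          linarith
        · refine le_abs.mpr (Or.inl ?_)
          have : (j:ℝ) + 1 ≤ i := by exact_mod_cast h
          linarith
      nlinarith
    have : m ≤ S.toFinset.card := by
      calc m = (Finset.range m).card := (Finset.card_range m).symm
        _ ≤ S.toFinset.card := Finset.card_le_card_of_injOn f hmap hinj
    have h2 : S.toFinset.card ≤ Multiset.card S := Multiset.toFinset_card_le S
    omega
  -- distance of the test point
  have hwiζ : ‖w i - ζ‖ ≤ ε/2 := by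
    rw [hwd]
    calc ((i:ℝ)+1)*r ≤ (m:ℝ) * r := by
          have : (i:ℝ) + 1 ≤ m := by exact_mod_cast him
          exact mul_le_mul this le_rfl hr0.le (by positivity)
      _ ≤ ε/2 := hrε
  -- lower bound of |s| at the test point
  have hswi : (r/2)^(m-1) ≤ ‖s.eval (w i)‖ := by
    rw [hseval]
    have h1 : ((r/2:ℝ)) ^ (Multiset.card S) ≤ (S.map (fun a => ‖w i - a‖)).prod := by
      rw [← mprod_const S (r/2)]
      apply mprod_mono
      · intro u _; positivity
      · intro u hu; exact hifar u hu
    have h2 : ((r/2:ℝ))^(m-1) ≤ (r/2)^(Multiset.card S) := by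
      apply pow_le_pow_of_le_one (by positivity) (by linarith) (by omega)
    linarith
  -- upper bound of |s| at w0
  have hsw0 : ‖s.eval w0‖ ≤ M := by
    rw [hseval]
    have h1 : (S.map (fun a => ‖w0 - a‖)).prod ≤ (S.map (fun _ => (1+2*ε:ℝ))).prod := by
      apply mprod_mono
      · intro u _; exact norm_nonneg _
      · intro u hu
        have h2 : ‖u - ζ‖ < ε := hSmem u hu
        calc ‖w0 - u‖ = ‖(w0 - ζ) + (ζ - u)‖ := by congr 1; ring
          _ ≤ ‖w0 - ζ‖ + ‖ζ - u‖ := norm_add_le _ _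
          _ ≤ ε/2 + ε := by rw [norm_sub_rev ζ u]; exact add_le_add hw0d h2.le
          _ ≤ 1 + 2*ε := by linarith
    rw [mprod_const] at h1
    have h3 : ((1+2*ε:ℝ)) ^ (Multiset.card S) ≤ (1+2*ε) ^ m :=
      pow_le_pow_right₀ (by linarith) (by omega)
    rw [hMdef]
    linarith
  -- lower bound on |p(w0)|
  have hpw0 : c0/2 ≤ ‖p.eval w0‖ := by
    have h1 : ‖p.eval w0 - q.eval w0‖ ≤ δ * A := hdiff w0 (by linarith)
    have h2 : ‖q.eval w0‖ - ‖p.eval w0 - q.eval w0‖ ≤ ‖p.eval w0‖ := by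
      have h3 : ‖q.eval w0‖ - ‖p.eval w0‖ ≤ ‖q.eval w0 - p.eval w0‖ := norm_sub_norm_le _ _
      have h4 : ‖q.eval w0 - p.eval w0‖ = ‖p.eval w0 - q.eval w0‖ := norm_sub_rev _ _
      linarith
    rw [← hc0def] at h2
    linarith [hδc0]
  -- lower bound on |t(w i)|
  have hpsplit : ∀ z : ℂ, ‖p.eval z‖ = ‖s.eval z‖ * ‖t.eval z‖ := by
    intro z; rw [hpt, eval_mul, norm_mul]
  have htwi : c0 / (2 * (M * 3^n)) ≤ ‖t.eval (w i)‖ := by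
    have h1 : ‖p.eval w0‖ ≤ M * (3^n * ‖t.eval (w i)‖) := by
      rw [hpsplit]
      calc ‖s.eval w0‖ * ‖t.eval w0‖ ≤ M * ‖t.eval w0‖ :=
            mul_le_mul hsw0 le_rfl (norm_nonneg _) hM.le
        _ ≤ M * (3^n * ‖t.eval (w i)‖) :=
            mul_le_mul le_rfl (htcomp (w i) hwiζ) (norm_nonneg _) hM.le
    have h2 : c0/2 ≤ M * 3^n * ‖t.eval (w i)‖ := by
      calc c0/2 ≤ ‖p.eval w0‖ := hpw0
        _ ≤ M * (3^n * ‖t.eval (w i)‖) := h1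
        _ = M * 3^n * ‖t.eval (w i)‖ := by ring
    rw [div_le_iff₀ (by positivity)]
    calc c0 = 2 * (c0/2) := by ring
      _ ≤ 2 * (M * 3^n * ‖t.eval (w i)‖) := by linarith
      _ = ‖t.eval (w i)‖ * (2 * (M * 3^n)) := by ring
  -- lower bound on |p(w i)|
  have hpwi : κ ≤ ‖p.eval (w i)‖ := by
    rw [hpsplit]
    have h1 : (r/2)^(m-1) * (c0 / (2 * (M * 3^n))) ≤ ‖s.eval (w i)‖ * ‖t.eval (w i)‖ := by
      apply mul_le_mul hswi htwi (by positivity) (norm_nonneg _)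
    have h2 : (r/2:ℝ)^(m-1) * (c0 / (2 * (M * 3^n))) = κ := by
      rw [hκdef, hc1def, div_pow]
      field_simp
      ring
      rw [← mul_pow]; norm_num
    linarith
  -- upper bound on |p(w i)|
  have hqwi : ‖q.eval (w i)‖ ≤ κ/2 := by
    rw [hqeval, norm_mul, norm_pow]
    have h1 : ‖w i - ζ‖ ≤ (m:ℝ) * r := by
      rw [hwd]
      have : (i:ℝ) + 1 ≤ m := by exact_mod_cast him
      exact mul_le_mul this le_rfl hr0.le (by positivity)
    have h2 : ‖g.eval (w i)‖ ≤ G' := by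
      refine le_trans (hGb (w i) ?_) (le_max_left G 1)
      rw [mem_closedBall, dist_eq_norm]
      linarith [hwiζ]
    have h3 : ‖w i - ζ‖ ^ m * ‖g.eval (w i)‖ ≤ ((m:ℝ)*r)^m * G' := by
      apply mul_le_mul _ h2 (norm_nonneg _) (by positivity)
      exact pow_le_pow_left₀ (norm_nonneg _) h1 m
    have h4 : ((m:ℝ)*r)^m * G' ≤ κ/2 := by
      have h5 : ((m:ℝ)*r)^m * G' = r^(m-1) * (r * ((m:ℝ)^m * G')) := by
        rw [mul_pow]
        have : r^m = r^(m-1) * r := by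
          conv_lhs => rw [show m = (m-1)+1 by omega]
          rw [pow_succ]
        rw [this]; ring
      rw [h5, hκdef]
      calc r^(m-1) * (r * ((m:ℝ)^m * G')) ≤ r^(m-1) * (c1/2) :=
            mul_le_mul le_rfl hrc1 (by positivity) (by positivity)
        _ = r^(m-1) * c1 / 2 := by ring
    linarith
  have hfinal : ‖p.eval (w i)‖ ≤ κ/2 + κ/4 := by
    have h1 : ‖p.eval (w i) - q.eval (w i)‖ ≤ δ * A := hdiff (w i) (by linarith [hwiζ])
    calc ‖p.eval (w i)‖ = ‖q.eval (w i) + (p.eval (w i) - q.eval (w i))‖ := by congr 1; ring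
      _ ≤ ‖q.eval (w i)‖ + ‖p.eval (w i) - q.eval (w i)‖ := norm_add_le _ _
      _ ≤ κ/2 + δ * A := add_le_add hqwi h1
      _ ≤ κ/2 + κ/4 := by linarith [hδκ]
  linarith
end

section
/- Let q be a nonzero polynomial of degree at most n with distinct roots ζ_1,…,ζ_d, and let ζ = ζ_ℓ be a root of multiplicity m. Suppose ε > 0 and, in case m ≠ deg q, additionally ε < min_{j≠ℓ} |ζ_j − ζ|. Then there exists δ > 0 such that every polynomial p of degree at most n whose coefficients are each within δ of the corresponding coefficients of q has exactly m roots (counted with multiplicity) in the open disc B(ζ, ε). -/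
open Polynomial Filter Topology

private lemma tendstoCoeff_mul {ι : Type*} {l : Filter ι} {F G : ι → ℂ[X]} {f g : ℂ[X]}
    (hF : ∀ i, Tendsto (fun k => (F k).coeff i) l (nhds (f.coeff i)))
    (hG : ∀ i, Tendsto (fun k => (G k).coeff i) l (nhds (g.coeff i))) :
    ∀ i, Tendsto (fun k => (F k * G k).coeff i) l (nhds ((f * g).coeff i)) := by
  intro i
  simp only [coeff_mul]
  exact tendsto_finset_sum _ fun x _ => (hF x.1).mul (hG x.2)

private lemma tendstoCoeff_prod {ι κ : Type*} {l : Filter ι} (t : Finset κ)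
    (F : κ → ι → ℂ[X]) (G : κ → ℂ[X])
    (h : ∀ j ∈ t, ∀ i, Tendsto (fun k => (F j k).coeff i) l (nhds ((G j).coeff i))) :
    ∀ i, Tendsto (fun k => (∏ j ∈ t, F j k).coeff i) l (nhds ((∏ j ∈ t, G j).coeff i)) := by
  classical
  induction t using Finset.induction with
  | empty => intro i; simpa using tendsto_const_nhds
  | @insert a u ha ih =>
    intro i
    simp only [Finset.prod_insert ha]
    exact tendstoCoeff_mul (h a (Finset.mem_insert_self a u))
      (ih (fun j hj => h j (Finset.mem_insert_of_mem hj))) i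

private lemma lin_factor (a : ℂ) (ha : a ≠ 0) :
    (X : ℂ[X]) - C a = C (-a) * (1 - C a⁻¹ * X) := by
  have h : (-a) * a⁻¹ = -1 := by field_simp
  rw [mul_sub, mul_one, ← mul_assoc, ← C_mul, h]
  simp only [map_neg, map_one, neg_mul, one_mul, sub_neg_eq_add]
  ring

/-- Exactly m roots of a nearby polynomial lie in B(ζ, ε) where ζ is a root of q of
multiplicity m, provided (when m ≠ deg q) that ε is smaller than the distance from ζ to
any other root of q. -/
theorem roots_continuity_exact (n : ℕ) (q : Polynomial ℂ) (hq : q ≠ 0) (hqn : q.natDegree ≤ n)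
    (ζ : ℂ) (hζ : q.IsRoot ζ) (m : ℕ) (hmult : q.rootMultiplicity ζ = m)
    (ε : ℝ) (hε : 0 < ε)
    (hsep : m ≠ q.natDegree → ∀ z : ℂ, q.IsRoot z → z ≠ ζ → ε < ‖z - ζ‖) :
    ∃ δ > 0, ∀ p : Polynomial ℂ, p.natDegree ≤ n →
      (∀ i ≤ n, ‖p.coeff i - q.coeff i‖ < δ) →
      (p.roots.filter (fun z => ‖z - ζ‖ < ε)).card = m := by
  classical
  -- every root of q other than ζ is at distance > ε
  have hsep' : ∀ z : ℂ, q.IsRoot z → z ≠ ζ → ε < ‖z - ζ‖ := by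
    intro z hz hne
    by_cases hm : m = q.natDegree
    · exfalso
      have hcard : q.roots.card = q.natDegree :=
        splits_iff_card_roots.mp (IsAlgClosed.splits q)
      have hcount : q.roots.count ζ = Multiset.card q.roots := by
        rw [count_roots, hmult, hm, hcard]
      exact hne (Multiset.count_eq_card.mp hcount z ((mem_roots hq).mpr hz)).symm
    · exact hsep hm z hz hne
  by_contra hcon
  push_neg at hcon
  choose P hP1 hP2 hP3 using fun k : ℕ => hcon (1/((k : ℝ)+1)) (by positivity)
  -- coefficientwise convergence
  have hcoeff : ∀ i, Tendsto (fun k => (P k).coeff i) atTop (nhds (q.coeff i)) := by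
    intro i
    by_cases hi : i ≤ n
    · rw [tendsto_iff_norm_sub_tendsto_zero]
      refine squeeze_zero (fun k => norm_nonneg _) (fun k => (hP2 k i hi).le) ?_
      exact tendsto_one_div_add_atTop_nhds_zero_nat
    · have hni : n < i := lt_of_not_ge hi
      have h0 : ∀ k, (P k).coeff i = 0 := fun k =>
        coeff_eq_zero_of_natDegree_lt (lt_of_le_of_lt (hP1 k) hni)
      have hq0 : q.coeff i = 0 := coeff_eq_zero_of_natDegree_lt (lt_of_le_of_lt hqn hni)
      simp only [h0, hq0]
      exact tendsto_const_nhds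
  set U : Ultrafilter ℕ := Ultrafilter.of atTop with hUdef
  have hUle : (U : Filter ℕ) ≤ atTop := Ultrafilter.of_le atTop
  have hcoeffU : ∀ i, Tendsto (fun k => (P k).coeff i) (U : Filter ℕ) (nhds (q.coeff i)) :=
    fun i => (hcoeff i).mono_left hUle
  -- fix the degree along U
  obtain ⟨d, hdU⟩ : ∃ d : ℕ, {k | (P k).natDegree = d} ∈ U := by
    by_contra hno
    push_neg at hno
    have hall : (⋂ e ∈ Finset.range (n+1), {k | (P k).natDegree = e}ᶜ) ∈ U :=
      (Filter.biInter_finset_mem _).mpr fun e _ =>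
        Ultrafilter.compl_mem_iff_notMem.mpr (hno e)
    obtain ⟨k, hk⟩ := Ultrafilter.nonempty_of_mem hall
    simp only [Set.mem_iInter, Set.mem_compl_iff, Set.mem_setOf_eq] at hk
    exact hk ((P k).natDegree) (Finset.mem_range.mpr (Nat.lt_succ_of_le (hP1 k)))
      rfl
  -- the roots as a function Fin d → ℂ
  set v : ℕ → Fin d → ℂ := fun k j => ((P k).roots.toList).getD j 0 with hv
  have hroots : ∀ k, (P k).natDegree = d →
      (P k).roots = Finset.univ.val.map (v k) := by
    intro k hk
    have hcard : Multiset.card (P k).roots = d := by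
      rw [← hk]; exact splits_iff_card_roots.mp (IsAlgClosed.splits (P k))
    have hlen : ((P k).roots.toList).length = d := by
      rw [Multiset.length_toList, hcard]
    have hofn : (P k).roots.toList = List.ofFn (v k) := by
      refine List.ext_getElem (by simp [hlen]) ?_
      intro i h1 h2
      simp only [List.getElem_ofFn, hv]
      simp only [List.getD_eq_getElem?_getD]
      rw [List.getElem?_eq_getElem h1]
      simp
    calc (P k).roots = ↑((P k).roots.toList) := ((P k).roots.coe_toList).symm
      _ = ↑(List.ofFn (v k)) := by rw [hofn]
      _ = Finset.univ.val.map (v k) := by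
          rw [List.ofFn_eq_map]
          rfl
  -- limits of the roots along U : either convergent or norm to infinity
  have hlim : ∀ j : Fin d, ∃ w : ℂ,
      Tendsto (fun k => v k j) (U : Filter ℕ) (nhds w) ∨
      Tendsto (fun k => ‖v k j‖) (U : Filter ℕ) atTop := by
    intro j
    by_cases hb : ∃ M : ℝ, {k | ‖v k j‖ ≤ M} ∈ U
    · obtain ⟨M, hM⟩ := hb
      have hle : (U.map (fun k => v k j) : Filter ℂ) ≤ Filter.principal (Metric.closedBall 0 M) := by
        rw [le_principal_iff]
        refine mem_map.mpr ?_
        filter_upwards [hM] with k hk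
        simpa [Metric.mem_closedBall, dist_zero_right] using hk
      obtain ⟨a, _, ha⟩ := (isCompact_closedBall (0:ℂ) M).ultrafilter_le_nhds _ hle
      exact ⟨a, Or.inl ha⟩
    · push_neg at hb
      refine ⟨0, Or.inr ?_⟩
      rw [tendsto_atTop]
      intro M
      have hc := Ultrafilter.compl_mem_iff_notMem.mpr (hb M)
      filter_upwards [hc] with k hk
      simp only [Set.mem_compl_iff, Set.mem_setOf_eq] at hk
      exact (lt_of_not_ge hk).le
  choose w hw using hlim
  set T : Finset (Fin d) :=
    Finset.univ.filter (fun j => Tendsto (fun k => v k j) (U : Filter ℕ) (nhds (w j))) with hT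
  have hwT : ∀ j ∈ T, Tendsto (fun k => v k j) (U : Filter ℕ) (nhds (w j)) := by
    intro j hj; exact (Finset.mem_filter.mp hj).2
  have hwTc : ∀ j ∉ T, Tendsto (fun k => ‖v k j‖) (U : Filter ℕ) atTop := by
    intro j hj
    rcases hw j with h | h
    · exact absurd (Finset.mem_filter.mpr ⟨Finset.mem_univ j, h⟩) hj
    · exact h
  set s : ℂ[X] := ∏ j ∈ T, (X - C (w j)) with hs
  set g : ℕ → ℂ[X] :=
    fun k => (∏ j ∈ T, (X - C (v k j))) * (∏ j ∈ Tᶜ, (1 - C (v k j)⁻¹ * X)) with hg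
  set D : ℕ → ℂ := fun k => (P k).leadingCoeff * ∏ j ∈ Tᶜ, (-(v k j)) with hDdef
  -- eventual factorization P k = C (D k) * g k
  have hdU' : ∀ᶠ k in (U : Filter ℕ), (P k).natDegree = d := hdU
  have hne0 : ∀ᶠ k in (U : Filter ℕ), ∀ j ∈ Tᶜ, v k j ≠ 0 := by
    rw [Filter.eventually_all_finset]
    intro j hj
    have h := hwTc j (Finset.mem_compl.mp hj)
    filter_upwards [h.eventually_gt_atTop 0] with k hk
    exact norm_pos_iff.mp hk
  have hfac : ∀ᶠ k in (U : Filter ℕ), P k = C (D k) * g k := by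
    filter_upwards [hne0, hdU'] with k hk1 hk2
    have hcard : Multiset.card (P k).roots = (P k).natDegree := by
      exact splits_iff_card_roots.mp (IsAlgClosed.splits (P k))
    have hF := C_leadingCoeff_mul_prod_multiset_X_sub_C hcard
    rw [hroots k hk2, Multiset.map_map] at hF
    have hprod : (Finset.univ.val.map (fun j => X - C (v k j))).prod
        = ∏ j : Fin d, (X - C (v k j)) := rfl
    rw [Function.comp_def, hprod] at hF
    have hsplit : (∏ j : Fin d, (X - C (v k j)))
        = (∏ j ∈ T, (X - C (v k j))) * (∏ j ∈ Tᶜ, (X - C (v k j))) :=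
      (Finset.prod_mul_prod_compl T _).symm
    have hTc : (∏ j ∈ Tᶜ, (X - C (v k j)))
        = C (∏ j ∈ Tᶜ, (-(v k j))) * (∏ j ∈ Tᶜ, (1 - C (v k j)⁻¹ * X)) := by
      rw [map_prod, ← Finset.prod_mul_distrib]
      exact Finset.prod_congr rfl fun j hj => lin_factor _ (hk1 j hj)
    rw [← hF, hsplit, hTc, hDdef, hg, map_mul]
    ring
  -- coefficientwise convergence of g to s
  have hgs : ∀ i, Tendsto (fun k => (g k).coeff i) (U : Filter ℕ) (nhds (s.coeff i)) := by
    have h1 : ∀ i, Tendsto (fun k => (∏ j ∈ T, (X - C (v k j))).coeff i)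
        (U : Filter ℕ) (nhds (s.coeff i)) := by
      refine tendstoCoeff_prod T _ _ ?_
      intro j hj i
      have hv' := hwT j hj
      simp only [coeff_sub, coeff_C]
      split_ifs with h0
      · exact tendsto_const_nhds.sub hv'
      · exact tendsto_const_nhds
    have h2 : ∀ i, Tendsto (fun k => (∏ j ∈ Tᶜ, (1 - C (v k j)⁻¹ * X)).coeff i)
        (U : Filter ℕ) (nhds ((1 : ℂ[X]).coeff i)) := by
      have h2' : ∀ i, Tendsto (fun k => (∏ j ∈ Tᶜ, (1 - C (v k j)⁻¹ * X)).coeff i)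
          (U : Filter ℕ) (nhds ((∏ _j ∈ Tᶜ, (1 : ℂ[X])).coeff i)) := by
        refine tendstoCoeff_prod Tᶜ _ _ ?_
        intro j hj i
        have hinv : Tendsto (fun k => (v k j)⁻¹) (U : Filter ℕ) (nhds 0) := by
          rw [tendsto_zero_iff_norm_tendsto_zero]
          simp only [norm_inv]
          exact (hwTc j (Finset.mem_compl.mp hj)).inv_tendsto_atTop
        simp only [coeff_sub, coeff_C_mul]
        have ht : Tendsto (fun k => (1 : ℂ[X]).coeff i - (v k j)⁻¹ * (X : ℂ[X]).coeff i)
            (U : Filter ℕ) (nhds ((1 : ℂ[X]).coeff i - 0 * (X : ℂ[X]).coeff i)) :=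
          tendsto_const_nhds.sub (hinv.mul tendsto_const_nhds)
        simpa using ht
      simpa using h2'
    intro i
    have := tendstoCoeff_mul h1 h2 i
    simpa using this
  -- s is monic of degree T.card
  have hsmonic : s.Monic := monic_prod_of_monic _ _ fun j _ => monic_X_sub_C (w j)
  have hsdeg : s.natDegree = T.card := by
    rw [hs, natDegree_prod _ _ fun j _ => X_sub_C_ne_zero (w j)]
    simp [natDegree_X_sub_C]
  have hst : s.coeff T.card = 1 := by
    rw [← hsdeg]; exact hsmonic.coeff_natDegree
  -- D converges to q.coeff T.card
  have hgt : Tendsto (fun k => (g k).coeff T.card) (U : Filter ℕ) (nhds 1) := by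
    simpa [hst] using hgs T.card
  have hDt : Tendsto D (U : Filter ℕ) (nhds (q.coeff T.card)) := by
    have hDeq : ∀ᶠ k in (U : Filter ℕ), (P k).coeff T.card / (g k).coeff T.card = D k := by
      filter_upwards [hfac, hgt.eventually_ne one_ne_zero] with k hk hk2
      rw [hk, coeff_C_mul]
      field_simp
    have hdiv : Tendsto (fun k => (P k).coeff T.card / (g k).coeff T.card)
        (U : Filter ℕ) (nhds (q.coeff T.card / 1)) :=
      (hcoeffU T.card).div hgt one_ne_zero
    rw [div_one] at hdiv
    exact hdiv.congr' hDeq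
  -- q = C (q.coeff T.card) * s
  have hqs : q = C (q.coeff T.card) * s := by
    ext i
    have h1 : Tendsto (fun k => (P k).coeff i) (U : Filter ℕ) (nhds (q.coeff i)) := hcoeffU i
    have h2 : Tendsto (fun k => (P k).coeff i) (U : Filter ℕ)
        (nhds (q.coeff T.card * s.coeff i)) := by
      refine Tendsto.congr' ?_ (hDt.mul (hgs i))
      filter_upwards [hfac] with k hk
      rw [hk, coeff_C_mul]
    rw [coeff_C_mul, tendsto_nhds_unique h1 h2]
  have hD0 : q.coeff T.card ≠ 0 := by
    intro h0
    exact hq (by rw [hqs, h0, map_zero, zero_mul])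
  -- the roots of q are the w j for j ∈ T
  have hqroots : q.roots = T.val.map w := by
    rw [hqs, roots_C_mul _ hD0, hs, Finset.prod_eq_multiset_prod]
    rw [show T.val.map (fun j => X - C (w j)) = (T.val.map w).map (fun a => X - C a) by
      rw [Multiset.map_map]; rfl]
    exact roots_multiset_prod_X_sub_C _
  -- m is the number of j ∈ T with w j = ζ
  have hmT : (T.filter (fun j => w j = ζ)).card = m := by
    rw [← hmult, ← count_roots, hqroots, Multiset.count_map]
    rw [show (Multiset.filter (fun a => ζ = w a) T.val)
        = (Multiset.filter (fun a => w a = ζ) T.val) from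
      Multiset.filter_congr fun a _ => eq_comm]
    rfl
  -- eventually the count of roots in the ball is exactly m
  have hjball : ∀ j : Fin d, ∀ᶠ k in (U : Filter ℕ),
      (‖v k j - ζ‖ < ε ↔ (j ∈ T ∧ w j = ζ)) := by
    intro j
    by_cases hjT : j ∈ T
    · by_cases hwj : w j = ζ
      · have htz : Tendsto (fun k => ‖v k j - ζ‖) (U : Filter ℕ) (nhds 0) := by
          have := ((hwT j hjT).sub_const ζ).norm
          rwa [hwj, sub_self, norm_zero] at this
        filter_upwards [htz.eventually (gt_mem_nhds hε)] with k hk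
        simp only [hjT, hwj, and_self, iff_true]
        exact hk
      · have hroot : q.IsRoot (w j) := by
          rw [← mem_roots hq, hqroots]
          exact Multiset.mem_map_of_mem _ hjT
        have hgtε := hsep' (w j) hroot hwj
        have htz : Tendsto (fun k => ‖v k j - ζ‖) (U : Filter ℕ) (nhds ‖w j - ζ‖) :=
          ((hwT j hjT).sub_const ζ).norm
        filter_upwards [htz.eventually (lt_mem_nhds hgtε)] with k hk
        simp only [hwj, and_false, iff_false, not_lt]
        exact hk.le
    · have hev : ∀ᶠ k in (U : Filter ℕ), ‖ζ‖ + ε < ‖v k j‖ :=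
        (hwTc j hjT).eventually_gt_atTop _
      filter_upwards [hev] with k hk
      have hlow : ε < ‖v k j - ζ‖ := by
        have h1 : ‖v k j‖ - ‖ζ‖ ≤ ‖v k j - ζ‖ := norm_sub_norm_le _ _
        linarith
      simp only [hjT, false_and, iff_false, not_lt]
      exact hlow.le
  have hfinal : ∀ᶠ k in (U : Filter ℕ),
      Multiset.card (Multiset.filter (fun z => ‖z - ζ‖ < ε) (P k).roots) = m := by
    have hallj : ∀ᶠ k in (U : Filter ℕ), ∀ j : Fin d,
        (‖v k j - ζ‖ < ε ↔ (j ∈ T ∧ w j = ζ)) := eventually_all.mpr hjball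
    filter_upwards [hallj, hdU'] with k hk1 hk2
    rw [hroots k hk2]
    rw [← Multiset.countP_eq_card_filter, Multiset.countP_map,
      ← Multiset.countP_eq_card_filter]
    have heq : Multiset.countP (fun a => ‖v k a - ζ‖ < ε) Finset.univ.val
        = Multiset.countP (fun j => j ∈ T ∧ w j = ζ) Finset.univ.val :=
      Multiset.countP_congr rfl fun j _ => propext (hk1 j)
    rw [heq]
    have hcards : Multiset.countP (fun j => j ∈ T ∧ w j = ζ) Finset.univ.val
        = (Finset.univ.filter (fun j : Fin d => j ∈ T ∧ w j = ζ)).card := by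
      rw [Multiset.countP_eq_card_filter]; rfl
    rw [hcards, show (Finset.univ.filter (fun j : Fin d => j ∈ T ∧ w j = ζ))
        = T.filter (fun j => w j = ζ) by ext j; simp [Finset.mem_filter]]
    exact hmT
  obtain ⟨k, hk⟩ := Ultrafilter.nonempty_of_mem hfinal
  exact hP3 k hk
end

section
/- Let q be a nonzero polynomial of degree at most n with distinct roots ζ_1,…,ζ_d, where ζ_j has multiplicity m_j. Suppose ε > 0 and, when d > 1, additionally ε < min_{i≠j} |ζ_i − ζ_j|. Then there exists δ > 0 such that every polynomial p of degree at most n whose coefficients are each within δ of those of q has exactly m_j roots (with multiplicity) in the open disc B(ζ_j, ε), simultaneously for every j = 1,…,d. -/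
open Polynomial Finset Metric

lemma evalBound (f : Polynomial ℂ) (N : ℕ) (hf : f.natDegree ≤ N) (c M : ℝ)
    (hc : 0 ≤ c) (hM : 1 ≤ M) (hcoeff : ∀ i ≤ N, ‖f.coeff i‖ ≤ c)
    (z : ℂ) (hz : ‖z‖ ≤ M) : ‖f.eval z‖ ≤ (N + 1) * c * M ^ N := by
  rw [Polynomial.eval_eq_sum_range' (Nat.lt_succ_of_le hf)]
  calc ‖∑ i ∈ range (N + 1), f.coeff i * z ^ i‖
      ≤ ∑ i ∈ range (N + 1), ‖f.coeff i * z ^ i‖ := norm_sum_le _ _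
    _ ≤ ∑ i ∈ range (N + 1), c * M ^ N := by
        refine Finset.sum_le_sum fun i hi => ?_
        rw [norm_mul, norm_pow]
        have h1 : ‖z‖ ^ i ≤ M ^ i := pow_le_pow_left₀ (norm_nonneg z) hz i
        have h2 : M ^ i ≤ M ^ N := pow_le_pow_right₀ hM (by simp at hi; omega)
        have := hcoeff i (by simp at hi; omega)
        nlinarith [pow_nonneg (norm_nonneg z) i, pow_nonneg (le_trans zero_le_one hM) N]
    _ = (N + 1) * c * M ^ N := by
        rw [Finset.sum_const, Finset.card_range]; push_cast; ring

lemma coeffDiv (f : Polynomial ℂ) (N : ℕ) (hf : f.natDegree ≤ N) (w : ℂ) (k : ℕ) :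
    (f /ₘ (X - C w)).coeff k = ∑ i ∈ Icc (k + 1) N, w ^ (i - (k + 1)) * f.coeff i := by
  rw [Polynomial.coeff_divByMonic_X_sub_C]
  refine Finset.sum_subset (Finset.Icc_subset_Icc_right hf) fun i hi hni => ?_
  rw [Polynomial.coeff_eq_zero_of_natDegree_lt, mul_zero]
  simp only [Finset.mem_Icc] at hi hni
  omega

lemma lemC (n : ℕ) (q : Polynomial ℂ) (hqn : q.natDegree ≤ n + 1) (ζ : ℂ)
    (δ₁ : ℝ) (hδ₁ : 0 < δ₁) :
    ∃ δ > 0, ∀ p : Polynomial ℂ, p.natDegree ≤ n + 1 →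
      (∀ i ≤ n + 1, ‖p.coeff i - q.coeff i‖ < δ) →
      ∀ z : ℂ, ‖z - ζ‖ < δ → ∀ k ≤ n,
        ‖(p /ₘ (X - C z)).coeff k - (q /ₘ (X - C ζ)).coeff k‖ < δ₁ := by
  classical
  set g : (Fin (n + 2) → ℂ) × ℂ → (Fin (n + 1) → ℂ) := fun x k =>
    ∑ i ∈ (Finset.Icc (k.1 + 1) (n + 1)).attach,
      x.2 ^ (i.1 - (k.1 + 1)) * x.1 ⟨i.1, by
        have := (Finset.mem_Icc.mp i.2).2; omega⟩ with hg
  have hgcont : Continuous g := by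
    refine continuous_pi fun k => continuous_finset_sum _ fun i _ => ?_
    exact (continuous_snd.pow _).mul ((continuous_apply _).comp continuous_fst)
  have hform : ∀ f : Polynomial ℂ, f.natDegree ≤ n + 1 → ∀ w : ℂ, ∀ k : Fin (n + 1),
      g (fun i => f.coeff i, w) k = (f /ₘ (X - C w)).coeff k := by
    intro f hf w k
    rw [coeffDiv f (n + 1) hf w k, hg]
    exact Finset.sum_attach (Finset.Icc (k.1 + 1) (n + 1)) (fun j => w ^ (j - (k.1 + 1)) * f.coeff j)
  have hca : ContinuousAt g ((fun i => q.coeff i, ζ)) := hgcont.continuousAt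
  rw [Metric.continuousAt_iff] at hca
  obtain ⟨δ, hδ, hδball⟩ := hca δ₁ hδ₁
  refine ⟨δ, hδ, fun p hp hclose z hz k hk => ?_⟩
  have hdist : dist ((fun i : Fin (n + 2) => p.coeff i, z))
      ((fun i : Fin (n + 2) => q.coeff i, ζ)) < δ := by
    rw [Prod.dist_eq, max_lt_iff]
    constructor
    · rw [dist_pi_lt_iff hδ]
      intro i
      rw [dist_eq_norm]
      exact hclose i (by omega)
    · rw [dist_eq_norm]; exact hz
  have := hδball hdist
  have h2 := lt_of_le_of_lt (dist_le_pi_dist _ _ (⟨k, by omega⟩ : Fin (n + 1))) this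
  rw [hform p hp z, hform q hqn ζ, dist_eq_norm] at h2
  exact h2

-- given coefficient closeness, eval of p - q is small on a ball around ζ
lemma evalDiffSmall (n : ℕ) (q p : Polynomial ℂ) (hqn : q.natDegree ≤ n)
    (hpn : p.natDegree ≤ n) (δ r : ℝ) (hδ : 0 ≤ δ) (hr : 0 ≤ r) (ζ : ℂ)
    (hclose : ∀ i ≤ n, ‖p.coeff i - q.coeff i‖ ≤ δ)
    (z : ℂ) (hz : ‖z - ζ‖ ≤ r) :
    ‖p.eval z - q.eval z‖ ≤ (n + 1) * δ * (max 1 (‖ζ‖ + r)) ^ n := by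
  have h1 : (p - q).natDegree ≤ n := le_trans (Polynomial.natDegree_sub_le p q) (by omega)
  have h2 : ∀ i ≤ n, ‖(p - q).coeff i‖ ≤ δ := by
    intro i hi; rw [Polynomial.coeff_sub]; exact hclose i hi
  have h3 : ‖z‖ ≤ max 1 (‖ζ‖ + r) := by
    have : ‖z‖ ≤ ‖ζ‖ + ‖z - ζ‖ := by
      calc ‖z‖ = ‖ζ + (z - ζ)‖ := by ring_nf
        _ ≤ ‖ζ‖ + ‖z - ζ‖ := norm_add_le _ _
    exact le_max_of_le_right (by linarith)
  have := evalBound (p - q) n h1 δ (max 1 (‖ζ‖ + r)) hδ (le_max_left _ _) h2 z h3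
  rwa [Polynomial.eval_sub] at this

lemma lemB (n : ℕ) (q : Polynomial ℂ) (hq : q ≠ 0) (hqn : q.natDegree ≤ n)
    (ζ : ℂ) (hζ : q.IsRoot ζ) (η : ℝ) (hη : 0 < η) :
    ∃ δ > 0, ∀ p : Polynomial ℂ, p.natDegree ≤ n →
      (∀ i ≤ n, ‖p.coeff i - q.coeff i‖ < δ) →
      ∃ z : ℂ, p.IsRoot z ∧ ‖z - ζ‖ < η := by
  classical
  -- choose radius r smaller than η and distance to other roots
  set T := q.roots.toFinset.erase ζ with hT
  set F := insert η (T.image fun w => ‖w - ζ‖) with hF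
  have hFne : F.Nonempty := ⟨η, Finset.mem_insert_self _ _⟩
  set r := F.min' hFne / 2 with hrdef
  have hFpos : ∀ x ∈ F, 0 < x := by
    intro x hx
    rcases Finset.mem_insert.mp hx with h | h
    · rwa [h]
    · obtain ⟨w, hw, rfl⟩ := Finset.mem_image.mp h
      have hwζ : w ≠ ζ := Finset.ne_of_mem_erase hw
      simpa [norm_pos_iff, sub_ne_zero] using hwζ
  have hminpos : 0 < F.min' hFne := hFpos _ (F.min'_mem hFne)
  have hr0 : 0 < r := by rw [hrdef]; linarith
  have hrη : r < η := by
    have : F.min' hFne ≤ η := Finset.min'_le _ _ (Finset.mem_insert_self _ _)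
    rw [hrdef]; linarith
  have hroot_far : ∀ w : ℂ, q.IsRoot w → w ≠ ζ → r < ‖w - ζ‖ := by
    intro w hw hwζ
    have hwT : w ∈ T := Finset.mem_erase.mpr ⟨hwζ, by
      rw [Multiset.mem_toFinset, Polynomial.mem_roots hq]; exact hw⟩
    have : F.min' hFne ≤ ‖w - ζ‖ :=
      Finset.min'_le _ _ (Finset.mem_insert_of_mem (Finset.mem_image_of_mem _ hwT))
    rw [hrdef]; linarith
  -- q does not vanish on the sphere of radius r
  have hqsphere : ∀ w ∈ sphere ζ r, q.eval w ≠ 0 := by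
    intro w hw hqw
    have hd : ‖w - ζ‖ = r := by rwa [mem_sphere_iff_norm] at hw
    have hwζ : w ≠ ζ := by
      intro h; rw [h, sub_self, norm_zero] at hd; exact hr0.ne hd
    have := hroot_far w hqw hwζ
    linarith
  -- minimum of ‖q‖ on the sphere
  obtain ⟨w₀, hw₀S, hw₀min⟩ := (isCompact_sphere ζ r).exists_isMinOn
    (NormedSpace.sphere_nonempty.mpr hr0.le)
    ((q.continuous).norm.continuousOn)
  set c₁ := ‖q.eval w₀‖ with hc₁
  have hc₁pos : 0 < c₁ := by
    rw [hc₁, norm_pos_iff]; exact hqsphere w₀ hw₀S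
  set M := max 1 (‖ζ‖ + r) with hM
  have hM1 : (1 : ℝ) ≤ M := le_max_left _ _
  set D := ((n : ℝ) + 1) * M ^ n with hD
  have hDpos : 0 < D := by positivity
  refine ⟨c₁ / (4 * D), by positivity, fun p hpn hclose => ?_⟩
  by_contra hno
  push_neg at hno
  -- p does not vanish on the closed ball
  have hpne : ∀ z ∈ closedBall ζ r, p.eval z ≠ 0 := by
    intro z hz hpz
    have : ‖z - ζ‖ < η := by
      rw [mem_closedBall, dist_eq_norm] at hz; linarith
    exact absurd this (not_lt.mpr (hno z hpz))
  have hδclose : ∀ i ≤ n, ‖p.coeff i - q.coeff i‖ ≤ c₁ / (4 * D) :=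
    fun i hi => (hclose i hi).le
  have hdiff : ∀ z : ℂ, ‖z - ζ‖ ≤ r → ‖p.eval z - q.eval z‖ ≤ c₁ / 4 := by
    intro z hz
    have := evalDiffSmall n q p hqn hpn (c₁ / (4 * D)) r (by positivity) hr0.le ζ
      hδclose z hz
    calc ‖p.eval z - q.eval z‖ ≤ ((n : ℝ) + 1) * (c₁ / (4 * D)) * M ^ n := this
      _ = c₁ / 4 := by field_simp [hD]; ring
  -- minimum modulus via maximum modulus for 1/p
  set g : ℂ → ℂ := fun z => (p.eval z)⁻¹ with hgdef
  have hdg : DiffContOnCl ℂ g (ball ζ r) := by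
    constructor
    · exact DifferentiableOn.inv (p.differentiable.differentiableOn)
        (fun z hz => hpne z (ball_subset_closedBall hz))
    · rw [closure_ball ζ hr0.ne']
      exact ContinuousOn.inv₀ (p.continuous.continuousOn) hpne
  have hfr : ∀ z ∈ frontier (ball ζ r), ‖g z‖ ≤ (c₁ / 2)⁻¹ := by
    rw [frontier_ball ζ hr0.ne']
    intro z hz
    have hzn : ‖z - ζ‖ = r := by rwa [mem_sphere_iff_norm] at hz
    have h1 : c₁ ≤ ‖q.eval z‖ := hw₀min hz
    have h2 : ‖p.eval z - q.eval z‖ ≤ c₁ / 4 := hdiff z hzn.le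
    have h3 : c₁ / 2 ≤ ‖p.eval z‖ := by
      have h5 : ‖q.eval z‖ - ‖p.eval z‖ ≤ ‖q.eval z - p.eval z‖ :=
        norm_sub_norm_le _ _
      rw [norm_sub_rev] at h5
      linarith
    rw [hgdef]
    simp only [norm_inv]
    exact inv_anti₀ (by linarith) h3
  have hζmem : ζ ∈ closure (ball ζ r) := by
    rw [closure_ball ζ hr0.ne']; exact mem_closedBall_self hr0.le
  have hgζ : ‖g ζ‖ ≤ (c₁ / 2)⁻¹ :=
    Complex.norm_le_of_forall_mem_frontier_norm_le isBounded_ball hdg hfr hζmem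
  -- contradiction: |p(ζ)| is both ≥ c₁/2 and ≤ c₁/4
  have hpζne : p.eval ζ ≠ 0 := hpne ζ (mem_closedBall_self hr0.le)
  have hpζpos : 0 < ‖p.eval ζ‖ := norm_pos_iff.mpr hpζne
  have h5 : c₁ / 2 ≤ ‖p.eval ζ‖ := by
    rw [hgdef] at hgζ
    simp only [norm_inv] at hgζ
    have := (inv_le_inv₀ hpζpos (by linarith : (0:ℝ) < c₁ / 2)).mp ?_
    · linarith
    · exact hgζ
  have h6 : ‖p.eval ζ‖ ≤ c₁ / 4 := by
    have := hdiff ζ (by simp [hr0.le])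
    rw [Polynomial.IsRoot.def] at hζ
    rw [hζ, sub_zero] at this
    exact this
  linarith

lemma lemA (n : ℕ) (q : Polynomial ℂ) (hqn : q.natDegree ≤ n) (ζ : ℂ) (ε : ℝ)
    (hε : 0 < ε) (hfree : ∀ z : ℂ, ‖z - ζ‖ ≤ ε → q.eval z ≠ 0) :
    ∃ δ > 0, ∀ p : Polynomial ℂ, p.natDegree ≤ n →
      (∀ i ≤ n, ‖p.coeff i - q.coeff i‖ < δ) →
      ∀ z : ℂ, p.IsRoot z → ¬ ‖z - ζ‖ < ε := by
  obtain ⟨w₀, hw₀S, hw₀min⟩ := (isCompact_closedBall ζ ε).exists_isMinOn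
    (Metric.nonempty_closedBall.mpr hε.le) ((q.continuous).norm.continuousOn)
  set c₁ := ‖q.eval w₀‖ with hc₁
  have hc₁pos : 0 < c₁ := by
    rw [hc₁, norm_pos_iff]
    refine hfree w₀ ?_
    rwa [← dist_eq_norm, ← mem_closedBall]
  set M := max 1 (‖ζ‖ + ε) with hM
  have hM1 : (1 : ℝ) ≤ M := le_max_left _ _
  set D := ((n : ℝ) + 1) * M ^ n with hD
  have hDpos : 0 < D := by positivity
  refine ⟨c₁ / (2 * D), by positivity, fun p hpn hclose z hz hzb => ?_⟩
  have h1 : ‖p.eval z - q.eval z‖ ≤ c₁ / 2 := by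
    have := evalDiffSmall n q p hqn hpn (c₁ / (2 * D)) ε (by positivity) hε.le ζ
      (fun i hi => (hclose i hi).le) z hzb.le
    calc ‖p.eval z - q.eval z‖ ≤ ((n:ℝ) + 1) * (c₁ / (2 * D)) * M ^ n := this
      _ = c₁ / 2 := by field_simp [hD]; ring
  have h2 : c₁ ≤ ‖q.eval z‖ := hw₀min (by rw [mem_closedBall, dist_eq_norm]; exact hzb.le)
  rw [Polynomial.IsRoot.def] at hz
  rw [hz, zero_sub, norm_neg] at h1
  linarith

lemma caseA (n : ℕ) (q : Polynomial ℂ) (hqn : q.natDegree ≤ n) (ζ : ℂ) (ε : ℝ)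
    (hε : 0 < ε) (hsep : ∀ w : ℂ, q.IsRoot w → w ≠ ζ → ε < ‖w - ζ‖)
    (hroot : ¬ q.IsRoot ζ) :
    ∃ δ > 0, ∀ p : Polynomial ℂ, p.natDegree ≤ n →
      (∀ i ≤ n, ‖p.coeff i - q.coeff i‖ < δ) →
      (p.roots.filter (fun z => ‖z - ζ‖ < ε)).card = q.rootMultiplicity ζ := by
  have hfree : ∀ z : ℂ, ‖z - ζ‖ ≤ ε → q.eval z ≠ 0 := by
    intro z hz hz0
    have hzζ : z ≠ ζ := by
      intro h; exact hroot (h ▸ hz0)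
    have := hsep z hz0 hzζ
    linarith
  obtain ⟨δ, hδ, hA⟩ := lemA n q hqn ζ ε hε hfree
  refine ⟨δ, hδ, fun p hpn hclose => ?_⟩
  rw [Polynomial.rootMultiplicity_eq_zero hroot, Multiset.card_eq_zero,
    Multiset.filter_eq_nil]
  intro z hzmem
  exact hA p hpn hclose z (Polynomial.mem_roots'.mp hzmem).2

lemma key (n : ℕ) : ∀ (q : Polynomial ℂ), q ≠ 0 → q.natDegree ≤ n →
    ∀ (ζ : ℂ) (ε : ℝ), 0 < ε → (∀ w : ℂ, q.IsRoot w → w ≠ ζ → ε < ‖w - ζ‖) →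
    ∃ δ > 0, ∀ p : Polynomial ℂ, p.natDegree ≤ n →
      (∀ i ≤ n, ‖p.coeff i - q.coeff i‖ < δ) →
      (p.roots.filter (fun z => ‖z - ζ‖ < ε)).card = q.rootMultiplicity ζ := by
  induction n with
  | zero =>
    intro q hq hqn ζ ε hε hsep
    refine caseA 0 q hqn ζ ε hε hsep ?_
    intro hroot
    have hqc : q = C (q.coeff 0) := Polynomial.eq_C_of_natDegree_le_zero hqn
    rw [Polynomial.IsRoot.def, hqc, Polynomial.eval_C] at hroot
    exact hq (by rw [hqc, hroot, map_zero])
  | succ n ih =>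
    intro q hq hqn ζ ε hε hsep
    by_cases hroot : q.IsRoot ζ
    · -- main case: factor out the root
      set q₁ := q /ₘ (X - C ζ) with hq₁
      have hfact : (X - C ζ) * q₁ = q := mul_divByMonic_eq_iff_isRoot.mpr hroot
      have hq₁ne : q₁ ≠ 0 := by
        intro h
        rw [h, mul_zero] at hfact
        exact hq hfact.symm
      have hqdeg : q₁.natDegree ≤ n := by
        rw [hq₁, Polynomial.natDegree_divByMonic q (monic_X_sub_C ζ),
          Polynomial.natDegree_X_sub_C]
        omega
      have hq₁dvd : q₁ ∣ q := ⟨X - C ζ, by rw [mul_comm, hfact]⟩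
      have hsep₁ : ∀ w : ℂ, q₁.IsRoot w → w ≠ ζ → ε < ‖w - ζ‖ :=
        fun w hw => hsep w (hw.dvd hq₁dvd)
      obtain ⟨δ₁, hδ₁, hIH⟩ := ih q₁ hq₁ne hqdeg ζ ε hε hsep₁
      obtain ⟨δ₂, hδ₂, hC⟩ := lemC n q hqn ζ δ₁ hδ₁
      set η := min δ₂ ε with hη
      have hηpos : 0 < η := lt_min hδ₂ hε
      obtain ⟨δ₃, hδ₃, hB⟩ := lemB (n + 1) q hq hqn ζ hroot η hηpos
      set d := q.natDegree with hd
      have hlead : q.coeff d ≠ 0 := by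
        rw [hd, ← Polynomial.leadingCoeff]
        exact Polynomial.leadingCoeff_ne_zero.mpr hq
      set δ₄ := ‖q.coeff d‖ with hδ₄
      have hδ₄pos : 0 < δ₄ := norm_pos_iff.mpr hlead
      refine ⟨min (min δ₂ δ₃) δ₄, by positivity, fun p hpn hclose => ?_⟩
      have hclose₂ : ∀ i ≤ n + 1, ‖p.coeff i - q.coeff i‖ < δ₂ :=
        fun i hi => lt_of_lt_of_le (hclose i hi)
          (le_trans (min_le_left _ _) (min_le_left _ _))
      have hclose₃ : ∀ i ≤ n + 1, ‖p.coeff i - q.coeff i‖ < δ₃ :=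
        fun i hi => lt_of_lt_of_le (hclose i hi)
          (le_trans (min_le_left _ _) (min_le_right _ _))
      have hpne : p ≠ 0 := by
        intro h
        have := hclose d (by omega)
        rw [h, Polynomial.coeff_zero, zero_sub, norm_neg] at this
        have h2 : (min (min δ₂ δ₃) δ₄ : ℝ) ≤ δ₄ := min_le_right _ _
        rw [← hδ₄] at this
        linarith
      obtain ⟨z, hziroot, hzη⟩ := hB p hpn hclose₃
      set p₁ := p /ₘ (X - C z) with hp₁
      have hpfact : (X - C z) * p₁ = p := mul_divByMonic_eq_iff_isRoot.mpr hziroot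
      have hp₁deg : p₁.natDegree ≤ n := by
        rw [hp₁, Polynomial.natDegree_divByMonic p (monic_X_sub_C z),
          Polynomial.natDegree_X_sub_C]
        omega
      have hzδ₂ : ‖z - ζ‖ < δ₂ := lt_of_lt_of_le hzη (min_le_left _ _)
      have hzε : ‖z - ζ‖ < ε := lt_of_lt_of_le hzη (min_le_right _ _)
      have hp₁close : ∀ i ≤ n, ‖p₁.coeff i - q₁.coeff i‖ < δ₁ :=
        fun i hi => hC p hpn hclose₂ z hzδ₂ i hi
      have hcount₁ := hIH p₁ hp₁deg hp₁close
      have hroots : p.roots = z ::ₘ p₁.roots := by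
        rw [← hpfact, Polynomial.roots_mul (by rw [hpfact]; exact hpne),
          Polynomial.roots_X_sub_C, Multiset.singleton_add]
      rw [hroots, Multiset.filter_cons, Multiset.card_add, if_pos hzε,
        Multiset.card_singleton, hcount₁]
      rw [← hfact, Polynomial.rootMultiplicity_mul (by rw [hfact]; exact hq),
        Polynomial.rootMultiplicity_X_sub_C_self]
    · exact caseA (n + 1) q hqn ζ ε hε hsep hroot

/-- Root separation without ∞: if ε > 0 and (when q has more than one distinct root)
ε is smaller than the minimal distance between distinct roots of q, then every polynomial
p of degree at most n with coefficients δ-close to those of q has exactly m_j roots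
(with multiplicity) in B(ζ_j, ε), simultaneously for every distinct root ζ_j of q
of multiplicity m_j. -/
theorem roots_separation_no_infinity (n : ℕ) (q : Polynomial ℂ) (hq : q ≠ 0)
    (hqn : q.natDegree ≤ n) (ε : ℝ) (hε : 0 < ε)
    (hsep : ∀ z w : ℂ, q.IsRoot z → q.IsRoot w → z ≠ w → ε < ‖z - w‖) :
    ∃ δ > 0, ∀ p : Polynomial ℂ, p.natDegree ≤ n →
      (∀ i ≤ n, ‖p.coeff i - q.coeff i‖ < δ) →
      ∀ ζ : ℂ, q.IsRoot ζ →
        (p.roots.filter (fun z => ‖z - ζ‖ < ε)).card = q.rootMultiplicity ζ := by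
  classical
  have H : ∀ ζ : ℂ, q.IsRoot ζ → ∃ δ, 0 < δ ∧ ∀ p : Polynomial ℂ, p.natDegree ≤ n →
      (∀ i ≤ n, ‖p.coeff i - q.coeff i‖ < δ) →
      (p.roots.filter (fun z => ‖z - ζ‖ < ε)).card = q.rootMultiplicity ζ := by
    intro ζ hζ
    obtain ⟨δ, hδ, hP⟩ := key n q hq hqn ζ ε hε (fun w hw hne => hsep w ζ hw hζ hne)
    exact ⟨δ, hδ, hP⟩
  choose f hf0 hf using H
  set F : Finset ℝ := insert 1 (q.roots.toFinset.attach.image fun w =>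
    f w.1 ((Polynomial.mem_roots hq).mp (Multiset.mem_toFinset.mp w.2))) with hF
  have hFne : F.Nonempty := ⟨1, Finset.mem_insert_self _ _⟩
  refine ⟨F.min' hFne, ?_, fun p hpn hclose ζ hζ => ?_⟩
  · have : ∀ x ∈ F, 0 < x := by
      intro x hx
      rcases Finset.mem_insert.mp hx with h | h
      · rw [h]; norm_num
      · obtain ⟨w, _, rfl⟩ := Finset.mem_image.mp h
        exact hf0 _ _
    exact this _ (F.min'_mem hFne)
  · have hζF : ζ ∈ q.roots.toFinset := Multiset.mem_toFinset.mpr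
      ((Polynomial.mem_roots hq).mpr hζ)
    have hmem : f ζ hζ ∈ F := by
      refine Finset.mem_insert_of_mem (Finset.mem_image.mpr ⟨⟨ζ, hζF⟩, Finset.mem_attach _ _, rfl⟩)
    have hle : F.min' hFne ≤ f ζ hζ := Finset.min'_le _ _ hmem
    exact hf ζ hζ p hpn (fun i hi => lt_of_lt_of_le (hclose i hi) hle)
end

section
/- Let q be a nonzero polynomial of degree at most n and let ε > 0. Then there exists δ > 0 such that for every polynomial p of degree at most n whose coefficients are each within δ of the corresponding coefficients of q, the polynomial p has at least deg p − deg q roots λ (counted with multiplicity) with |λ| > 1/ε. -/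
open Polynomial


lemma auxA (R : ℝ) (hR : 0 ≤ R) (S : Multiset ℂ) (hS : ∀ z ∈ S, ‖z‖ ≤ R) (j : ℕ) :
    ‖((S.map fun z => X - C z).prod).coeff j‖ ≤ (1+R) ^ Multiset.card S := by
  induction S using Multiset.induction generalizing j with
  | empty =>
    simp only [Multiset.map_zero, Multiset.prod_zero, Multiset.card_zero, pow_zero,
      Polynomial.coeff_one]
    split <;> simp
  | cons a s ih =>
    have ha : ‖a‖ ≤ R := hS a (Multiset.mem_cons_self a s)
    have hs : ∀ z ∈ s, ‖z‖ ≤ R := fun z hz => hS z (Multiset.mem_cons_of_mem hz)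
    simp only [Multiset.map_cons, Multiset.prod_cons, Multiset.card_cons]
    set g := (s.map fun z => X - C z).prod with hg
    have hco : ((X - C a) * g).coeff j = (X * g).coeff j - a * g.coeff j := by
      rw [sub_mul]; simp [Polynomial.coeff_C_mul]
    rw [hco]
    have h1 : ‖(X * g).coeff j‖ ≤ (1+R) ^ Multiset.card s := by
      cases j with
      | zero => simp; positivity
      | succ k => rw [Polynomial.coeff_X_mul]; exact ih hs k
    have h2 : ‖a * g.coeff j‖ ≤ R * (1+R) ^ Multiset.card s := by
      rw [norm_mul]
      exact mul_le_mul ha (ih hs j) (norm_nonneg _) hR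
    have h3 := norm_sub_le ((X*g).coeff j) (a * g.coeff j)
    have h4 : (1+R) ^ (Multiset.card s + 1) = (1+R)^Multiset.card s + R*(1+R)^Multiset.card s := by
      rw [pow_succ]; ring
    rw [h4]
    linarith


lemma auxB (n e : ℕ) (B δ : ℝ) (hδ : 0 ≤ δ) (hB : 0 ≤ B)
    (g h : Polynomial ℂ) (hg : g.Monic) (hge : g.natDegree = e)
    (hn : h.natDegree + e ≤ n)
    (hgB : ∀ i, ‖g.coeff i‖ ≤ B)
    (hp : ∀ i, e ≤ i → ‖(g*h).coeff i‖ ≤ δ) :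
    ∀ t s, h.natDegree ≤ s + t → ‖h.coeff s‖ ≤ δ * (1 + n*B) ^ t := by
  have hone : (1:ℝ) ≤ 1 + n*B := by
    have : (0:ℝ) ≤ (n:ℝ) * B := by positivity
    linarith
  have hmem : ∀ s : ℕ, (e, s) ∈ Finset.HasAntidiagonal.antidiagonal (s+e) := by
    intro s; rw [Finset.HasAntidiagonal.mem_antidiagonal]; omega
  have key : ∀ s : ℕ, ‖h.coeff s‖ ≤ δ +
      ∑ x ∈ (Finset.HasAntidiagonal.antidiagonal (s+e)).erase (e,s), ‖g.coeff x.1‖ * ‖h.coeff x.2‖ := by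
    intro s
    have hcm := Polynomial.coeff_mul g h (s+e)
    have hsplit := Finset.add_sum_erase _ (fun x : ℕ × ℕ => g.coeff x.1 * h.coeff x.2) (hmem s)
    have hge1 : g.coeff e = 1 := by rw [← hge]; exact hg.coeff_natDegree
    have heq : h.coeff s = (g*h).coeff (s+e) -
        ∑ x ∈ (Finset.HasAntidiagonal.antidiagonal (s+e)).erase (e,s), g.coeff x.1 * h.coeff x.2 := by
      rw [hcm, ← hsplit]; simp only [hge1, one_mul]; ring
    rw [heq]
    calc ‖_ - _‖ ≤ ‖(g*h).coeff (s+e)‖ + ‖∑ x ∈ (Finset.HasAntidiagonal.antidiagonal (s+e)).erase (e,s),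
            g.coeff x.1 * h.coeff x.2‖ := norm_sub_le _ _
      _ ≤ δ + ∑ x ∈ (Finset.HasAntidiagonal.antidiagonal (s+e)).erase (e,s), ‖g.coeff x.1 * h.coeff x.2‖ :=
          add_le_add (hp _ (by omega)) (norm_sum_le _ _)
      _ = δ + ∑ x ∈ (Finset.HasAntidiagonal.antidiagonal (s+e)).erase (e,s), ‖g.coeff x.1‖ * ‖h.coeff x.2‖ := by
          simp [norm_mul]
  -- terms with x.2 ≤ s vanish
  have hvanish : ∀ s : ℕ, ∀ x ∈ (Finset.HasAntidiagonal.antidiagonal (s+e)).erase (e,s),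
      x.2 ≤ s → ‖g.coeff x.1‖ * ‖h.coeff x.2‖ = 0 := by
    intro s x hx hx2
    have hx' := Finset.mem_of_mem_erase hx
    rw [Finset.HasAntidiagonal.mem_antidiagonal] at hx'
    have hxne := Finset.ne_of_mem_erase hx
    have hx1 : e < x.1 := by
      rcases Nat.lt_or_ge e x.1 with h1 | h1
      · exact h1
      · exfalso
        have : x.1 = e ∧ x.2 = s := by omega
        exact hxne (Prod.ext this.1 this.2)
    rw [Polynomial.coeff_eq_zero_of_natDegree_lt (by omega : g.natDegree < x.1)]
    simp
  intro t
  induction t with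
  | zero =>
    intro s hs
    simp only [Nat.add_zero] at hs
    rcases Nat.lt_or_ge h.natDegree s with hlt | hge'
    · rw [Polynomial.coeff_eq_zero_of_natDegree_lt hlt]; simpa using hδ
    · have hse : s = h.natDegree := le_antisymm hge' hs
      have hsum0 : ∑ x ∈ (Finset.HasAntidiagonal.antidiagonal (s+e)).erase (e,s),
          ‖g.coeff x.1‖ * ‖h.coeff x.2‖ = 0 := by
        apply Finset.sum_eq_zero
        intro x hx
        rcases le_or_gt x.2 s with h2 | h2
        · exact hvanish s x hx h2
        · rw [Polynomial.coeff_eq_zero_of_natDegree_lt (by omega : h.natDegree < x.2)]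
          simp
      have := key s
      rw [hsum0] at this
      simpa using this
  | succ t ih =>
    intro s hs
    rcases le_or_gt h.natDegree (s + t) with hc | hc
    · calc ‖h.coeff s‖ ≤ δ * (1 + n*B) ^ t := ih s hc
        _ ≤ δ * (1 + n*B) ^ (t+1) := by
            apply mul_le_mul_of_nonneg_left _ hδ
            exact pow_le_pow_right₀ hone (Nat.le_succ t)
    · have hsle : s ≤ h.natDegree := by omega
      have hterm : ∀ x ∈ (Finset.HasAntidiagonal.antidiagonal (s+e)).erase (e,s),
          ‖g.coeff x.1‖ * ‖h.coeff x.2‖ ≤ B * (δ * (1 + n*B) ^ t) := by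
        intro x hx
        rcases le_or_gt x.2 s with h2 | h2
        · rw [hvanish s x hx h2]; positivity
        · exact mul_le_mul (hgB x.1) (ih x.2 (by omega)) (norm_nonneg _) hB
      have hcard : ((Finset.HasAntidiagonal.antidiagonal (s+e)).erase (e,s)).card = s + e := by
        rw [Finset.card_erase_of_mem (hmem s), Finset.Nat.card_antidiagonal]; omega
      have hsum := Finset.sum_le_card_nsmul _ _ _ hterm
      rw [hcard] at hsum
      have hsum' : ∑ x ∈ (Finset.HasAntidiagonal.antidiagonal (s+e)).erase (e,s),
          ‖g.coeff x.1‖ * ‖h.coeff x.2‖ ≤ (n:ℝ) * (B * (δ * (1 + n*B) ^ t)) := by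
        refine hsum.trans ?_
        rw [nsmul_eq_mul]
        apply mul_le_mul_of_nonneg_right _ (by positivity)
        exact_mod_cast (by omega : s + e ≤ n)
      have hpow : (1:ℝ) ≤ (1 + n*B) ^ t := one_le_pow₀ hone
      calc ‖h.coeff s‖ ≤ δ + ∑ x ∈ (Finset.HasAntidiagonal.antidiagonal (s+e)).erase (e,s),
            ‖g.coeff x.1‖ * ‖h.coeff x.2‖ := key s
        _ ≤ δ + (n:ℝ) * (B * (δ * (1 + n*B) ^ t)) := by linarith
        _ ≤ δ * (1 + n*B) ^ (t+1) := by
            rw [pow_succ]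
            nlinarith [hδ, hpow, mul_nonneg (Nat.cast_nonneg n : (0:ℝ) ≤ n) hB]

/-- For q ≠ 0 and ε > 0, every polynomial p of degree at most n with coefficients
δ-close to those of q has at least deg p − deg q roots (with multiplicity) of
modulus greater than 1/ε. -/
theorem roots_escaping_to_infinity_at_least (n : ℕ) (q : Polynomial ℂ) (hq : q ≠ 0)
    (hqn : q.natDegree ≤ n) (ε : ℝ) (hε : 0 < ε) :
    ∃ δ > 0, ∀ p : Polynomial ℂ, p.natDegree ≤ n →
      (∀ i ≤ n, ‖p.coeff i - q.coeff i‖ < δ) →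
      p.natDegree - q.natDegree ≤ (p.roots.filter (fun z => 1 / ε < ‖z‖)).card := by
  set m := q.natDegree with hm
  set c : ℝ := ‖q.coeff m‖ with hcdef
  have hc : 0 < c := by
    have : q.coeff m ≠ 0 := by
      rw [hm]; exact Polynomial.leadingCoeff_ne_zero.mpr hq
    simpa [hcdef] using norm_pos_iff.mpr this
  set R : ℝ := 1/ε with hRdef
  have hR : 0 < R := by positivity
  set B : ℝ := (1+R)^n with hBdef
  have hB : 0 < B := by positivity
  set D : ℝ := (n+1)*B*(1+n*B)^n + 1 with hDdef
  have hD1 : 1 ≤ D := by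
    have : 0 ≤ (n+1:ℝ)*B*(1+n*B)^n := by positivity
    linarith
  have hD : 0 < D := by linarith
  refine ⟨c/(2*D), by positivity, ?_⟩
  set δ : ℝ := c/(2*D) with hδdef
  have hδ : 0 < δ := by positivity
  have hδc : δ ≤ c/2 := by
    rw [hδdef, div_le_div_iff₀ (by positivity) (by norm_num)]
    nlinarith
  intro p hpn hco
  -- lower bound on ‖p.coeff m‖
  have hpcm : c - δ < ‖p.coeff m‖ := by
    have h1 := hco m (hm ▸ hqn)
    have h2 : ‖q.coeff m‖ - ‖p.coeff m‖ ≤ ‖p.coeff m - q.coeff m‖ := by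
      have := norm_sub_norm_le (p.coeff m - q.coeff m) (- q.coeff m)
      simp at this
      linarith [norm_sub_norm_le (q.coeff m) (p.coeff m), (norm_sub_rev (p.coeff m) (q.coeff m))]
    rw [← hcdef] at h2
    linarith
  have hp0 : p ≠ 0 := by
    intro h0
    rw [h0] at hpcm
    simp at hpcm
    linarith
  have hroots : Multiset.card p.roots = p.natDegree :=
    Polynomial.splits_iff_card_roots.mp (IsAlgClosed.splits p)
  -- main claim
  have hclaim : Multiset.card (p.roots.filter (fun z => ¬ R < ‖z‖)) ≤ m := by
    by_contra hcon
    rw [Nat.not_le] at hcon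
    set S := p.roots.filter (fun z => ¬ R < ‖z‖) with hSdef
    set e := Multiset.card S with hedef
    set g := (S.map fun z => Polynomial.X - Polynomial.C z).prod with hgdef
    have hmono : g.Monic :=
      Polynomial.monic_multiset_prod_of_monic _ _ (fun z _ => Polynomial.monic_X_sub_C z)
    have hdegg : g.natDegree = e := Polynomial.natDegree_multiset_prod_X_sub_C_eq_card S
    have hdvd : g ∣ p := by
      refine dvd_trans ?_ (Polynomial.prod_multiset_X_sub_C_dvd p)
      exact Multiset.prod_dvd_prod_of_le (Multiset.map_le_map (Multiset.filter_le _ _))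
    obtain ⟨h, hph⟩ := hdvd
    have hh0 : h ≠ 0 := by
      intro h0; rw [h0, mul_zero] at hph; exact hp0 hph
    have hdeg : p.natDegree = e + h.natDegree := by
      rw [hph, Polynomial.natDegree_mul hmono.ne_zero hh0, hdegg]
    have hn : h.natDegree + e ≤ n := by omega
    have hgB : ∀ i, ‖g.coeff i‖ ≤ B := by
      intro i
      have helt : ∀ z ∈ S, ‖z‖ ≤ R := by
        intro z hz
        exact le_of_not_gt (Multiset.mem_filter.mp hz).2
      refine (auxA R hR.le S helt i).trans ?_
      rw [hBdef]
      exact pow_le_pow_right₀ (by linarith) (by omega)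
    have hp' : ∀ i, e ≤ i → ‖(g * h).coeff i‖ ≤ δ := by
      intro i hi
      rw [← hph]
      by_cases hin : i ≤ n
      · have hq0 : q.coeff i = 0 :=
          Polynomial.coeff_eq_zero_of_natDegree_lt (by omega : q.natDegree < i)
        have := hco i hin
        rw [hq0, sub_zero] at this
        linarith
      · rw [Polynomial.coeff_eq_zero_of_natDegree_lt (by omega : p.natDegree < i)]
        simpa using hδ.le
    have hhB : ∀ s, ‖h.coeff s‖ ≤ δ * (1 + n*B)^n := by
      intro s
      exact auxB n e B δ hδ.le hB.le g h hmono hdegg hn hgB hp' n s (by omega)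
    -- upper bound on ‖p.coeff m‖
    have hup : ‖p.coeff m‖ ≤ (n+1) * (B * (δ * (1 + n*B)^n)) := by
      rw [hph, Polynomial.coeff_mul]
      refine (norm_sum_le _ _).trans ?_
      have hterm : ∀ x ∈ Finset.HasAntidiagonal.antidiagonal m,
          ‖g.coeff x.1 * h.coeff x.2‖ ≤ B * (δ * (1 + n*B)^n) := by
        intro x _
        rw [norm_mul]
        exact mul_le_mul (hgB x.1) (hhB x.2) (norm_nonneg _) hB.le
      refine (Finset.sum_le_card_nsmul _ _ _ hterm).trans ?_
      rw [Finset.Nat.card_antidiagonal, nsmul_eq_mul]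
      apply mul_le_mul_of_nonneg_right _ (by positivity)
      push_cast
      have : (m:ℝ) ≤ n := by exact_mod_cast (hm ▸ hqn)
      linarith
    have hkey : (n+1) * (B * (δ * (1 + n*B)^n)) = (D - 1) * δ := by
      rw [hDdef]; ring
    have hDδ : D * δ = c / 2 := by
      rw [hδdef]; field_simp
    rw [hkey] at hup
    nlinarith
  have hsplit := Multiset.filter_add_not (fun z => R < ‖z‖) p.roots
  have hcards : Multiset.card (p.roots.filter (fun z => R < ‖z‖)) +
      Multiset.card (p.roots.filter (fun z => ¬ R < ‖z‖)) = p.natDegree := by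
    rw [← hroots, ← Multiset.card_add, hsplit]
  omega
end

section
/- Let q be a nonzero polynomial of degree at most n. If deg q ≥ 1 let ζ_1,…,ζ_d be its distinct roots and assume 0 < ε < (max_{1≤j≤d} |ζ_j|)^{−1} (with this bound interpreted as ∞ if deg q = 0, or if d = 1 and ζ_1 = 0; in those cases assume only ε > 0). Then there exists δ > 0 such that every polynomial p of degree at most n whose coefficients are each within δ of those of q has exactly deg p − deg q roots λ (with multiplicity) satisfying |λ| > 1/ε. -/
open Polynomial


lemma coeff_linear_div_bound {r M : ℝ} (hr : 0 ≤ r) (hM : 0 ≤ M) (N : ℕ)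
    {lam : ℂ} (hlam : ‖lam‖ ≤ r) {p t : Polynomial ℂ}
    (hpt : p = (X - C lam) * t) (hdeg : p.natDegree ≤ N)
    (hcoeff : ∀ i, ‖p.coeff i‖ ≤ M) :
    ∀ j, ‖t.coeff j‖ ≤ M * (1 + r) ^ N := by
  have hhigh : ∀ j, N ≤ j → t.coeff j = 0 := by
    intro j hj
    rcases eq_or_ne t 0 with rfl | ht
    · simp
    · apply coeff_eq_zero_of_natDegree_lt
      have hp0 : p ≠ 0 := by
        rw [hpt]; exact mul_ne_zero (X_sub_C_ne_zero lam) ht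
      have : p.natDegree = 1 + t.natDegree := by
        rw [hpt, natDegree_mul (X_sub_C_ne_zero lam) ht, natDegree_X_sub_C]
      omega
  have hrec : ∀ j, t.coeff j = p.coeff (j + 1) + lam * t.coeff (j + 1) := by
    intro j
    have h1 : p.coeff (j + 1) = t.coeff j - lam * t.coeff (j + 1) := by
      rw [hpt, sub_mul, coeff_sub, coeff_X_mul, coeff_C_mul]
    rw [h1]; ring
  have hone : (1 : ℝ) ≤ 1 + r := by linarith
  have key : ∀ d j, N ≤ j + d → ‖t.coeff j‖ ≤ M * (1 + r) ^ d := by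
    intro d
    induction d with
    | zero => intro j hj; rw [hhigh j (by omega)]; simpa using hM
    | succ d ih =>
      intro j hj
      by_cases hjN : N ≤ j
      · rw [hhigh j hjN]; simp only [norm_zero]; positivity
      · have h1 : ‖t.coeff (j+1)‖ ≤ M * (1 + r) ^ d := ih (j+1) (by omega)
        have h2 : ‖t.coeff j‖ ≤ ‖p.coeff (j+1)‖ + ‖lam‖ * ‖t.coeff (j+1)‖ := by
          rw [hrec j]
          calc ‖p.coeff (j + 1) + lam * t.coeff (j + 1)‖
              ≤ ‖p.coeff (j+1)‖ + ‖lam * t.coeff (j+1)‖ := norm_add_le _ _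
            _ = ‖p.coeff (j+1)‖ + ‖lam‖ * ‖t.coeff (j+1)‖ := by rw [norm_mul]
        have h3 : (1:ℝ) ≤ (1+r)^d := one_le_pow₀ hone
        have h4 : ‖lam‖ * ‖t.coeff (j+1)‖ ≤ r * (M * (1+r)^d) := by
          apply mul_le_mul hlam h1 (norm_nonneg _) hr
        have h5 : ‖p.coeff (j+1)‖ ≤ M := hcoeff _
        have : M * (1 + r) ^ (d+1) = M * (1+r)^d + r * (M * (1+r)^d) := by ring
        rw [this]
        have h6 : M ≤ M * (1+r)^d := le_mul_of_one_le_right hM h3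
        linarith
  intro j
  exact key N j (by omega)

open Polynomial

lemma coeff_multiset_div_bound (r : ℝ) (hr : 0 ≤ r) (N : ℕ) (S : Multiset ℂ) :
    (∀ z ∈ S, ‖z‖ ≤ r) → ∀ (M : ℝ), 0 ≤ M →
    ∀ (p t : Polynomial ℂ), p = (S.map fun a => X - C a).prod * t →
    p.natDegree ≤ N → (∀ i, ‖p.coeff i‖ ≤ M) →
    ∀ j, ‖t.coeff j‖ ≤ M * ((1 + r) ^ N) ^ (Multiset.card S) := by
  induction S using Multiset.induction with
  | empty =>
    intro _ M hM p t hpt hdeg hc j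
    simp only [Multiset.map_zero, Multiset.prod_zero, one_mul] at hpt
    simpa [hpt] using hc j
  | cons a S ih =>
    intro hmem M hM p t hpt hdeg hc j
    rw [Multiset.map_cons, Multiset.prod_cons, mul_assoc] at hpt
    set t' := (S.map fun a => X - C a).prod * t with ht'
    have ha : ‖a‖ ≤ r := hmem a (Multiset.mem_cons_self a S)
    have hb1 : ∀ i, ‖t'.coeff i‖ ≤ M * (1 + r) ^ N :=
      coeff_linear_div_bound hr hM N ha hpt hdeg hc
    have hdeg' : t'.natDegree ≤ N := by
      rcases eq_or_ne t' 0 with h0 | h0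
      · simp [h0]
      · have : p.natDegree = 1 + t'.natDegree := by
          rw [hpt, natDegree_mul (X_sub_C_ne_zero a) h0, natDegree_X_sub_C]
        omega
    have := ih (fun z hz => hmem z (Multiset.mem_cons_of_mem hz))
      (M * (1 + r) ^ N) (by positivity) t' t ht' hdeg' hb1 j
    calc ‖t.coeff j‖ ≤ M * (1 + r) ^ N * ((1 + r) ^ N) ^ Multiset.card S := this
      _ = M * ((1 + r) ^ N) ^ Multiset.card (a ::ₘ S) := by
          rw [Multiset.card_cons, pow_succ]; ring

lemma continuous_coeff_prod {k : ℕ} (s : Finset (Fin k)) (a : ℕ) :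
    Continuous fun μ : Fin k → ℂ => (∏ i ∈ s, (X - C (μ i))).coeff a := by
  induction s using Finset.induction generalizing a with
  | empty => simpa using continuous_const
  | @insert i s hi ih =>
    have heq : ∀ (μ : Fin k → ℂ) (b : ℕ),
        (∏ j ∈ insert i s, (X - C (μ j))).coeff b
        = (if b = 0 then 0 else (∏ j ∈ s, (X - C (μ j))).coeff (b-1))
          - μ i * (∏ j ∈ s, (X - C (μ j))).coeff b := by
      intro μ b
      rw [Finset.prod_insert hi, sub_mul, coeff_sub, coeff_C_mul]
      congr 1
      cases b with
      | zero => simp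
      | succ b => simp [coeff_X_mul]
    simp only [heq]
    apply Continuous.sub
    · cases a with
      | zero => simpa using continuous_const
      | succ a => simpa using ih a
    · exact ((continuous_apply i).mul (ih a))

lemma continuous_coeff_tP (N : ℕ) (b : ℕ) :
    Continuous fun v : Fin (N+1) → ℂ => (∑ j : Fin (N+1), C (v j) * X ^ (j:ℕ)).coeff b := by
  have heq : ∀ v : Fin (N+1) → ℂ,
      (∑ j : Fin (N+1), C (v j) * X ^ (j:ℕ)).coeff b
      = ∑ j : Fin (N+1), (if b = (j:ℕ) then v j else 0) := by
    intro v
    rw [finset_sum_coeff]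
    congr 1; ext j
    rw [coeff_C_mul, coeff_X_pow]
    split_ifs <;> simp
  simp only [heq]
  apply continuous_finset_sum
  intro j _
  split_ifs
  · exact continuous_apply j
  · exact continuous_const

lemma multiset_exists_le_card {α : Type*} (T : Multiset α) (k : ℕ) (h : k ≤ Multiset.card T) :
    ∃ S ≤ T, Multiset.card S = k := by
  refine ⟨(T.toList.take k : Multiset α), ?_, ?_⟩
  · have h1 : List.Sublist (List.take k T.toList) T.toList := List.take_sublist k T.toList
    have h2 : ((T.toList.take k : List α) : Multiset α) ≤ (T.toList : Multiset α) :=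
      Multiset.coe_le.mpr h1.subperm
    rwa [Multiset.coe_toList] at h2
  · have := Multiset.length_toList T
    simp only [Multiset.coe_card, List.length_take]
    omega

lemma multiset_exists_fin {α β : Type*} [CommMonoid β] (S : Multiset α) (k : ℕ)
    (hk : Multiset.card S = k) (f : α → β) :
    ∃ μ : Fin k → α, (∀ i, μ i ∈ S) ∧ (S.map f).prod = ∏ i, f (μ i) := by
  subst hk
  have hl : S.toList.length = Multiset.card S := Multiset.length_toList S
  refine ⟨fun i => S.toList.get (Fin.cast hl.symm i), ?_, ?_⟩
  · intro i
    rw [← Multiset.mem_toList]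
    exact List.get_mem _ _
  · have h1 : (S.toList.map f : Multiset β) = S.map f := by
      rw [← Multiset.map_coe, Multiset.coe_toList]
    rw [← h1, Multiset.prod_coe, ← List.ofFn_getElem_eq_map S.toList f, List.prod_ofFn]
    exact Fintype.prod_equiv (finCongr hl) _ _ (fun x => rfl)

lemma core_disk_lemma (N c : ℕ) (hcN : c ≤ N) (r : ℝ) (hr : 0 ≤ r) (f : Polynomial ℂ)
    (hf0 : f ≠ 0) (hfN : f.natDegree ≤ N)
    (hcount : Multiset.card (f.roots.filter fun z => ‖z‖ ≤ r) ≤ c) :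
    ∃ δ > 0, ∀ p : Polynomial ℂ, p.natDegree ≤ N →
      (∀ i ≤ N, ‖p.coeff i - f.coeff i‖ < δ) →
      Multiset.card (p.roots.filter fun z => ‖z‖ ≤ r) ≤ c := by
  classical
  set M : ℝ := 1 + ∑ i ∈ Finset.range (N + 1), ‖f.coeff i‖ with hMdef
  have hM0 : (0:ℝ) ≤ M := by positivity
  set B : ℝ := M * ((1 + r) ^ N) ^ (c + 1) with hBdef
  have hB0 : (0:ℝ) ≤ B := by positivity
  set sP : (Fin (c + 1) → ℂ) → Polynomial ℂ := fun μ => ∏ i, (X - C (μ i)) with hsP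
  set tP : (Fin (N + 1) → ℂ) → Polynomial ℂ :=
    fun v => ∑ j : Fin (N + 1), C (v j) * X ^ (j : ℕ) with htP
  set Φ : (Fin (c + 1) → ℂ) × (Fin (N + 1) → ℂ) → (Fin (2 * N + 2) → ℂ) :=
    fun x j => (sP x.1 * tP x.2).coeff j with hΦ
  have hΦcont : Continuous Φ := by
    apply continuous_pi
    intro j
    have heq : ∀ x : (Fin (c + 1) → ℂ) × (Fin (N + 1) → ℂ), Φ x j =
        ∑ ab ∈ Finset.HasAntidiagonal.antidiagonal (j : ℕ), (sP x.1).coeff ab.1 * (tP x.2).coeff ab.2 := by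
      intro x
      simp only [hΦ, coeff_mul]
    simp only [heq]
    apply continuous_finset_sum
    intro ab _
    exact ((continuous_coeff_prod Finset.univ ab.1).comp continuous_fst).mul
      ((continuous_coeff_tP N ab.2).comp continuous_snd)
  set K := (Metric.closedBall (0 : Fin (c + 1) → ℂ) r) ×ˢ
    (Metric.closedBall (0 : Fin (N + 1) → ℂ) B) with hK
  have hKc : IsCompact K := (isCompact_closedBall _ _).prod (isCompact_closedBall _ _)
  have hIm : IsClosed (Φ '' K) := (hKc.image hΦcont).isClosed
  set Qv : Fin (2 * N + 2) → ℂ := fun j => f.coeff j with hQv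
  have hsPdeg : ∀ μ : Fin (c + 1) → ℂ, (sP μ).natDegree ≤ c + 1 := by
    intro μ
    refine le_trans (natDegree_prod_le _ _) ?_
    simp [natDegree_X_sub_C]
  have htPdeg : ∀ v : Fin (N + 1) → ℂ, (tP v).natDegree ≤ N := by
    intro v
    apply natDegree_sum_le_of_forall_le
    intro j _
    exact le_trans (natDegree_C_mul_le _ _) (by simpa using Nat.le_of_lt_succ j.isLt)
  have hQni : Qv ∉ Φ '' K := by
    rintro ⟨⟨μ, v⟩, hmem, hfeq⟩
    have hμr : ∀ i, ‖μ i‖ ≤ r := by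
      have h1 := hmem.1
      rw [Metric.mem_closedBall, dist_zero_right] at h1
      intro i
      exact le_trans (norm_le_pi_norm μ i) h1
    have hq : f = sP μ * tP v := by
      ext b
      by_cases hb : b < 2 * N + 2
      · have := congrFun hfeq (⟨b, hb⟩ : Fin (2 * N + 2))
        exact this.symm
      · rw [coeff_eq_zero_of_natDegree_lt (by omega),
          coeff_eq_zero_of_natDegree_lt ]
        calc (sP μ * tP v).natDegree ≤ (sP μ).natDegree + (tP v).natDegree :=
              natDegree_mul_le
          _ ≤ (c + 1) + N := add_le_add (hsPdeg μ) (htPdeg v)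
          _ < b := by omega
    have hdvd : sP μ ∣ f := ⟨tP v, hq⟩
    have hroots : (sP μ).roots = Finset.univ.val.map μ := by
      have hprod : sP μ = ((Finset.univ.val.map μ).map fun a => X - C a).prod := by
        rw [hsP, Multiset.map_map]
        rfl
      rw [hprod, Polynomial.roots_multiset_prod_X_sub_C]
    have hle : (sP μ).roots ≤ f.roots := Polynomial.roots.le_of_dvd hf0 hdvd
    have hall : ∀ z ∈ (sP μ).roots, ‖z‖ ≤ r := by
      intro z hz
      rw [hroots] at hz
      obtain ⟨i, _, rfl⟩ := Multiset.mem_map.mp hz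
      exact hμr i
    have hcontra : c + 1 ≤ Multiset.card (f.roots.filter fun z => ‖z‖ ≤ r) := by
      calc c + 1 = Multiset.card ((sP μ).roots) := by rw [hroots]; simp
        _ = Multiset.card ((sP μ).roots.filter fun z => ‖z‖ ≤ r) := by
            rw [Multiset.filter_eq_self.mpr hall]
        _ ≤ _ := Multiset.card_le_card (Multiset.filter_le_filter _ hle)
    omega
  obtain ⟨δ₀, hδ₀, hball⟩ := Metric.isOpen_iff.mp hIm.isOpen_compl Qv hQni
  refine ⟨min δ₀ 1, by positivity, ?_⟩
  intro p hpN hclose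
  by_contra hcard
  push_neg at hcard
  have hp0 : p ≠ 0 := by
    intro h
    rw [h] at hcard
    simp at hcard
  have hMp : ∀ i, ‖p.coeff i‖ ≤ M := by
    intro i
    by_cases hi : i ≤ N
    · have h1 : ‖p.coeff i - f.coeff i‖ < 1 :=
        lt_of_lt_of_le (hclose i hi) (min_le_right _ _)
      have h2 : ‖p.coeff i‖ ≤ ‖f.coeff i‖ + ‖p.coeff i - f.coeff i‖ := by
        calc ‖p.coeff i‖ = ‖f.coeff i + (p.coeff i - f.coeff i)‖ := by ring_nf
          _ ≤ ‖f.coeff i‖ + ‖p.coeff i - f.coeff i‖ := norm_add_le _ _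
      have h3 : ‖f.coeff i‖ ≤ ∑ i ∈ Finset.range (N + 1), ‖f.coeff i‖ :=
        Finset.single_le_sum (fun j _ => norm_nonneg _)
          (Finset.mem_range.mpr (by omega))
      rw [hMdef]
      linarith
    · rw [coeff_eq_zero_of_natDegree_lt (by omega)]
      simpa using hM0
  obtain ⟨S, hSle, hScard⟩ := multiset_exists_le_card
    (p.roots.filter fun z => ‖z‖ ≤ r) (c + 1) (by omega)
  have hSroots : S ≤ p.roots := le_trans hSle (Multiset.filter_le _ _)
  have hSr : ∀ z ∈ S, ‖z‖ ≤ r := by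
    intro z hz
    have h1 : z ∈ Multiset.filter (fun z => ‖z‖ ≤ r) p.roots := Multiset.mem_of_le hSle hz
    exact (Multiset.mem_filter.mp h1).2
  have hdvd : (S.map fun a => X - C a).prod ∣ p :=
    dvd_trans (Multiset.prod_dvd_prod_of_le (Multiset.map_le_map hSroots))
      (prod_multiset_X_sub_C_dvd p)
  obtain ⟨t, ht⟩ := hdvd
  have hbound := coeff_multiset_div_bound r hr N S hSr M hM0 p t ht hpN hMp
  rw [hScard] at hbound
  have hsprod_ne : (S.map fun a => X - C a).prod ≠ 0 := by
    apply Multiset.prod_ne_zero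
    intro h0
    obtain ⟨a, _, ha⟩ := Multiset.mem_map.mp h0
    exact X_sub_C_ne_zero a ha
  have ht0 : t ≠ 0 := by
    intro h0
    rw [h0, mul_zero] at ht
    exact hp0 ht
  have hsdeg : ((S.map fun a => X - C a).prod).natDegree = c + 1 := by
    rw [natDegree_multiset_prod_X_sub_C_eq_card, hScard]
  have hdegt : t.natDegree ≤ N := by
    have : p.natDegree = (c + 1) + t.natDegree := by
      rw [ht, natDegree_mul hsprod_ne ht0, hsdeg]
    omega
  obtain ⟨μ, hμmem, hμprod⟩ := multiset_exists_fin S (c + 1) hScard (fun a => X - C a)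
  set v : Fin (N + 1) → ℂ := fun j => t.coeff j with hv
  have htv : tP v = t := by
    have h2 : t = ∑ i ∈ Finset.range (N + 1), C (t.coeff i) * X ^ i := by
      conv_lhs => rw [as_sum_range' t (N + 1) (by omega)]
      simp [C_mul_X_pow_eq_monomial]
    rw [htP]
    show ∑ j : Fin (N + 1), C (t.coeff (j:ℕ)) * X ^ (j : ℕ) = t
    rw [Fin.sum_univ_eq_sum_range (fun j => C (t.coeff j) * X ^ j) (N + 1)]
    exact h2.symm
  have hsμ : sP μ = (S.map fun a => X - C a).prod := by
    rw [hsP, hμprod]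
  have hPim : (fun j : Fin (2 * N + 2) => p.coeff j) ∈ Φ '' K := by
    refine ⟨(μ, v), ⟨?_, ?_⟩, ?_⟩
    · rw [Metric.mem_closedBall, dist_zero_right, pi_norm_le_iff_of_nonneg hr]
      intro i
      exact hSr _ (hμmem i)
    · rw [Metric.mem_closedBall, dist_zero_right, pi_norm_le_iff_of_nonneg hB0]
      intro j
      exact hbound j
    · funext j
      show (sP μ * tP v).coeff j = p.coeff j
      rw [htv, hsμ, ← ht]
  have hPball : (fun j : Fin (2 * N + 2) => p.coeff j) ∈ Metric.ball Qv δ₀ := by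
    rw [Metric.mem_ball, dist_pi_lt_iff hδ₀]
    intro b
    by_cases hb : (b : ℕ) ≤ N
    · rw [dist_eq_norm]
      exact lt_of_lt_of_le (hclose b hb) (min_le_left _ _)
    · have h1 : p.coeff b = 0 := coeff_eq_zero_of_natDegree_lt (by omega)
      have h2 : f.coeff b = 0 := coeff_eq_zero_of_natDegree_lt (by omega)
      simp only [hQv, h1, h2]
      simpa using hδ₀
  exact hball hPball hPim

lemma reflect_one_X_sub_C (a : ℂ) : reflect 1 (X - C a) = 1 - C a * X := by
  have h : (X : Polynomial ℂ) - C a = C 1 * X ^ 1 + C (-a) * X ^ 0 := by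
    simp only [map_one, one_mul, pow_one, map_neg, pow_zero, mul_one]
    ring
  rw [h, reflect_add, reflect_C_mul_X_pow, reflect_C_mul_X_pow]
  norm_num [revAt_le]
  ring

lemma reflect_prod_X_sub_C (S : Multiset ℂ) :
    reflect (Multiset.card S) ((S.map fun a => X - C a).prod)
      = (S.map fun a => 1 - C a * X).prod := by
  induction S using Multiset.induction with
  | empty => simp
  | cons a S ih =>
    rw [Multiset.map_cons, Multiset.prod_cons, Multiset.card_cons,
      Multiset.map_cons, Multiset.prod_cons]
    have hc : Multiset.card S + 1 = 1 + Multiset.card S := by omega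
    rw [hc, reflect_mul (X - C a) _ (by simp [natDegree_X_sub_C])
      (le_of_eq (natDegree_multiset_prod_X_sub_C_eq_card S)), ih,
      reflect_one_X_sub_C]

lemma count_roots_reflect_le {q : Polynomial ℂ} (hq : q ≠ 0) {ε : ℝ} (hε : 0 < ε)
    (hεroots : ∀ z : ℂ, q.IsRoot z → ε * ‖z‖ < 1) (N : ℕ) (hmN : q.natDegree ≤ N) :
    Multiset.card ((reflect N q).roots.filter fun z => ‖z‖ ≤ ε) ≤ N - q.natDegree := by
  classical
  set m := q.natDegree with hm
  have hsplit : reflect N q = reflect m q * X ^ (N - m) := by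
    have h1 : reflect (m + (N - m)) (q * 1) = reflect m q * reflect (N - m) 1 :=
      reflect_mul q 1 le_rfl (by simp)
    rw [mul_one, reflect_one] at h1
    rw [← h1]
    congr 1
    omega
  have hrev0 : reflect m q ≠ 0 := fun h => hq (reflect_eq_zero_iff.mp h)
  have hXpow0 : (X : Polynomial ℂ) ^ (N - m) ≠ 0 := pow_ne_zero _ X_ne_zero
  have hroots : (reflect N q).roots
      = (reflect m q).roots + ((X : Polynomial ℂ) ^ (N - m)).roots := by
    rw [hsplit, roots_mul (mul_ne_zero hrev0 hXpow0)]
  have hnone : ∀ w ∈ (reflect m q).roots, ¬ (‖w‖ ≤ ε) := by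
    intro w hw
    have hwroot : (reflect m q).IsRoot w := (mem_roots hrev0).mp hw
    have hw0 : w ≠ 0 := by
      intro h0
      rw [h0] at hwroot
      have h1 : (reflect m q).coeff 0 = q.leadingCoeff := coeff_zero_reverse q
      have h2 : (reflect m q).coeff 0 = 0 := by
        rw [Polynomial.coeff_zero_eq_eval_zero]
        exact hwroot
      exact leadingCoeff_ne_zero.mpr hq (h1 ▸ h2)
    have hinv0 : w⁻¹ ≠ 0 := inv_ne_zero hw0
    letI : Invertible (w⁻¹) := invertibleOfNonzero hinv0
    have hiff := eval₂_reflect_eq_zero_iff (RingHom.id ℂ) (w⁻¹) m q le_rfl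
    have hinvOf : (⅟ (w⁻¹) : ℂ) = w := by
      rw [invOf_eq_inv, inv_inv]
    have heval : eval₂ (RingHom.id ℂ) (⅟ (w⁻¹) : ℂ) (reflect m q) = 0 := by
      rw [hinvOf]
      exact hwroot
    have hqroot : q.IsRoot w⁻¹ := by
      have := hiff.mp heval
      exact this
    have hb := hεroots _ hqroot
    rw [norm_inv] at hb
    have hwpos : 0 < ‖w‖ := norm_pos_iff.mpr hw0
    intro hle
    have h2 : ε * ‖w‖⁻¹ * ‖w‖ < 1 * ‖w‖ := mul_lt_mul_of_pos_right hb hwpos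
    rw [mul_assoc, inv_mul_cancel₀ (ne_of_gt hwpos), mul_one, one_mul] at h2
    linarith
  rw [hroots, Multiset.filter_add]
  rw [Multiset.filter_eq_nil.mpr hnone]
  simp only [Multiset.card_add, Multiset.card_zero, zero_add]
  calc Multiset.card (Multiset.filter (fun z => ‖z‖ ≤ ε) ((X : Polynomial ℂ) ^ (N - m)).roots)
      ≤ Multiset.card (((X : Polynomial ℂ) ^ (N - m)).roots) :=
        Multiset.card_le_card (Multiset.filter_le _ _)
    _ = N - m := by rw [roots_pow, roots_X]; simp

lemma natDegree_reflect_le {f : Polynomial ℂ} {N : ℕ} (hf : f.natDegree ≤ N) :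
    (reflect N f).natDegree ≤ N := by
  apply natDegree_le_iff_coeff_eq_zero.mpr
  intro i hi
  rw [coeff_reflect, revAt_eq_self_of_lt hi]
  exact coeff_eq_zero_of_natDegree_lt (lt_of_le_of_lt hf hi)

/-- For q ≠ 0 and ε > 0 with ε < (max_j |ζ_j|)⁻¹ over the distinct roots ζ_j of q
(a condition expressed as ε·|ζ| < 1 for every root ζ of q, which is automatic in the
cases where the bound is interpreted as ∞), every polynomial p of degree at most n with
coefficients δ-close to those of q has exactly deg p − deg q roots (with multiplicity)
of modulus greater than 1/ε. -/

theorem roots_escaping_to_infinity_exact (n : ℕ) (q : Polynomial ℂ) (hq : q ≠ 0)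
    (hqn : q.natDegree ≤ n) (ε : ℝ) (hε : 0 < ε)
    (hεroots : ∀ z : ℂ, q.IsRoot z → ε * ‖z‖ < 1) :
    ∃ δ > 0, ∀ p : Polynomial ℂ, p.natDegree ≤ n →
      (∀ i ≤ n, ‖p.coeff i - q.coeff i‖ < δ) →
      (p.roots.filter (fun z => 1 / ε < ‖z‖)).card = p.natDegree - q.natDegree := by
  classical
  set m := q.natDegree with hm
  have hRpos : 0 < 1 / ε := by positivity
  obtain ⟨δ₁, hδ₁, hsmall⟩ := core_disk_lemma n m hqn (1 / ε) (le_of_lt hRpos) q hq hqn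
    (le_trans (Multiset.card_le_card (Multiset.filter_le _ _)) (card_roots' q))
  have hDex : ∀ N : ℕ, ∃ d : ℝ, 0 < d ∧ (m ≤ N → N ≤ n →
      ∀ P : Polynomial ℂ, P.natDegree ≤ N →
      (∀ i ≤ N, ‖P.coeff i - (reflect N q).coeff i‖ < d) →
      Multiset.card (P.roots.filter fun z => ‖z‖ ≤ ε) ≤ N - m) := by
    intro N
    by_cases h : m ≤ N ∧ N ≤ n
    · obtain ⟨d, hd, hP⟩ := core_disk_lemma N (N - m) (by omega) ε (le_of_lt hε)
        (reflect N q) (fun h0 => hq (reflect_eq_zero_iff.mp h0))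
        (natDegree_reflect_le (by omega))
        (count_roots_reflect_le hq hε hεroots N h.1)
      exact ⟨d, hd, fun _ _ => hP⟩
    · exact ⟨1, one_pos, fun h1 h2 => absurd ⟨h1, h2⟩ h⟩
  choose D hDpos hD using hDex
  have hcm : q.coeff m ≠ 0 := leadingCoeff_ne_zero.mpr hq
  set δ := min (min δ₁ ‖q.coeff m‖) ((Finset.range (n + 1)).inf' ⟨0, by simp⟩ D) with hδ
  have hδpos : 0 < δ := by
    apply lt_min (lt_min hδ₁ (norm_pos_iff.mpr hcm))
    refine (Finset.lt_inf'_iff _).mpr ?_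
    intro N _
    exact hDpos N
  have hδle1 : δ ≤ δ₁ := le_trans (min_le_left _ _) (min_le_left _ _)
  have hδlec : δ ≤ ‖q.coeff m‖ := le_trans (min_le_left _ _) (min_le_right _ _)
  have hδleD : ∀ N, N ≤ n → δ ≤ D N := by
    intro N hN
    exact le_trans (min_le_right _ _) (Finset.inf'_le D (Finset.mem_range.mpr (by omega)))
  refine ⟨δ, hδpos, ?_⟩
  intro p hpn hclose
  have hpm : p.coeff m ≠ 0 := by
    intro h0
    have h1 := hclose m (le_trans le_rfl hqn)
    rw [h0, zero_sub, norm_neg] at h1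
    linarith
  have hp0 : p ≠ 0 := fun h => hpm (by simp [h])
  set N := p.natDegree with hN
  have hmN : m ≤ N := le_natDegree_of_ne_zero hpm
  have hNn : N ≤ n := hpn
  have htotal : Multiset.card p.roots = N :=
    splits_iff_card_roots.mp (IsAlgClosed.splits p)
  have hsmall' : Multiset.card (p.roots.filter fun z => ‖z‖ ≤ 1 / ε) ≤ m :=
    hsmall p hpn (fun i hi => lt_of_lt_of_le (hclose i hi) hδle1)
  set T := p.roots.filter (fun z => 1 / ε < ‖z‖) with hT
  set A := Multiset.card T with hA
  have hsum : A + Multiset.card (p.roots.filter fun z => ‖z‖ ≤ 1 / ε) = N := by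
    have h1 : T + (p.roots.filter fun z => ¬ (1 / ε < ‖z‖)) = p.roots :=
      Multiset.filter_add_not _ _
    have h2 : (p.roots.filter fun z => ¬ (1 / ε < ‖z‖))
        = (p.roots.filter fun z => ‖z‖ ≤ 1 / ε) :=
      Multiset.filter_congr (fun z _ => not_lt)
    rw [h2] at h1
    have h3 := congrArg Multiset.card h1
    rw [Multiset.card_add] at h3
    rw [hA, h3, htotal]
  have hAup : A ≤ N - m := by
    have hT0 : ∀ a ∈ T, a ≠ 0 := by
      intro a ha h0
      have h1 := (Multiset.mem_filter.mp ha).2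
      rw [h0] at h1
      simp at h1
      linarith
    have hTsub : T ≤ p.roots := Multiset.filter_le _ _
    have hdvd : (T.map fun a => X - C a).prod ∣ p :=
      dvd_trans (Multiset.prod_dvd_prod_of_le (Multiset.map_le_map hTsub))
        (prod_multiset_X_sub_C_dvd p)
    obtain ⟨u, hu⟩ := hdvd
    set g := (T.map fun a => X - C a).prod with hg
    have hg0 : g ≠ 0 := by
      apply Multiset.prod_ne_zero
      intro h0
      obtain ⟨a, _, ha⟩ := Multiset.mem_map.mp h0
      exact X_sub_C_ne_zero a ha
    have hu0 : u ≠ 0 := by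
      intro h0
      rw [h0, mul_zero] at hu
      exact hp0 hu
    have hgdeg : g.natDegree = A := natDegree_multiset_prod_X_sub_C_eq_card T
    have hNsum : N = A + u.natDegree := by
      rw [hN, hu, natDegree_mul hg0 hu0, hgdeg]
    have hudeg : u.natDegree = N - A := by omega
    have hrefl : reflect N p = reflect A g * reflect (N - A) u := by
      have h3 := reflect_mul g u (le_of_eq hgdeg) (le_of_eq hudeg)
      rw [← hu] at h3
      rw [← h3]
      congr 1
      omega
    have hgrefl : reflect A g = (T.map fun a => 1 - C a * X).prod := by
      rw [hg, ← hgdeg, hg, natDegree_multiset_prod_X_sub_C_eq_card T]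
      exact reflect_prod_X_sub_C T
    have hfact : (T.map fun a => 1 - C a * X).prod
        = (T.map fun a => C (-a)).prod * (T.map fun a => X - C a⁻¹).prod := by
      rw [← Multiset.prod_map_mul]
      apply congrArg
      apply Multiset.map_congr rfl
      intro a ha
      have h0 := hT0 a ha
      have hCC : C a * C a⁻¹ = (1 : Polynomial ℂ) := by
        rw [← C_mul, mul_inv_cancel₀ h0, C_1]
      calc (1 : Polynomial ℂ) - C a * X = C a * C a⁻¹ - C a * X := by rw [hCC]
        _ = C (-a) * (X - C a⁻¹) := by simp only [map_neg]; ring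
    have hhdvd : (T.map fun a => X - C a⁻¹).prod ∣ reflect N p := by
      refine ⟨(T.map fun a => C (-a)).prod * reflect (N - A) u, ?_⟩
      rw [hrefl, hgrefl, hfact]
      ring
    have hreflp0 : reflect N p ≠ 0 := fun h => hp0 (reflect_eq_zero_iff.mp h)
    have hhroots : ((T.map fun a => X - C a⁻¹).prod).roots = T.map (fun a => a⁻¹) := by
      have hmm : (T.map fun a => X - C a⁻¹)
          = ((T.map fun a => a⁻¹).map fun b => X - C b) := by
        rw [Multiset.map_map]
        rfl
      rw [hmm]
      exact roots_multiset_prod_X_sub_C _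
    have hcl2 : ∀ i ≤ N, ‖(reflect N p).coeff i - (reflect N q).coeff i‖ < D N := by
      intro i hi
      rw [coeff_reflect, coeff_reflect, revAt_le hi]
      exact lt_of_lt_of_le (hclose _ (by omega)) (hδleD N hNn)
    have hP := hD N hmN hNn (reflect N p) (natDegree_reflect_le le_rfl) hcl2
    have hle2 : (T.map fun a => a⁻¹) ≤ (reflect N p).roots := by
      rw [← hhroots]
      exact roots.le_of_dvd hreflp0 hhdvd
    have hallε : ∀ w ∈ T.map (fun a => a⁻¹), ‖w‖ ≤ ε := by
      intro w hw
      obtain ⟨a, ha, rfl⟩ := Multiset.mem_map.mp hw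
      have h1 : 1 / ε < ‖a‖ := (Multiset.mem_filter.mp ha).2
      rw [norm_inv]
      have h2 : ‖a‖⁻¹ ≤ (1 / ε)⁻¹ := by
        gcongr
      simpa using h2
    have hfin : A ≤ Multiset.card ((reflect N p).roots.filter fun z => ‖z‖ ≤ ε) := by
      calc A = Multiset.card (T.map fun a => a⁻¹) := by rw [Multiset.card_map]
        _ = Multiset.card ((T.map fun a => a⁻¹).filter fun z => ‖z‖ ≤ ε) := by
            rw [Multiset.filter_eq_self.mpr hallε]
        _ ≤ _ := Multiset.card_le_card (Multiset.filter_le_filter _ hle2)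
    exact le_trans hfin hP
  omega
end

section
/- Let f(z) = Σ_{i=0}^n a_i z^{n−i} and g(z) = Σ_{i=0}^n b_i z^{n−i} be complex polynomials with b_0 ≠ 0, and suppose |a_0 − b_0| ≤ |b_0|/2 and max_{0≤i≤n} |a_i − b_i| ≤ Σ_{i=0}^n |b_i/b_0|. Let β_1,…,β_n be all roots of g counted with multiplicity. If f(α) = 0 for some α ∈ ℂ, then min_{1≤i≤n} |α − β_i| ≤ C^{1/n} (max_{0≤i≤n} |a_i − b_i|)^{1/n}, where D = [1 + Σ_{i=0}^n (2/|b_0|^2)(|b_0| + |b_i|)] Σ_{i=0}^n |b_i/b_0| and C = Σ_{i=1}^n (2/|b_0|^2)(|b_0| + |b_i|) D^{n−i}. -/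
open Finset Polynomial

set_option maxHeartbeats 1000000 in
/-- Quantitative perturbation bound: under the stated hypotheses on the coefficients
a_i of f and b_i of g (indexed with a_0, b_0 the leading coefficients), every root α of
f is within C^{1/n} (max_i |a_i − b_i|)^{1/n} of some root β_k of g. -/
theorem quantitative_root_perturbation (n : ℕ) (hn : 1 ≤ n) (a b : ℕ → ℂ)
    (f g : Polynomial ℂ)
    (hf : f = ∑ i ∈ Finset.range (n + 1), Polynomial.C (a i) * X ^ (n - i))
    (hg : g = ∑ i ∈ Finset.range (n + 1), Polynomial.C (b i) * X ^ (n - i))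
    (hb0 : b 0 ≠ 0)
    (M : ℝ)
    (hM : M = (Finset.range (n + 1)).sup'
      (Finset.nonempty_range_iff.mpr (Nat.succ_ne_zero n)) (fun i => ‖a i - b i‖))
    (h1 : ‖a 0 - b 0‖ ≤ ‖b 0‖ / 2)
    (h2 : M ≤ ∑ i ∈ Finset.range (n + 1), ‖b i / b 0‖)
    (β : Fin n → ℂ)
    (hroots : g = Polynomial.C (b 0) * ∏ k : Fin n, (X - Polynomial.C (β k)))
    (D Cc : ℝ)
    (hD : D = (1 + ∑ i ∈ Finset.range (n + 1), 2 / ‖b 0‖ ^ 2 * (‖b 0‖ + ‖b i‖)) *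
      ∑ i ∈ Finset.range (n + 1), ‖b i / b 0‖)
    (hC : Cc = ∑ i ∈ Finset.Icc 1 n, 2 / ‖b 0‖ ^ 2 * (‖b 0‖ + ‖b i‖) * D ^ (n - i))
    (α : ℂ) (hα : f.eval α = 0) :
    ∃ k : Fin n, ‖α - β k‖ ≤ Cc ^ ((n : ℝ)⁻¹) * M ^ ((n : ℝ)⁻¹) := by
  have hA : (0:ℝ) < ‖b 0‖ := norm_pos_iff.mpr hb0
  have h0mem : (0:ℕ) ∈ Finset.range (n+1) := Finset.mem_range.mpr (Nat.succ_pos n)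
  have hMle : ∀ i ∈ Finset.range (n+1), ‖a i - b i‖ ≤ M := by
    intro i hi; rw [hM]; exact Finset.le_sup' (fun i => ‖a i - b i‖) hi
  have hM0 : (0:ℝ) ≤ M := le_trans (norm_nonneg _) (hMle 0 h0mem)
  have hS1 : (1:ℝ) ≤ ∑ i ∈ Finset.range (n+1), ‖b i / b 0‖ := by
    have h00 : ‖b 0 / b 0‖ = 1 := by rw [div_self hb0, norm_one]
    calc (1:ℝ) = ‖b 0 / b 0‖ := h00.symm
      _ ≤ _ := Finset.single_le_sum (f := fun i => ‖b i / b 0‖)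
        (fun i _ => norm_nonneg _) h0mem
  have ha0 : ‖b 0‖ / 2 ≤ ‖a 0‖ := by
    have h := norm_sub_norm_le (b 0) (a 0)
    rw [norm_sub_rev] at h
    linarith
  have ha0' : (0:ℝ) < ‖a 0‖ := lt_of_lt_of_le (by linarith) ha0
  have ha0ne : a 0 ≠ 0 := by simpa using ha0'.ne'
  have key : ∀ i ∈ Finset.range (n+1),
      ‖b i - b 0 / a 0 * a i‖ ≤ 2 * M / ‖b 0‖ * (‖b 0‖ + ‖b i‖) := by
    intro i hi
    have e : b i - b 0 / a 0 * a i = (b i * (a 0 - b 0) - b 0 * (a i - b i)) / a 0 := by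
      field_simp; ring
    rw [e, norm_div]
    have hnum : ‖b i * (a 0 - b 0) - b 0 * (a i - b i)‖ ≤ ‖b i‖ * M + ‖b 0‖ * M := by
      calc ‖b i * (a 0 - b 0) - b 0 * (a i - b i)‖
          ≤ ‖b i * (a 0 - b 0)‖ + ‖b 0 * (a i - b i)‖ := norm_sub_le _ _
        _ = ‖b i‖ * ‖a 0 - b 0‖ + ‖b 0‖ * ‖a i - b i‖ := by rw [norm_mul, norm_mul]
        _ ≤ ‖b i‖ * M + ‖b 0‖ * M := by
            gcongr
            · exact hMle 0 h0mem
            · exact hMle i hi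
    calc ‖b i * (a 0 - b 0) - b 0 * (a i - b i)‖ / ‖a 0‖
        ≤ (‖b i‖ * M + ‖b 0‖ * M) / (‖b 0‖ / 2) := by
          apply div_le_div₀ (by positivity) hnum (by positivity) ha0
      _ = 2 * M / ‖b 0‖ * (‖b 0‖ + ‖b i‖) := by field_simp; ring
  have key2 : ∀ i ∈ Finset.range (n+1),
      ‖a i / a 0‖ ≤ ‖b i / b 0‖ + M * (2 / ‖b 0‖ ^ 2 * (‖b 0‖ + ‖b i‖)) := by
    intro i hi
    have e : a i / a 0 = b i / b 0 - (b i - b 0 / a 0 * a i) / b 0 := by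
      field_simp; ring
    rw [e]
    calc ‖b i / b 0 - (b i - b 0 / a 0 * a i) / b 0‖
        ≤ ‖b i / b 0‖ + ‖(b i - b 0 / a 0 * a i) / b 0‖ := norm_sub_le _ _
      _ ≤ ‖b i / b 0‖ + (2 * M / ‖b 0‖ * (‖b 0‖ + ‖b i‖)) / ‖b 0‖ := by
          have h' : ‖(b i - b 0 / a 0 * a i) / b 0‖ = ‖b i - b 0 / a 0 * a i‖ / ‖b 0‖ :=
            norm_div _ _
          rw [h']
          gcongr
          exact key i hi
      _ = ‖b i / b 0‖ + M * (2 / ‖b 0‖ ^ 2 * (‖b 0‖ + ‖b i‖)) := by field_simp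
  have hsplit : Finset.range (n+1) = insert 0 (Finset.Icc 1 n) := by
    ext i; simp [Finset.mem_range, Finset.mem_Icc, Nat.lt_succ_iff]; omega
  have h0notin : (0:ℕ) ∉ Finset.Icc 1 n := by simp
  have hIccsub : Finset.Icc 1 n ⊆ Finset.range (n+1) := by
    rw [hsplit]; exact Finset.subset_insert _ _
  have hfe : ∑ i ∈ Finset.range (n+1), a i * α ^ (n - i) = 0 := by
    rw [hf] at hα
    simpa [Polynomial.eval_finset_sum] using hα
  have hge : g.eval α = ∑ i ∈ Finset.range (n+1), b i * α ^ (n - i) := by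
    rw [hg]; simp [Polynomial.eval_finset_sum]
  have hge2 : g.eval α = ∑ i ∈ Finset.Icc 1 n, (b i - b 0 / a 0 * a i) * α ^ (n - i) := by
    have e1 : g.eval α = ∑ i ∈ Finset.range (n+1), (b i - b 0 / a 0 * a i) * α ^ (n - i) := by
      have e2 : ∑ i ∈ Finset.range (n+1), (b i - b 0 / a 0 * a i) * α ^ (n - i)
          = (∑ i ∈ Finset.range (n+1), b i * α ^ (n - i))
            - b 0 / a 0 * ∑ i ∈ Finset.range (n+1), a i * α ^ (n - i) := by
        rw [Finset.mul_sum, ← Finset.sum_sub_distrib]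
        apply Finset.sum_congr rfl; intro i _; ring
      rw [e2, hfe, mul_zero, sub_zero, hge]
    rw [e1, hsplit, Finset.sum_insert h0notin]
    have e3 : b 0 - b 0 / a 0 * a 0 = 0 := by field_simp; ring
    rw [e3, zero_mul, zero_add]
  -- abbreviations as facts
  have hT0 : (0:ℝ) ≤ ∑ i ∈ Finset.range (n+1), 2 / ‖b 0‖ ^ 2 * (‖b 0‖ + ‖b i‖) := by
    apply Finset.sum_nonneg; intro i _; positivity
  have hSD : (∑ i ∈ Finset.range (n+1), ‖b i / b 0‖) ≤ D := by
    rw [hD]; nlinarith [hS1, hT0]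
  have hD1 : (1:ℝ) ≤ D := le_trans hS1 hSD
  have hD0 : (0:ℝ) ≤ D := le_trans zero_le_one hD1
  have hαD : ‖α‖ ≤ D := by
    rcases le_or_gt ‖α‖ 1 with hle | hlt
    · exact le_trans hle hD1
    · have hsplit' : a 0 * α ^ n + ∑ i ∈ Finset.Icc 1 n, a i * α ^ (n - i) = 0 := by
        rw [← hfe, hsplit, Finset.sum_insert h0notin]
        norm_num
      have hbnd : ‖a 0‖ * ‖α‖ ^ n ≤ ∑ i ∈ Finset.Icc 1 n, ‖a i‖ * ‖α‖ ^ (n - i) := by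
        have e4 : a 0 * α ^ n = -∑ i ∈ Finset.Icc 1 n, a i * α ^ (n - i) := by
          linear_combination hsplit'
        calc ‖a 0‖ * ‖α‖ ^ n = ‖a 0 * α ^ n‖ := by rw [norm_mul, norm_pow]
          _ = ‖∑ i ∈ Finset.Icc 1 n, a i * α ^ (n - i)‖ := by rw [e4, norm_neg]
          _ ≤ ∑ i ∈ Finset.Icc 1 n, ‖a i * α ^ (n - i)‖ := norm_sum_le _ _
          _ = ∑ i ∈ Finset.Icc 1 n, ‖a i‖ * ‖α‖ ^ (n - i) := by
              apply Finset.sum_congr rfl; intro i _; rw [norm_mul, norm_pow]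
      have hstep : ‖a 0‖ * ‖α‖ ≤ ∑ i ∈ Finset.Icc 1 n, ‖a i‖ := by
        have hpow : ∀ i ∈ Finset.Icc 1 n, ‖a i‖ * ‖α‖ ^ (n - i) ≤ ‖a i‖ * ‖α‖ ^ (n - 1) := by
          intro i hi
          have hle' : n - i ≤ n - 1 := by
            simp only [Finset.mem_Icc] at hi; omega
          exact mul_le_mul_of_nonneg_left (pow_le_pow_right₀ hlt.le hle') (norm_nonneg _)
        have h1' : ‖a 0‖ * ‖α‖ ^ n ≤ (∑ i ∈ Finset.Icc 1 n, ‖a i‖) * ‖α‖ ^ (n - 1) := by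
          rw [Finset.sum_mul]
          exact le_trans hbnd (Finset.sum_le_sum hpow)
        have hx : ‖α‖ ^ n = ‖α‖ * ‖α‖ ^ (n - 1) := by
          rw [← pow_succ']
          congr 1; omega
        have hpos : (0:ℝ) < ‖α‖ ^ (n - 1) := pow_pos (by linarith) _
        rw [hx, ← mul_assoc] at h1'
        exact le_of_mul_le_mul_right h1' hpos
      have hdiv : ‖α‖ ≤ ∑ i ∈ Finset.Icc 1 n, ‖a i / a 0‖ := by
        have e5 : ∑ i ∈ Finset.Icc 1 n, ‖a i / a 0‖
            = (∑ i ∈ Finset.Icc 1 n, ‖a i‖) / ‖a 0‖ := by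
          rw [Finset.sum_div]
          apply Finset.sum_congr rfl; intro i _; rw [norm_div]
        rw [e5, le_div_iff₀ ha0']
        linarith [hstep]
      have hSsplit : ∑ i ∈ Finset.range (n+1), ‖b i / b 0‖
          = 1 + ∑ i ∈ Finset.Icc 1 n, ‖b i / b 0‖ := by
        rw [hsplit, Finset.sum_insert h0notin, div_self hb0, norm_one]
      have hcsub : ∑ i ∈ Finset.Icc 1 n, 2 / ‖b 0‖ ^ 2 * (‖b 0‖ + ‖b i‖)
          ≤ ∑ i ∈ Finset.range (n+1), 2 / ‖b 0‖ ^ 2 * (‖b 0‖ + ‖b i‖) := by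
        apply Finset.sum_le_sum_of_subset_of_nonneg hIccsub
        intro i _ _; positivity
      have hQ0 : (0:ℝ) ≤ ∑ i ∈ Finset.Icc 1 n, 2 / ‖b 0‖ ^ 2 * (‖b 0‖ + ‖b i‖) := by
        apply Finset.sum_nonneg; intro i _; positivity
      calc ‖α‖ ≤ ∑ i ∈ Finset.Icc 1 n, ‖a i / a 0‖ := hdiv
        _ ≤ ∑ i ∈ Finset.Icc 1 n, (‖b i / b 0‖ + M * (2 / ‖b 0‖ ^ 2 * (‖b 0‖ + ‖b i‖))) :=
            Finset.sum_le_sum (fun i hi => key2 i (hIccsub hi))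
        _ = (∑ i ∈ Finset.Icc 1 n, ‖b i / b 0‖)
            + M * ∑ i ∈ Finset.Icc 1 n, 2 / ‖b 0‖ ^ 2 * (‖b 0‖ + ‖b i‖) := by
            rw [Finset.sum_add_distrib, Finset.mul_sum]
        _ ≤ D := by
            rw [hD]
            nlinarith [hS1, hT0, hQ0, hcsub, h2, hM0, hSsplit,
              mul_le_mul_of_nonneg_right h2 hQ0,
              mul_le_mul_of_nonneg_left hcsub (le_trans zero_le_one hS1)]
  have hC0 : (0:ℝ) ≤ Cc := by
    rw [hC]
    apply Finset.sum_nonneg; intro i _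
    exact mul_nonneg (by positivity) (pow_nonneg hD0 _)
  have hgb : ‖g.eval α‖ ≤ ‖b 0‖ * (Cc * M) := by
    rw [hge2]
    calc ‖∑ i ∈ Finset.Icc 1 n, (b i - b 0 / a 0 * a i) * α ^ (n - i)‖
        ≤ ∑ i ∈ Finset.Icc 1 n, ‖(b i - b 0 / a 0 * a i) * α ^ (n - i)‖ := norm_sum_le _ _
      _ = ∑ i ∈ Finset.Icc 1 n, ‖b i - b 0 / a 0 * a i‖ * ‖α‖ ^ (n - i) := by
          apply Finset.sum_congr rfl; intro i _; rw [norm_mul, norm_pow]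
      _ ≤ ∑ i ∈ Finset.Icc 1 n, (2 * M / ‖b 0‖ * (‖b 0‖ + ‖b i‖)) * D ^ (n - i) := by
          apply Finset.sum_le_sum; intro i hi
          exact mul_le_mul (key i (hIccsub hi)) (pow_le_pow_left₀ (norm_nonneg α) hαD _)
            (by positivity) (by positivity)
      _ = ‖b 0‖ * (Cc * M) := by
          rw [hC, Finset.sum_mul, Finset.mul_sum]
          apply Finset.sum_congr rfl; intro i _
          have hAne : ‖b 0‖ ≠ 0 := hA.ne'
          generalize ‖b 0‖ = A at hAne ⊢
          field_simp
  have hprodeq : ‖g.eval α‖ = ‖b 0‖ * ∏ k : Fin n, ‖α - β k‖ := by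
    rw [hroots, Polynomial.eval_mul, Polynomial.eval_C, Polynomial.eval_prod, norm_mul,
      norm_prod]
    simp
  have hprod : ∏ k : Fin n, ‖α - β k‖ ≤ Cc * M := by
    rw [hprodeq] at hgb
    exact le_of_mul_le_mul_left hgb hA
  have hfinne : Nonempty (Fin n) := ⟨⟨0, hn⟩⟩
  obtain ⟨k, -, hk⟩ := Finset.exists_min_image Finset.univ (fun j => ‖α - β j‖) Finset.univ_nonempty
  refine ⟨k, ?_⟩
  have hm0 : (0:ℝ) ≤ ‖α - β k‖ := norm_nonneg _
  have hpow : ‖α - β k‖ ^ n ≤ Cc * M := by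
    calc ‖α - β k‖ ^ n = ∏ _j : Fin n, ‖α - β k‖ := by
          rw [Finset.prod_const, Finset.card_univ, Fintype.card_fin]
      _ ≤ ∏ j : Fin n, ‖α - β j‖ :=
          Finset.prod_le_prod (fun _ _ => hm0) (fun j hj => hk j hj)
      _ ≤ Cc * M := hprod
  have hnR : (0:ℝ) < (n:ℝ) := by exact_mod_cast Nat.pos_of_ne_zero (by omega)
  calc ‖α - β k‖ = (‖α - β k‖ ^ n) ^ ((n:ℝ)⁻¹) := by
        rw [← Real.rpow_natCast ‖α - β k‖ n, ← Real.rpow_mul hm0,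
          mul_inv_cancel₀ (ne_of_gt hnR), Real.rpow_one]
    _ ≤ (Cc * M) ^ ((n:ℝ)⁻¹) := Real.rpow_le_rpow (pow_nonneg hm0 n) hpow (by positivity)
    _ = Cc ^ ((n:ℝ)⁻¹) * M ^ ((n:ℝ)⁻¹) := Real.mul_rpow hC0 hM0
end

section
/- Under the hypotheses |a_0 − b_0| ≤ |b_0|/2 and max_{0≤i≤n}|a_i − b_i| ≤ Σ_{i=0}^n |b_i/b_0|, where f(z) = Σ a_i z^{n−i}, g(z) = Σ b_i z^{n−i}, and b_0 ≠ 0, every root α of f satisfies |α| ≤ D, where D = [1 + Σ_{i=0}^n (2/|b_0|^2)(|b_0| + |b_i|)] Σ_{i=0}^n |b_i/b_0|. -/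
open Finset Polynomial

lemma aux_ineq (N A B S Sb : ℝ) (hN : 1 ≤ N) (hB : 0 < B) (hS1 : 1 ≤ S)
    (hSb : 0 ≤ Sb) (hBS : B * S = B + Sb) (hA1 : B / 2 ≤ A) (hA2 : B - S ≤ A) :
    (Sb + N * S) / A ≤ (1 + 2 / B ^ 2 * ((N + 1) * B + (Sb + B))) * S := by
  have hA : 0 < A := by linarith
  have hB2 : (0:ℝ) < B ^ 2 := by positivity
  set T : ℝ := (N + 1) * B + (Sb + B) with hT
  have hT0 : 0 ≤ T := by positivity
  rw [div_le_iff₀ hA]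
  have hkey : (1 + 2 / B ^ 2 * T) * S * B ^ 2 = (B ^ 2 + 2 * T) * S := by
    field_simp
  have hTS0 : 0 ≤ (B ^ 2 + 2 * T) * S := by positivity
  have main : (Sb + N * S) * B ^ 2 ≤ A * ((B ^ 2 + 2 * T) * S) := by
    rcases le_or_gt B (2 * S) with hc | hc
    · have step : (B / 2) * ((B ^ 2 + 2 * T) * S) ≤ A * ((B ^ 2 + 2 * T) * S) :=
        mul_le_mul_of_nonneg_right hA1 hTS0
      have hSb' : Sb = B * S - B := by linarith
      nlinarith [mul_nonneg (mul_nonneg (sub_nonneg.mpr hc) (by linarith : (0:ℝ) ≤ S)) (sq_nonneg B),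
        mul_pos hB hB, sq_nonneg B]
    · have step : (B - S) * ((B ^ 2 + 2 * T) * S) ≤ A * ((B ^ 2 + 2 * T) * S) :=
        mul_le_mul_of_nonneg_right hA2 hTS0
      have hc' : (0:ℝ) ≤ B - 2 * S := by linarith
      have hSb' : Sb = B * S - B := by linarith
      nlinarith [mul_nonneg (mul_nonneg (mul_nonneg hc' (by linarith : (0:ℝ) ≤ N + 1)) (by linarith : (0:ℝ) ≤ S)) hB.le,
        mul_nonneg (mul_nonneg hc' (sq_nonneg S)) hB.le,
        sq_nonneg B, hB.le, mul_nonneg (mul_nonneg hc' (by linarith : (0:ℝ) ≤ S)) hB.le]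
  calc Sb + N * S = (Sb + N * S) * B ^ 2 / B ^ 2 := by field_simp
    _ ≤ A * ((B ^ 2 + 2 * T) * S) / B ^ 2 := by gcongr
    _ = (1 + 2 / B ^ 2 * T) * S * A := by rw [← hkey]; field_simp

/-- Intermediate root bound: under the perturbation hypotheses, every root α of f
satisfies |α| ≤ D. -/
theorem perturbed_root_bound (n : ℕ) (hn : 1 ≤ n) (a b : ℕ → ℂ)
    (f g : Polynomial ℂ)
    (hf : f = ∑ i ∈ Finset.range (n + 1), Polynomial.C (a i) * X ^ (n - i))
    (hg : g = ∑ i ∈ Finset.range (n + 1), Polynomial.C (b i) * X ^ (n - i))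
    (hb0 : b 0 ≠ 0)
    (h1 : ‖a 0 - b 0‖ ≤ ‖b 0‖ / 2)
    (h2 : (Finset.range (n + 1)).sup'
        (Finset.nonempty_range_iff.mpr (Nat.succ_ne_zero n)) (fun i => ‖a i - b i‖) ≤
      ∑ i ∈ Finset.range (n + 1), ‖b i / b 0‖)
    (D : ℝ)
    (hD : D = (1 + ∑ i ∈ Finset.range (n + 1), 2 / ‖b 0‖ ^ 2 * (‖b 0‖ + ‖b i‖)) *
      ∑ i ∈ Finset.range (n + 1), ‖b i / b 0‖)
    (α : ℂ) (hα : f.eval α = 0) :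
    ‖α‖ ≤ D := by
  have hBpos : (0:ℝ) < ‖b 0‖ := norm_pos_iff.mpr hb0
  set B : ℝ := ‖b 0‖ with hBdef
  set S : ℝ := ∑ i ∈ Finset.range (n + 1), ‖b i / b 0‖ with hSdef
  have hS1 : 1 ≤ S := by
    have h0 : ‖b 0 / b 0‖ = 1 := by rw [div_self hb0, norm_one]
    calc (1:ℝ) = ‖b 0 / b 0‖ := h0.symm
      _ ≤ S := Finset.single_le_sum (f := fun i => ‖b i / b 0‖)
          (fun i _ => norm_nonneg _) (by simp)
  set Sb : ℝ := ∑ i ∈ Finset.range n, ‖b (i + 1)‖ with hSbdef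
  have hSbnn : 0 ≤ Sb := Finset.sum_nonneg fun i _ => norm_nonneg _
  have hBS : B * S = B + Sb := by
    rw [hSdef, Finset.mul_sum]
    have hterm : ∀ i, B * ‖b i / b 0‖ = ‖b i‖ := by
      intro i; rw [norm_div, hBdef, mul_comm, div_mul_cancel₀ _ hBpos.ne']
    simp_rw [hterm]
    rw [Finset.sum_range_succ']
    rw [hSbdef, hBdef]; ring
  have h2' : ∀ j ∈ Finset.range (n + 1), ‖a j - b j‖ ≤ S := fun j hj =>
    le_trans (Finset.le_sup' (fun i => ‖a i - b i‖) hj) h2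
  have hai : ∀ j ∈ Finset.range (n + 1), ‖a j‖ ≤ ‖b j‖ + S := by
    intro j hj
    calc ‖a j‖ = ‖b j + (a j - b j)‖ := by ring_nf
      _ ≤ ‖b j‖ + ‖a j - b j‖ := norm_add_le _ _
      _ ≤ ‖b j‖ + S := by linarith [h2' j hj]
  have hA1 : B / 2 ≤ ‖a 0‖ := by
    have := norm_sub_norm_le (b 0) (a 0)
    rw [norm_sub_rev] at this
    linarith
  have hA2 : B - S ≤ ‖a 0‖ := by
    have := norm_sub_norm_le (b 0) (a 0)
    rw [norm_sub_rev] at this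
    have h0 := h2' 0 (Finset.mem_range.mpr (Nat.succ_pos n))
    linarith
  have hApos : 0 < ‖a 0‖ := by linarith
  have hsum : ∑ i ∈ Finset.range (n + 1), 2 / B ^ 2 * (B + ‖b i‖)
      = 2 / B ^ 2 * (((n:ℝ) + 1) * B + (Sb + B)) := by
    rw [← Finset.mul_sum, Finset.sum_add_distrib, Finset.sum_const, Finset.card_range,
      Finset.sum_range_succ', nsmul_eq_mul]
    push_cast
    ring
  have hDT : D = (1 + 2 / B ^ 2 * (((n:ℝ) + 1) * B + (Sb + B))) * S := by
    rw [hD, hsum]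
  have hn0 : (0:ℝ) ≤ (n:ℝ) := Nat.cast_nonneg n
  have hD1 : 1 ≤ D := by
    have hpos : 0 ≤ 2 / B ^ 2 * (((n:ℝ) + 1) * B + (Sb + B)) :=
      mul_nonneg (by positivity) (by nlinarith)
    nlinarith [hDT]
  rcases le_or_gt ‖α‖ 1 with hα1 | hα1
  · linarith
  -- main case
  have heval : ∑ i ∈ Finset.range (n + 1), a i * α ^ (n - i) = 0 := by
    have he : Polynomial.eval α (∑ i ∈ Finset.range (n + 1), Polynomial.C (a i) * X ^ (n - i))
        = ∑ i ∈ Finset.range (n + 1), a i * α ^ (n - i) := by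
      rw [Polynomial.eval_finset_sum]
      refine Finset.sum_congr rfl fun i _ => ?_
      rw [Polynomial.eval_mul, Polynomial.eval_C, Polynomial.eval_pow, Polynomial.eval_X]
    rw [hf, he] at hα
    exact hα
  have hsplit : a 0 * α ^ n = -∑ i ∈ Finset.range n, a (i + 1) * α ^ (n - (i + 1)) := by
    rw [Finset.sum_range_succ'] at heval
    simp only [Nat.sub_zero] at heval
    linear_combination heval
  have hnorm : ‖a 0‖ * ‖α‖ ^ n ≤ (∑ i ∈ Finset.range n, ‖a (i + 1)‖) * ‖α‖ ^ (n - 1) := by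
    calc ‖a 0‖ * ‖α‖ ^ n = ‖a 0 * α ^ n‖ := by rw [norm_mul, norm_pow]
      _ = ‖∑ i ∈ Finset.range n, a (i + 1) * α ^ (n - (i + 1))‖ := by rw [hsplit, norm_neg]
      _ ≤ ∑ i ∈ Finset.range n, ‖a (i + 1) * α ^ (n - (i + 1))‖ := norm_sum_le _ _
      _ ≤ ∑ i ∈ Finset.range n, ‖a (i + 1)‖ * ‖α‖ ^ (n - 1) := by
          apply Finset.sum_le_sum
          intro i hi
          rw [norm_mul, norm_pow]
          exact mul_le_mul_of_nonneg_left
            (pow_le_pow_right₀ hα1.le (by omega)) (norm_nonneg _)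
      _ = (∑ i ∈ Finset.range n, ‖a (i + 1)‖) * ‖α‖ ^ (n - 1) := (Finset.sum_mul _ _ _).symm
  have hαle : ‖α‖ ≤ (∑ i ∈ Finset.range n, ‖a (i + 1)‖) / ‖a 0‖ := by
    have hp : (0:ℝ) < ‖α‖ ^ (n - 1) := pow_pos (by linarith) _
    rw [le_div_iff₀ hApos]
    have hpow : ‖α‖ ^ n = ‖α‖ * ‖α‖ ^ (n - 1) := by
      conv_lhs => rw [show n = (n - 1) + 1 by omega]
      rw [pow_succ]; ring
    have h3 : ‖a 0‖ * ‖α‖ * ‖α‖ ^ (n - 1) ≤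
        (∑ i ∈ Finset.range n, ‖a (i + 1)‖) * ‖α‖ ^ (n - 1) := by
      rw [mul_assoc, ← hpow]; exact hnorm
    have := le_of_mul_le_mul_right h3 hp
    linarith
  have hSa : ∑ i ∈ Finset.range n, ‖a (i + 1)‖ ≤ Sb + (n : ℝ) * S := by
    calc ∑ i ∈ Finset.range n, ‖a (i + 1)‖ ≤ ∑ i ∈ Finset.range n, (‖b (i + 1)‖ + S) := by
          apply Finset.sum_le_sum
          intro i hi
          exact hai (i + 1) (Finset.mem_range.mpr (by simp at hi; omega))
      _ = Sb + (n : ℝ) * S := by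
          rw [Finset.sum_add_distrib, Finset.sum_const, Finset.card_range, nsmul_eq_mul,
            hSbdef]
  have hfinal := aux_ineq (n : ℝ) ‖a 0‖ B S Sb (by exact_mod_cast hn) hBpos hS1 hSbnn hBS hA1 hA2
  rw [hDT]
  calc ‖α‖ ≤ (∑ i ∈ Finset.range n, ‖a (i + 1)‖) / ‖a 0‖ := hαle
    _ ≤ (Sb + (n : ℝ) * S) / ‖a 0‖ := by gcongr
    _ ≤ (1 + 2 / B ^ 2 * (((n:ℝ) + 1) * B + (Sb + B))) * S := hfinal
end

section
/- Let q(z) = Σ_{i=0}^n b_i z^i with q(0) = b_0 ≠ 0, deg q ≥ 1, with roots ζ_1,…,ζ_{deg q} counted with multiplicity, and let p(z) = Σ_{i=0}^n a_i z^i satisfy: |a_0 − b_0| ≤ |b_0|/2, |a_{deg q} − b_{deg q}| < |b_{deg q}|, max_i |a_i − b_i| ≤ Σ_i |b_i/b_0|, and max_i |a_i − b_i| ≤ (1/C)(2 max_k |ζ_k|)^{−n}, where C is the explicit constant from the perturbation bound applied to the degree-n reversed polynomials. Then every root λ of p satisfies either |λ|^{−1} ≤ C^{1/n} (max_i |a_i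 − b_i|)^{1/n}, or min_{k} |λ − ζ_k| ≤ 2 (max_k |ζ_k|)^2 C^{1/n} (max_i |a_i − b_i|)^{1/n}. -/
set_option maxHeartbeats 1000000


open Finset Polynomial

/-- Quantitative root continuity for nonmonic polynomials: under the stated closeness
hypotheses on the coefficients, every root λ of p either has |λ|⁻¹ ≤ C^{1/n} M^{1/n}
or is within 2 (max_k |ζ_k|)² C^{1/n} M^{1/n} of some root ζ_k of q, where
M = max_i |a_i − b_i|. -/
theorem quantitative_ostrowski_like (n N : ℕ) (hN : 0 < N)
    (q p : Polynomial ℂ) (hq0 : q.coeff 0 ≠ 0) (hqN : q.natDegree = N)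
    (hqn : q.natDegree ≤ n) (hpn : p.natDegree ≤ n)
    (ζ : Fin N → ℂ)
    (hfac : q = Polynomial.C q.leadingCoeff * ∏ k : Fin N, (X - Polynomial.C (ζ k)))
    (Mroot : ℝ)
    (hMroot : Mroot = Finset.univ.sup' (Finset.univ_nonempty_iff.mpr ⟨⟨0, hN⟩⟩)
      (fun k => ‖ζ k‖))
    (Mc : ℝ)
    (hMc : Mc = (Finset.range (n + 1)).sup'
      (Finset.nonempty_range_iff.mpr (Nat.succ_ne_zero n))
      (fun i => ‖p.coeff i - q.coeff i‖))
    (D Cc : ℝ)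
    (hD : D = (1 + ∑ i ∈ Finset.range (n + 1),
        2 / ‖q.coeff 0‖ ^ 2 * (‖q.coeff 0‖ + ‖q.coeff i‖)) *
      ∑ i ∈ Finset.range (n + 1), ‖q.coeff i / q.coeff 0‖)
    (hC : Cc = ∑ i ∈ Finset.Icc 1 n,
      2 / ‖q.coeff 0‖ ^ 2 * (‖q.coeff 0‖ + ‖q.coeff i‖) * D ^ (n - i))
    (h1 : ‖p.coeff 0 - q.coeff 0‖ ≤ ‖q.coeff 0‖ / 2)
    (h2 : ‖p.coeff N - q.coeff N‖ < ‖q.coeff N‖)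
    (h3 : Mc ≤ ∑ i ∈ Finset.range (n + 1), ‖q.coeff i / q.coeff 0‖)
    (h4 : Mc ≤ 1 / Cc * ((2 * Mroot) ^ n)⁻¹) :
    ∀ lam : ℂ, p.eval lam = 0 →
      ‖lam‖⁻¹ ≤ Cc ^ ((n : ℝ)⁻¹) * Mc ^ ((n : ℝ)⁻¹) ∨
      ∃ k : Fin N, ‖lam - ζ k‖ ≤
        2 * Mroot ^ 2 * Cc ^ ((n : ℝ)⁻¹) * Mc ^ ((n : ℝ)⁻¹) := by
  intro lam hlam
  -- basic positivity facts
  have hn1 : 1 ≤ n := le_trans (by omega : 1 ≤ q.natDegree) hqn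
  have hNn : N ≤ n := hqN ▸ hqn
  have hb0 : (0:ℝ) < ‖q.coeff 0‖ := norm_pos_iff.mpr hq0
  have ha0b0 : ‖q.coeff 0‖ / 2 ≤ ‖p.coeff 0‖ := by
    have h1' : ‖q.coeff 0 - p.coeff 0‖ ≤ ‖q.coeff 0‖ / 2 := by rwa [norm_sub_rev]
    have := norm_sub_norm_le (q.coeff 0) (p.coeff 0)
    linarith
  have ha0 : p.coeff 0 ≠ 0 := by
    intro h; rw [h, norm_zero] at ha0b0; linarith
  have hlam0 : lam ≠ 0 := by
    intro h; subst h
    rw [← coeff_zero_eq_eval_zero] at hlam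
    exact ha0 hlam
  set μ := lam⁻¹ with hμdef
  have hmul1 : μ * lam = 1 := inv_mul_cancel₀ hlam0
  have hμ0 : μ ≠ 0 := inv_ne_zero hlam0
  -- Mc facts
  have h0mem : (0:ℕ) ∈ Finset.range (n+1) := by simp
  have hMci : ∀ i ∈ Finset.range (n+1), ‖p.coeff i - q.coeff i‖ ≤ Mc := fun i hi =>
    hMc ▸ Finset.le_sup' (fun i => ‖p.coeff i - q.coeff i‖) hi
  have hMc0 : 0 ≤ Mc := le_trans (norm_nonneg _) (hMci 0 h0mem)
  -- notation for the constants
  set S := ∑ i ∈ Finset.range (n + 1), ‖q.coeff i / q.coeff 0‖ with hSdef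
  set c := fun i => 2 / ‖q.coeff 0‖ ^ 2 * (‖q.coeff 0‖ + ‖q.coeff i‖) with hcdef
  have hcpos : ∀ i, 0 < c i := by
    intro i
    have : (0:ℝ) < 2 / ‖q.coeff 0‖ ^ 2 := by positivity
    have : (0:ℝ) < ‖q.coeff 0‖ + ‖q.coeff i‖ := by positivity
    positivity
  have hS1 : (1:ℝ) ≤ S := by
    have : ‖q.coeff 0 / q.coeff 0‖ = 1 := by rw [div_self hq0, norm_one]
    calc (1:ℝ) = ‖q.coeff 0 / q.coeff 0‖ := this.symm
    _ ≤ S := Finset.single_le_sum (f := fun i => ‖q.coeff i / q.coeff 0‖)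
      (fun i _ => norm_nonneg _) h0mem
  have hcsum0 : (0:ℝ) ≤ ∑ i ∈ Finset.range (n + 1), c i :=
    Finset.sum_nonneg fun i _ => (hcpos i).le
  have hD1 : (1:ℝ) ≤ D := by
    rw [hD]
    calc (1:ℝ) = 1 * 1 := by ring
    _ ≤ (1 + ∑ i ∈ Finset.range (n + 1), c i) * S := by
        apply mul_le_mul (by linarith) hS1 zero_le_one (by linarith)
  have hD0 : (0:ℝ) < D := lt_of_lt_of_le one_pos hD1
  have hCc : (0:ℝ) < Cc := by
    rw [hC]
    apply Finset.sum_pos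
    · intro i _
      exact mul_pos (hcpos i) (pow_pos hD0 _)
    · exact ⟨1, by simp [Finset.mem_Icc]; omega⟩
  -- key coefficient bound
  have hcoeffbd : ∀ i ∈ Finset.range (n+1),
      ‖q.coeff i / q.coeff 0 - p.coeff i / p.coeff 0‖ ≤ c i * Mc := by
    intro i hi
    have hdiff : q.coeff i / q.coeff 0 - p.coeff i / p.coeff 0 =
        (q.coeff i * (p.coeff 0 - q.coeff 0) - (p.coeff i - q.coeff i) * q.coeff 0) /
          (q.coeff 0 * p.coeff 0) := by
      field_simp
      ring
    rw [hdiff, norm_div, norm_mul]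
    have hnum : ‖q.coeff i * (p.coeff 0 - q.coeff 0) - (p.coeff i - q.coeff i) * q.coeff 0‖
        ≤ (‖q.coeff 0‖ + ‖q.coeff i‖) * Mc := by
      calc ‖q.coeff i * (p.coeff 0 - q.coeff 0) - (p.coeff i - q.coeff i) * q.coeff 0‖
          ≤ ‖q.coeff i * (p.coeff 0 - q.coeff 0)‖ + ‖(p.coeff i - q.coeff i) * q.coeff 0‖ :=
            norm_sub_le _ _
      _ = ‖q.coeff i‖ * ‖p.coeff 0 - q.coeff 0‖ + ‖p.coeff i - q.coeff i‖ * ‖q.coeff 0‖ := by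
            rw [norm_mul, norm_mul]
      _ ≤ ‖q.coeff i‖ * Mc + Mc * ‖q.coeff 0‖ := by
            gcongr
            · exact hMci 0 h0mem
            · exact hMci i hi
      _ = (‖q.coeff 0‖ + ‖q.coeff i‖) * Mc := by ring
    have hden : ‖q.coeff 0‖ ^ 2 / 2 ≤ ‖q.coeff 0‖ * ‖p.coeff 0‖ := by
      calc ‖q.coeff 0‖ ^ 2 / 2 = ‖q.coeff 0‖ * (‖q.coeff 0‖ / 2) := by ring
      _ ≤ ‖q.coeff 0‖ * ‖p.coeff 0‖ := by gcongr
    have hdenpos : (0:ℝ) < ‖q.coeff 0‖ ^ 2 / 2 := by positivity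
    calc ‖q.coeff i * (p.coeff 0 - q.coeff 0) - (p.coeff i - q.coeff i) * q.coeff 0‖ /
          (‖q.coeff 0‖ * ‖p.coeff 0‖)
        ≤ ((‖q.coeff 0‖ + ‖q.coeff i‖) * Mc) / (‖q.coeff 0‖ ^ 2 / 2) := by
          apply div_le_div₀ (by positivity) hnum hdenpos hden
    _ = c i * Mc := by
          rw [hcdef]; field_simp
  -- power identity
  have hpow : ∀ i, i ≤ n → μ ^ (n - i) = μ ^ n * lam ^ i := by
    intro i hi
    have h := congrArg (fun z : ℂ => μ ^ (n-i) * z ^ i) hmul1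
    simp only [one_pow, mul_one, mul_pow] at h
    rw [← h, ← mul_assoc, ← pow_add, Nat.sub_add_cancel hi]
  -- sums
  have hsump : ∑ i ∈ Finset.range (n+1), p.coeff i * μ ^ (n - i) = 0 := by
    have he : p.eval lam = ∑ i ∈ Finset.range (n+1), p.coeff i * lam ^ i :=
      eval_eq_sum_range' (Nat.lt_succ_of_le hpn) lam
    calc ∑ i ∈ Finset.range (n+1), p.coeff i * μ ^ (n - i)
        = ∑ i ∈ Finset.range (n+1), μ ^ n * (p.coeff i * lam ^ i) := by
          refine Finset.sum_congr rfl fun i hi => ?_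
          rw [hpow i (by simp at hi; omega)]; ring
    _ = μ ^ n * p.eval lam := by rw [← Finset.mul_sum, he]
    _ = 0 := by rw [hlam, mul_zero]
  have hsumq : ∑ i ∈ Finset.range (n+1), q.coeff i * μ ^ (n - i) = μ ^ n * q.eval lam := by
    have he : q.eval lam = ∑ i ∈ Finset.range (n+1), q.coeff i * lam ^ i :=
      eval_eq_sum_range' (Nat.lt_succ_of_le hqn) lam
    calc ∑ i ∈ Finset.range (n+1), q.coeff i * μ ^ (n - i)
        = ∑ i ∈ Finset.range (n+1), μ ^ n * (q.coeff i * lam ^ i) := by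
          refine Finset.sum_congr rfl fun i hi => ?_
          rw [hpow i (by simp at hi; omega)]; ring
    _ = μ ^ n * q.eval lam := by rw [← Finset.mul_sum, he]
  -- splitting the range
  have hsplit : ∀ f : ℕ → ℂ, ∑ i ∈ Finset.range (n+1), f i = f 0 + ∑ i ∈ Finset.Icc 1 n, f i := by
    intro f
    have : Finset.range (n+1) = insert 0 (Finset.Icc 1 n) := by
      ext x; simp [Nat.lt_succ_iff]; omega
    rw [this, Finset.sum_insert (by simp)]
  -- the root bound ‖μ‖ ≤ D
  have hrootbd : ‖μ‖ ≤ D := by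
    have hid : p.coeff 0 * μ ^ n + ∑ i ∈ Finset.Icc 1 n, p.coeff i * μ ^ (n - i) = 0 := by
      rw [← hsump, hsplit (fun i => p.coeff i * μ ^ (n - i))]; simp
    have hμn : ‖μ‖ ^ n ≤ ∑ i ∈ Finset.Icc 1 n, ‖p.coeff i / p.coeff 0‖ * ‖μ‖ ^ (n - i) := by
      have hμe : μ ^ n = ∑ i ∈ Finset.Icc 1 n, (-(p.coeff i / p.coeff 0)) * μ ^ (n - i) := by
        have hsum' : ∑ i ∈ Finset.Icc 1 n, (-(p.coeff i / p.coeff 0)) * μ ^ (n - i)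
            = (-(p.coeff 0)⁻¹) * ∑ i ∈ Finset.Icc 1 n, p.coeff i * μ ^ (n - i) := by
          rw [Finset.mul_sum]
          refine Finset.sum_congr rfl fun i _ => ?_
          field_simp
        have h' : ∑ i ∈ Finset.Icc 1 n, p.coeff i * μ ^ (n - i) = -(p.coeff 0 * μ ^ n) := by
          linear_combination hid
        rw [hsum', h', neg_mul_neg]
        field_simp
      calc ‖μ‖ ^ n = ‖μ ^ n‖ := (norm_pow _ _).symm
      _ ≤ ∑ i ∈ Finset.Icc 1 n, ‖(-(p.coeff i / p.coeff 0)) * μ ^ (n - i)‖ := by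
          rw [hμe]; exact norm_sum_le _ _
      _ = ∑ i ∈ Finset.Icc 1 n, ‖p.coeff i / p.coeff 0‖ * ‖μ‖ ^ (n - i) := by
          refine Finset.sum_congr rfl fun i _ => ?_
          rw [norm_mul, norm_neg, norm_pow]
    have hAD : ∑ i ∈ Finset.Icc 1 n, ‖p.coeff i / p.coeff 0‖ ≤ D := by
      have hterm : ∀ i ∈ Finset.Icc 1 n, ‖p.coeff i / p.coeff 0‖
          ≤ ‖q.coeff i / q.coeff 0‖ + c i * Mc := by
        intro i hi
        have hi' : i ∈ Finset.range (n+1) := by simp at hi ⊢; omega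
        calc ‖p.coeff i / p.coeff 0‖
            = ‖q.coeff i / q.coeff 0 - (q.coeff i / q.coeff 0 - p.coeff i / p.coeff 0)‖ := by
              congr 1; ring
        _ ≤ ‖q.coeff i / q.coeff 0‖ + ‖q.coeff i / q.coeff 0 - p.coeff i / p.coeff 0‖ :=
              norm_sub_le _ _
        _ ≤ ‖q.coeff i / q.coeff 0‖ + c i * Mc := by
              have := hcoeffbd i hi'; linarith
      calc ∑ i ∈ Finset.Icc 1 n, ‖p.coeff i / p.coeff 0‖
          ≤ ∑ i ∈ Finset.Icc 1 n, (‖q.coeff i / q.coeff 0‖ + c i * Mc) :=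
            Finset.sum_le_sum hterm
      _ = ∑ i ∈ Finset.Icc 1 n, ‖q.coeff i / q.coeff 0‖ + (∑ i ∈ Finset.Icc 1 n, c i) * Mc := by
            rw [Finset.sum_add_distrib, ← Finset.sum_mul]
      _ ≤ S + (∑ i ∈ Finset.range (n+1), c i) * S := by
            have hsub : Finset.Icc 1 n ⊆ Finset.range (n+1) := by
              intro x hx; simp at hx ⊢; omega
            apply add_le_add
            · rw [hSdef]
              exact Finset.sum_le_sum_of_subset_of_nonneg hsub (fun i _ _ => norm_nonneg _)
            · exact mul_le_mul (Finset.sum_le_sum_of_subset_of_nonneg hsub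
                (fun i _ _ => (hcpos i).le)) h3 hMc0 hcsum0
      _ = D := by rw [hD]; ring
    rcases le_or_gt ‖μ‖ 1 with h | h
    · linarith
    · have h1μ : (1:ℝ) ≤ ‖μ‖ := h.le
      have hstep : ‖μ‖ ^ n ≤ (∑ i ∈ Finset.Icc 1 n, ‖p.coeff i / p.coeff 0‖) * ‖μ‖ ^ (n-1) := by
        calc ‖μ‖ ^ n ≤ ∑ i ∈ Finset.Icc 1 n, ‖p.coeff i / p.coeff 0‖ * ‖μ‖ ^ (n - i) := hμn
        _ ≤ ∑ i ∈ Finset.Icc 1 n, ‖p.coeff i / p.coeff 0‖ * ‖μ‖ ^ (n - 1) := by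
            apply Finset.sum_le_sum
            intro i hi
            simp at hi
            gcongr
            omega
        _ = (∑ i ∈ Finset.Icc 1 n, ‖p.coeff i / p.coeff 0‖) * ‖μ‖ ^ (n-1) := by
            rw [Finset.sum_mul]
      have hμpow : ‖μ‖ ^ n = ‖μ‖ * ‖μ‖ ^ (n-1) := by
        rw [← pow_succ']
        congr 1
        omega
      have hpowpos : (0:ℝ) < ‖μ‖ ^ (n-1) := by positivity
      rw [hμpow] at hstep
      have := le_of_mul_le_mul_right (by linarith [hstep] :
        ‖μ‖ * ‖μ‖ ^ (n-1) ≤ (∑ i ∈ Finset.Icc 1 n, ‖p.coeff i / p.coeff 0‖) * ‖μ‖ ^ (n-1))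
        hpowpos
      linarith
  -- the perturbation sum T
  set T := ∑ i ∈ Finset.Icc 1 n,
    (q.coeff i / q.coeff 0 - p.coeff i / p.coeff 0) * μ ^ (n - i) with hTdef
  have hTbound : ‖T‖ ≤ Mc * Cc := by
    calc ‖T‖ ≤ ∑ i ∈ Finset.Icc 1 n,
        ‖(q.coeff i / q.coeff 0 - p.coeff i / p.coeff 0) * μ ^ (n - i)‖ := norm_sum_le _ _
    _ ≤ ∑ i ∈ Finset.Icc 1 n, (c i * Mc) * D ^ (n - i) := by
        apply Finset.sum_le_sum
        intro i hi
        rw [norm_mul, norm_pow]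
        have hi' : i ∈ Finset.range (n+1) := by simp at hi ⊢; omega
        apply mul_le_mul (hcoeffbd i hi') (pow_le_pow_left₀ (norm_nonneg _) hrootbd _)
          (by positivity) (by positivity)
    _ = Mc * Cc := by
        rw [hC, Finset.mul_sum]
        refine Finset.sum_congr rfl fun i _ => ?_
        rw [hcdef]; ring
  -- the key identity : q.coeff 0 * T = μ^n * q.eval lam
  have hqsplit : q.coeff 0 * μ ^ n + ∑ i ∈ Finset.Icc 1 n, q.coeff i * μ ^ (n - i)
      = μ ^ n * q.eval lam := by
    rw [← hsumq, hsplit (fun i => q.coeff i * μ ^ (n - i))]; simp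
  have hpsplit : p.coeff 0 * μ ^ n + ∑ i ∈ Finset.Icc 1 n, p.coeff i * μ ^ (n - i) = 0 := by
    rw [← hsump, hsplit (fun i => p.coeff i * μ ^ (n - i))]; simp
  have hTid : q.coeff 0 * T = μ ^ n * q.eval lam := by
    have key : p.coeff 0 * (q.coeff 0 * T) =
        p.coeff 0 * (∑ i ∈ Finset.Icc 1 n, q.coeff i * μ ^ (n - i))
        - q.coeff 0 * (∑ i ∈ Finset.Icc 1 n, p.coeff i * μ ^ (n - i)) := by
      rw [hTdef, Finset.mul_sum, Finset.mul_sum, Finset.mul_sum, Finset.mul_sum,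
        ← Finset.sum_sub_distrib]
      refine Finset.sum_congr rfl fun i _ => ?_
      field_simp
    have h5 : ∑ i ∈ Finset.Icc 1 n, q.coeff i * μ ^ (n - i)
        = μ ^ n * q.eval lam - q.coeff 0 * μ ^ n := by
      rw [← hqsplit]; ring
    have h6 : ∑ i ∈ Finset.Icc 1 n, p.coeff i * μ ^ (n - i) = - (p.coeff 0 * μ ^ n) := by
      rw [← sub_eq_zero]; rw [← hpsplit]; ring
    rw [h5, h6] at key
    have key2 : p.coeff 0 * (q.coeff 0 * T) = p.coeff 0 * (μ ^ n * q.eval lam) := by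
      rw [key]; ring
    exact mul_left_cancel₀ ha0 key2
  -- facts about the roots
  have hevalq : q.eval lam = q.leadingCoeff * ∏ k : Fin N, (lam - ζ k) := by
    conv_lhs => rw [hfac]
    simp [eval_prod]
  have hcoeff0eq : q.coeff 0 = q.leadingCoeff * ∏ k : Fin N, (0 - ζ k) := by
    rw [coeff_zero_eq_eval_zero]
    conv_lhs => rw [hfac]
    simp [eval_prod]
  have hζ : ∀ k, ζ k ≠ 0 := by
    intro k hk
    apply hq0
    rw [hcoeff0eq]
    rw [Finset.prod_eq_zero (Finset.mem_univ k) (by rw [hk]; ring)]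
    ring
  have hlc : q.leadingCoeff ≠ 0 := by
    intro h; apply hq0; rw [hcoeff0eq, h]; ring
  have hζM : ∀ k, ‖ζ k‖ ≤ Mroot := fun k => hMroot ▸ Finset.le_sup' (fun k => ‖ζ k‖) (Finset.mem_univ k)
  have hMroot0 : 0 < Mroot := lt_of_lt_of_le (norm_pos_iff.mpr (hζ ⟨0, hN⟩)) (hζM ⟨0, hN⟩)
  -- the product identity
  have hprodid : (∏ k : Fin N, (μ - (ζ k)⁻¹)) * μ ^ (n - N) * q.coeff 0 = μ ^ n * q.eval lam := by
    rw [hcoeff0eq, hevalq]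
    have hfactor : ∀ k : Fin N, (μ - (ζ k)⁻¹) * (0 - ζ k) = μ * (lam - ζ k) := by
      intro k
      have h7 : μ * (lam - ζ k) = 1 - μ * ζ k := by rw [mul_sub, hmul1]
      have h7' : (ζ k)⁻¹ * ζ k = 1 := inv_mul_cancel₀ (hζ k)
      rw [h7]
      calc (μ - (ζ k)⁻¹) * (0 - ζ k) = (ζ k)⁻¹ * ζ k - μ * ζ k := by ring
      _ = 1 - μ * ζ k := by rw [h7']
    have hpp : (∏ k : Fin N, (μ - (ζ k)⁻¹)) * (∏ k : Fin N, (0 - ζ k))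
        = μ ^ N * ∏ k : Fin N, (lam - ζ k) := by
      rw [← Finset.prod_mul_distrib]
      rw [Finset.prod_congr rfl (fun k _ => hfactor k), Finset.prod_mul_distrib]
      congr 1
      simp
    have hμnN : μ ^ (n - N) * μ ^ N = μ ^ n := by
      rw [← pow_add]; congr 1; omega
    calc (∏ k : Fin N, (μ - (ζ k)⁻¹)) * μ ^ (n - N)
          * (q.leadingCoeff * ∏ k : Fin N, (0 - ζ k))
        = μ ^ (n - N) * q.leadingCoeff *
          ((∏ k : Fin N, (μ - (ζ k)⁻¹)) * ∏ k : Fin N, (0 - ζ k)) := by ring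
    _ = μ ^ (n - N) * q.leadingCoeff * (μ ^ N * ∏ k : Fin N, (lam - ζ k)) := by rw [hpp]
    _ = (μ ^ (n - N) * μ ^ N) * (q.leadingCoeff * ∏ k : Fin N, (lam - ζ k)) := by ring
    _ = μ ^ n * (q.leadingCoeff * ∏ k : Fin N, (lam - ζ k)) := by rw [hμnN]
  -- product bound
  have hprodbd : (∏ k : Fin N, ‖μ - (ζ k)⁻¹‖) * ‖μ‖ ^ (n - N) ≤ Mc * Cc := by
    have h8 : (∏ k : Fin N, ‖μ - (ζ k)⁻¹‖) * ‖μ‖ ^ (n - N) * ‖q.coeff 0‖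
        = ‖q.coeff 0‖ * ‖T‖ := by
      rw [← norm_prod, ← norm_pow, ← norm_mul, ← norm_mul, hprodid, ← hTid, norm_mul]
    have h9 : (∏ k : Fin N, ‖μ - (ζ k)⁻¹‖) * ‖μ‖ ^ (n - N) = ‖T‖ :=
      mul_right_cancel₀ hb0.ne' (by rw [h8]; ring)
    rw [h9]
    exact hTbound
  -- epsilon
  set eps := (Cc * Mc) ^ ((n:ℝ)⁻¹) with hepsdef
  have heps0 : 0 ≤ eps := Real.rpow_nonneg (by positivity) _
  have hepsn : eps ^ n = Cc * Mc := Real.rpow_inv_natCast_pow (by positivity) (by omega)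
  have hepssplit : eps = Cc ^ ((n:ℝ)⁻¹) * Mc ^ ((n:ℝ)⁻¹) := Real.mul_rpow hCc.le hMc0
  have heps2M : eps ≤ (2 * Mroot)⁻¹ := by
    have hCM : Cc * Mc ≤ ((2 * Mroot)⁻¹) ^ n := by
      rw [inv_pow]
      calc Cc * Mc ≤ Cc * (1 / Cc * ((2 * Mroot) ^ n)⁻¹) := by
            apply mul_le_mul_of_nonneg_left h4 hCc.le
      _ = ((2 * Mroot) ^ n)⁻¹ := by field_simp
    calc eps ≤ (((2 * Mroot)⁻¹) ^ n) ^ ((n:ℝ)⁻¹) :=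
          Real.rpow_le_rpow (by positivity) hCM (by positivity)
    _ = (2 * Mroot)⁻¹ := Real.pow_rpow_inv_natCast (by positivity) (by omega)
  -- minimum argument
  have hcases : ‖μ‖ ≤ eps ∨ ∃ k, ‖μ - (ζ k)⁻¹‖ ≤ eps := by
    by_contra hcon
    push_neg at hcon
    obtain ⟨hμeps, hkeps⟩ := hcon
    have hPP : (∏ k : Fin N, ‖μ - (ζ k)⁻¹‖) * ‖μ‖ ^ (n - N) ≤ eps ^ n := by
      rw [hepsn]; linarith [hprodbd]
    rcases eq_or_lt_of_le heps0 with h | h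
    · have hpos : 0 < (∏ k : Fin N, ‖μ - (ζ k)⁻¹‖) * ‖μ‖ ^ (n - N) := by
        apply mul_pos
        · exact Finset.prod_pos fun k _ => lt_of_le_of_lt heps0 (hkeps k)
        · apply pow_pos (lt_of_le_of_lt heps0 hμeps)
      have : eps ^ n = 0 := by rw [← h]; exact zero_pow (by omega)
      linarith
    · have h10 : eps ^ N < ∏ k : Fin N, ‖μ - (ζ k)⁻¹‖ := by
        have := Finset.prod_lt_prod_of_nonempty (f := fun _ : Fin N => eps)
          (g := fun k => ‖μ - (ζ k)⁻¹‖) (fun k _ => h) (fun k _ => hkeps k)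
          (Finset.univ_nonempty_iff.mpr ⟨⟨0, hN⟩⟩)
        simpa using this
      have h11 : eps ^ (n - N) ≤ ‖μ‖ ^ (n - N) := pow_le_pow_left₀ heps0 hμeps.le _
      have h12 : eps ^ n = eps ^ N * eps ^ (n - N) := by rw [← pow_add]; congr 1; omega
      have h13 : eps ^ N * eps ^ (n - N) < (∏ k : Fin N, ‖μ - (ζ k)⁻¹‖) * ‖μ‖ ^ (n - N) := by
        calc eps ^ N * eps ^ (n - N) < (∏ k : Fin N, ‖μ - (ζ k)⁻¹‖) * eps ^ (n - N) := by
              apply mul_lt_mul_of_pos_right h10 (pow_pos h _)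
        _ ≤ (∏ k : Fin N, ‖μ - (ζ k)⁻¹‖) * ‖μ‖ ^ (n - N) := by
              apply mul_le_mul_of_nonneg_left h11
              exact Finset.prod_nonneg fun k _ => norm_nonneg _
      rw [← h12] at h13
      linarith
  rcases hcases with hμeps | ⟨k, hkeps⟩
  · left
    rw [← hepssplit, hμdef, norm_inv] at *
    exact hμeps
  · right
    refine ⟨k, ?_⟩
    have hζk0 : 0 < ‖ζ k‖ := norm_pos_iff.mpr (hζ k)
    have hinv : Mroot⁻¹ ≤ ‖(ζ k)⁻¹‖ := by
      rw [norm_inv]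
      exact inv_anti₀ hζk0 (hζM k)
    have hμlb : (2 * Mroot)⁻¹ ≤ ‖μ‖ := by
      have := norm_sub_norm_le ((ζ k)⁻¹) ((ζ k)⁻¹ - μ)
      simp only [sub_sub_cancel] at this
      have h14 : ‖(ζ k)⁻¹ - μ‖ = ‖μ - (ζ k)⁻¹‖ := norm_sub_rev _ _
      have h15 : Mroot⁻¹ - (2 * Mroot)⁻¹ = (2 * Mroot)⁻¹ := by
        field_simp
        ring
      have h16 : ‖(ζ k)⁻¹‖ - ‖μ - (ζ k)⁻¹‖ ≤ ‖μ‖ := by rw [← h14]; linarith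
      have h17 : ‖μ - (ζ k)⁻¹‖ ≤ (2 * Mroot)⁻¹ := le_trans hkeps heps2M
      linarith
    have hlamub : ‖lam‖ ≤ 2 * Mroot := by
      have h18 : ‖lam‖ = ‖μ‖⁻¹ := by rw [hμdef, norm_inv, inv_inv]
      rw [h18]
      calc ‖μ‖⁻¹ ≤ ((2 * Mroot)⁻¹)⁻¹ := inv_anti₀ (by positivity) hμlb
      _ = 2 * Mroot := inv_inv _
    have hid : lam - ζ k = lam * ζ k * ((ζ k)⁻¹ - μ) := by
      calc lam - ζ k = lam * (ζ k * (ζ k)⁻¹) - (μ * lam) * ζ k := by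
            rw [mul_inv_cancel₀ (hζ k), hmul1]; ring
      _ = lam * ζ k * ((ζ k)⁻¹ - μ) := by ring
    calc ‖lam - ζ k‖ = ‖lam‖ * ‖ζ k‖ * ‖μ - (ζ k)⁻¹‖ := by
          rw [hid, norm_mul, norm_mul, norm_sub_rev]
    _ ≤ (2 * Mroot) * Mroot * eps := by
          gcongr
          exact hζM k
    _ = 2 * Mroot ^ 2 * Cc ^ ((n:ℝ)⁻¹) * Mc ^ ((n:ℝ)⁻¹) := by
          rw [hepssplit]; ring
end

section
/- Let B_1,…,B_m be open subsets of ℂ and let f ∈ ℂ[z_1,…,z_m] be a polynomial with f(z) ≠ 0 for all z ∈ B_1 × ⋯ × B_m. Suppose f(α) = 0 for some α ∈ closure(B_1) × ⋯ × closure(B_m) and α is not in ∂B_1 × ⋯ × ∂B_m. Then, letting S = { j : α_j ∈ B_j } (which is nonempty), f vanishes identically on the affine subspace { z ∈ ℂ^m : z_j = α_j for all j ∉ S }. -/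
open MvPolynomial

/-- Evaluating a polynomial substitution commutes with evaluation. -/
lemma eval_aeval_poly {m : ℕ} (f : MvPolynomial (Fin m) ℂ) (g : Fin m → Polynomial ℂ) (t : ℂ) :
    Polynomial.eval t (MvPolynomial.aeval g f) =
      MvPolynomial.eval (fun j => Polynomial.eval t (g j)) f := by
  induction f using MvPolynomial.induction_on with
  | C a => simp [Polynomial.algebraMap_eq]
  | add p q hp hq => simp [hp, hq]
  | mul_X p j hp => simp [hp]

/-- Minimum modulus principle for polynomials on a closed disk. -/
lemma min_modulus {p : Polynomial ℂ} {ρ : ℝ} (hρ : 0 < ρ)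
    (hp : ∀ t ∈ Metric.closedBall (0:ℂ) ρ, p.eval t ≠ 0) :
    ∃ t : ℂ, ‖t‖ = ρ ∧ ‖p.eval t‖ ≤ ‖p.eval 0‖ := by
  have hcl : closure (Metric.ball (0:ℂ) ρ) = Metric.closedBall 0 ρ := closure_ball _ hρ.ne'
  have hd : DiffContOnCl ℂ (fun t : ℂ => (p.eval t)⁻¹) (Metric.ball 0 ρ) := by
    constructor
    · intro x hx
      exact ((p.differentiable.differentiableAt).inv
        (hp x (Metric.ball_subset_closedBall hx))).differentiableWithinAt
    · rw [hcl]
      exact (p.continuous_aeval.continuousOn.inv₀ hp)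
  obtain ⟨w, hw, hmax⟩ := Complex.exists_mem_frontier_isMaxOn_norm
    (Metric.isBounded_ball) ⟨0, Metric.mem_ball_self hρ⟩ hd
  rw [frontier_ball _ hρ.ne'] at hw
  have hwnorm : ‖w‖ = ρ := by simpa using hw
  refine ⟨w, hwnorm, ?_⟩
  have h0 : (0:ℂ) ∈ closure (Metric.ball (0:ℂ) ρ) := by
    rw [hcl]; exact Metric.mem_closedBall_self hρ.le
  have hle := hmax h0
  simp only [Function.comp, norm_inv] at hle
  have hwz : w ∈ Metric.closedBall (0:ℂ) ρ := Metric.sphere_subset_closedBall hw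
  have hpw : 0 < ‖p.eval w‖ := norm_pos_iff.mpr (hp w hwz)
  have hp0 : 0 < ‖p.eval 0‖ := norm_pos_iff.mpr (hp 0 (Metric.mem_closedBall_self hρ.le))
  exact (inv_le_inv₀ hp0 hpw).mp hle

open Classical in
/-- The affine point map used in the proof. -/
noncomputable def ptD (m : ℕ) (B : Fin m → Set ℂ) (α z : Fin m → ℂ)
    (β : Fin m → ℂ) (t : ℂ) : Fin m → ℂ :=
  fun j => if α j ∈ B j then α j + t * (z j - α j) else β j

lemma ptD_pos {m : ℕ} {B : Fin m → Set ℂ} {α z β : Fin m → ℂ} {t : ℂ} {j : Fin m}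
    (hj : α j ∈ B j) : ptD m B α z β t j = α j + t * (z j - α j) := by
  simp [ptD, hj]

lemma ptD_neg {m : ℕ} {B : Fin m → Set ℂ} {α z β : Fin m → ℂ} {t : ℂ} {j : Fin m}
    (hj : α j ∉ B j) : ptD m B α z β t j = β j := by
  simp [ptD, hj]

lemma tendsto_eval_of_tendsto {m : ℕ} (f : MvPolynomial (Fin m) ℂ) {ι : Type}
    {l : Filter ι} {u : ι → Fin m → ℂ} {x : Fin m → ℂ}
    (hu : Filter.Tendsto u l (nhds x)) :
    Filter.Tendsto (fun n => MvPolynomial.eval (u n) f) l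
      (nhds (MvPolynomial.eval x f)) :=
  ((MvPolynomial.continuous_eval f).tendsto x).comp hu

set_option maxHeartbeats 1000000 in
/-- Boundary zeros of Ω-stable polynomials: if f has no zeros on the product of open
sets B_j but vanishes at a point α of the product of their closures which is not in the
product of their boundaries, then the set S of indices j with α_j ∈ B_j is nonempty and
f vanishes identically on the affine subspace { z : z_j = α_j for all j ∉ S }. -/
theorem boundary_zeros_stable (m : ℕ) (B : Fin m → Set ℂ) (hB : ∀ j, IsOpen (B j))
    (f : MvPolynomial (Fin m) ℂ)
    (hstable : ∀ z : Fin m → ℂ, (∀ j, z j ∈ B j) → MvPolynomial.eval z f ≠ 0)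
    (α : Fin m → ℂ) (hα : ∀ j, α j ∈ closure (B j))
    (hzero : MvPolynomial.eval α f = 0)
    (hnotbd : ¬ ∀ j, α j ∈ frontier (B j)) :
    (∃ j, α j ∈ B j) ∧
    ∀ z : Fin m → ℂ, (∀ j, α j ∉ B j → z j = α j) → MvPolynomial.eval z f = 0 := by
  classical
  have hSmem : ∀ j, α j ∉ frontier (B j) → α j ∈ B j := by
    intro j hj
    by_contra h
    exact hj ⟨hα j, by simpa [(hB j).interior_eq] using h⟩
  push_neg at hnotbd
  obtain ⟨j0, hj0⟩ := hnotbd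
  refine ⟨⟨j0, hSmem j0 hj0⟩, ?_⟩
  intro z hz
  -- find radius r such that for |t| ≤ r the "S" coordinates stay inside B
  have hopen : IsOpen {t : ℂ | ∀ j, α j ∈ B j → α j + t * (z j - α j) ∈ B j} := by
    have heq : {t : ℂ | ∀ j, α j ∈ B j → α j + t * (z j - α j) ∈ B j}
        = ⋂ j, {t : ℂ | α j ∈ B j → α j + t * (z j - α j) ∈ B j} := by
      ext t; simp
    rw [heq]
    refine isOpen_iInter_of_finite fun j => ?_
    by_cases hj : α j ∈ B j
    · have : {t : ℂ | α j ∈ B j → α j + t * (z j - α j) ∈ B j}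
          = (fun t : ℂ => α j + t * (z j - α j)) ⁻¹' B j := by ext t; simp [hj]
      rw [this]
      exact (hB j).preimage (by fun_prop)
    · have : {t : ℂ | α j ∈ B j → α j + t * (z j - α j) ∈ B j} = Set.univ := by
        ext t; simp [hj]
      rw [this]; exact isOpen_univ
  have h0mem : (0:ℂ) ∈ {t : ℂ | ∀ j, α j ∈ B j → α j + t * (z j - α j) ∈ B j} := by
    intro j hj; simpa using hj
  obtain ⟨ε, hε, hball⟩ := Metric.isOpen_iff.mp hopen 0 h0mem
  set r : ℝ := ε / 2 with hrdef
  have hr0 : 0 < r := by positivity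
  have hr : ∀ t ∈ Metric.closedBall (0:ℂ) r, ∀ j, α j ∈ B j → α j + t * (z j - α j) ∈ B j := by
    intro t ht
    apply hball
    rw [Metric.mem_closedBall] at ht
    rw [Metric.mem_ball]
    linarith
  -- the polynomial family
  set g : (Fin m → ℂ) → Fin m → Polynomial ℂ :=
    fun β j => if α j ∈ B j then Polynomial.C (α j) + Polynomial.X * Polynomial.C (z j - α j)
      else Polynomial.C (β j) with hgdef
  set P : (Fin m → ℂ) → Polynomial ℂ := fun β => MvPolynomial.aeval (g β) f with hPdef
  have hPeval : ∀ β t, (P β).eval t = MvPolynomial.eval (ptD m B α z β t) f := by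
    intro β t
    rw [hPdef, eval_aeval_poly]
    have hfun : (fun j => Polynomial.eval t (g β j)) = ptD m B α z β t := by
      funext j
      by_cases hj : α j ∈ B j
      · rw [ptD_pos hj]; simp [hgdef, hj]
      · rw [ptD_neg hj]; simp [hgdef, hj]
    rw [hfun]
  -- nonvanishing on the closed ball for perturbed base points
  have hPne : ∀ β : Fin m → ℂ, (∀ j, α j ∉ B j → β j ∈ B j) →
      ∀ t ∈ Metric.closedBall (0:ℂ) r, (P β).eval t ≠ 0 := by
    intro β hβ t ht
    rw [hPeval]
    apply hstable
    intro j
    by_cases hj : α j ∈ B j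
    · rw [ptD_pos hj]; exact hr t ht j hj
    · rw [ptD_neg hj]; exact hβ j hj
  -- approximating sequence
  have hchoice : ∀ (n : ℕ) (j : Fin m), ∃ b : ℂ,
      (α j ∉ B j → b ∈ B j) ∧ dist b (α j) < 1 / (n + 1) := by
    intro n j
    by_cases hj : α j ∈ B j
    · exact ⟨α j, fun h => absurd hj h, by simp; positivity⟩
    · obtain ⟨b, hb, hd⟩ := Metric.mem_closure_iff.mp (hα j) (1 / (n + 1)) (by positivity)
      exact ⟨b, fun _ => hb, by rwa [dist_comm]⟩
  choose β hβ hβd using hchoice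
  have hβlim : Filter.Tendsto β Filter.atTop (nhds α) := by
    rw [tendsto_pi_nhds]
    intro j
    rw [Metric.tendsto_atTop]
    intro δ hδ
    obtain ⟨N, hN⟩ := exists_nat_gt (1 / δ)
    refine ⟨N, fun n hn => lt_of_lt_of_le (hβd n j) ?_⟩
    have h1 : (1 / δ : ℝ) < n + 1 := by
      have : (N : ℝ) ≤ n + 1 := by exact_mod_cast Nat.le_succ_of_le hn
      linarith
    rw [div_le_iff₀ (by positivity)]
    rw [div_lt_iff₀ hδ] at h1
    nlinarith
  -- joint continuity
  have hcontpt : Continuous fun p : (Fin m → ℂ) × ℂ => ptD m B α z p.1 p.2 := by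
    apply continuous_pi
    intro j
    by_cases hj : α j ∈ B j
    · simp only [ptD, hj, if_true]
      fun_prop
    · simp only [ptD, hj, if_false]
      exact (continuous_apply j).comp continuous_fst
  -- for every radius ρ < r, P α has a root of norm ρ
  have hroot : ∀ ρ : ℝ, 0 < ρ → ρ < r → ∃ t : ℂ, ‖t‖ = ρ ∧ (P α).IsRoot t := by
    intro ρ hρ0 hρr
    have hmm : ∀ n : ℕ, ∃ t : ℂ, ‖t‖ = ρ ∧ ‖(P (β n)).eval t‖ ≤ ‖(P (β n)).eval 0‖ := by
      intro n
      apply min_modulus hρ0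
      intro t ht
      exact hPne (β n) (hβ n) t (Metric.closedBall_subset_closedBall hρr.le ht)
    choose t htn htle using hmm
    have htsphere : ∀ n, t n ∈ Metric.sphere (0:ℂ) ρ := by
      intro n; simpa [Metric.mem_sphere, Complex.dist_eq] using htn n
    obtain ⟨t₀, ht₀, φ, hφ, htlim⟩ :=
      (isCompact_sphere (0:ℂ) ρ).tendsto_subseq htsphere
    refine ⟨t₀, by simpa [Metric.mem_sphere, Complex.dist_eq] using ht₀, ?_⟩
    -- pass the inequality to the limit
    have hl1 : Filter.Tendsto (fun k => MvPolynomial.eval (ptD m B α z (β (φ k)) (t (φ k))) f)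
        Filter.atTop (nhds (MvPolynomial.eval (ptD m B α z α t₀) f)) := by
      have hp : Filter.Tendsto (fun k => ((β (φ k)), t (φ k))) Filter.atTop (nhds (α, t₀)) :=
        (hβlim.comp hφ.tendsto_atTop).prodMk_nhds htlim
      exact tendsto_eval_of_tendsto f ((hcontpt.tendsto (α, t₀)).comp hp)
    have hl2 : Filter.Tendsto (fun k => MvPolynomial.eval (ptD m B α z (β (φ k)) 0) f)
        Filter.atTop (nhds (MvPolynomial.eval (ptD m B α z α 0) f)) := by
      have hp : Filter.Tendsto (fun k => ((β (φ k)), (0:ℂ))) Filter.atTop (nhds (α, 0)) :=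
        (hβlim.comp hφ.tendsto_atTop).prodMk_nhds tendsto_const_nhds
      exact tendsto_eval_of_tendsto f ((hcontpt.tendsto (α, 0)).comp hp)
    have hpt0 : ptD m B α z α 0 = α := by
      funext j
      by_cases hj : α j ∈ B j
      · rw [ptD_pos hj]; ring
      · exact ptD_neg hj
    rw [hpt0, hzero] at hl2
    have hnormle : ‖MvPolynomial.eval (ptD m B α z α t₀) f‖ ≤ 0 := by
      have hl2n := hl2.norm
      rw [norm_zero] at hl2n
      apply le_of_tendsto_of_tendsto' hl1.norm hl2n
      intro k
      have := htle (φ k)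
      rwa [hPeval, hPeval] at this
    have : MvPolynomial.eval (ptD m B α z α t₀) f = 0 :=
      norm_le_zero_iff.mp hnormle
    rw [Polynomial.IsRoot, hPeval]
    exact this
  -- infinitely many roots, so P α = 0
  have hinf : {x : ℂ | (P α).IsRoot x}.Infinite := by
    have hex : ∀ ρ : Set.Ioo (0:ℝ) r, ∃ t : ℂ, ‖t‖ = ρ ∧ (P α).IsRoot t :=
      fun ρ => hroot ρ ρ.2.1 ρ.2.2
    choose tt htt hrt using hex
    have : Infinite (Set.Ioo (0:ℝ) r) := Set.Ioo.infinite hr0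
    refine Set.infinite_of_injective_forall_mem (f := tt) ?_ hrt
    intro a b hab
    have : (a : ℝ) = b := by rw [← htt a, ← htt b, hab]
    exact Subtype.ext this
  have hP0 : P α = 0 := Polynomial.eq_zero_of_infinite_isRoot _ hinf
  -- conclude
  have hpt1 : ptD m B α z α 1 = z := by
    funext j
    by_cases hj : α j ∈ B j
    · rw [ptD_pos hj]; ring
    · rw [ptD_neg hj]; exact (hz j hj).symm
  have := hPeval α 1
  rw [hP0, hpt1] at this
  simpa using this.symm
end

section
/- Let B_1 ⊆ ℂ be open, B_2 ⊆ ℂ open, and f ∈ ℂ[z_1, z_2] with f(z_1, z_2) ≠ 0 for all (z_1, z_2) ∈ B_1 × B_2. Suppose f(α_1, α_2) = 0 with α_1 ∈ B_1 and α_2 ∈ ∂B_2. Then f(z_1, α_2) = 0 for all z_1 ∈ ℂ, i.e., the one-variable polynomial z_1 ↦ f(z_1, α_2) is identically zero. -/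
open MvPolynomial

private lemma contF2 (f : MvPolynomial (Fin 2) ℂ) :
    Continuous fun p : ℂ × ℂ => MvPolynomial.eval ![p.1, p.2] f := by
  induction f using MvPolynomial.induction_on with
  | C a => simpa using continuous_const
  | add p q hp hq => simp only [map_add]; exact hp.add hq
  | mul_X p n hp =>
    simp only [eval_mul, eval_X]
    refine hp.mul ?_
    fin_cases n
    · simpa using continuous_fst
    · simpa using continuous_snd

private lemma diffSlice (f : MvPolynomial (Fin 2) ℂ) (w : ℂ) :
    Differentiable ℂ fun z : ℂ => MvPolynomial.eval ![z, w] f := by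
  induction f using MvPolynomial.induction_on with
  | C a => simpa using differentiable_const _
  | add p q hp hq => simp only [map_add]; exact hp.add hq
  | mul_X p n hp =>
    simp only [eval_mul, eval_X]
    refine hp.mul ?_
    fin_cases n
    · simpa using differentiable_id
    · simpa using differentiable_const _

/-- Two-variable special case of the boundary-zeros theorem: if f(z₁,z₂) ≠ 0 on
B₁ × B₂ and f(α₁, α₂) = 0 with α₁ ∈ B₁ and α₂ ∈ ∂B₂, then f(z₁, α₂) = 0 for all z₁. -/
theorem boundary_zeros_two_variables (B₁ B₂ : Set ℂ) (hB₁ : IsOpen B₁) (hB₂ : IsOpen B₂)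
    (f : MvPolynomial (Fin 2) ℂ)
    (hstable : ∀ z₁ z₂ : ℂ, z₁ ∈ B₁ → z₂ ∈ B₂ → MvPolynomial.eval ![z₁, z₂] f ≠ 0)
    (α₁ α₂ : ℂ) (hα₁ : α₁ ∈ B₁) (hα₂ : α₂ ∈ frontier B₂)
    (hzero : MvPolynomial.eval ![α₁, α₂] f = 0) :
    ∀ z₁ : ℂ, MvPolynomial.eval ![z₁, α₂] f = 0 := by
  by_contra hcon
  push_neg at hcon
  obtain ⟨w₀, hw₀⟩ := hcon
  set g : ℂ → ℂ := fun z => MvPolynomial.eval ![z, α₂] f with hgdef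
  have hgdiff : Differentiable ℂ g := diffSlice f α₂
  have hgan : AnalyticOnNhd ℂ g Set.univ := fun x _ => hgdiff.analyticAt x
  -- g is not eventually zero near α₁
  have hnotev : ¬ (∀ᶠ z in nhds α₁, g z = 0) := by
    intro hev
    have hEq : g =ᶠ[nhds α₁] 0 := hev
    have := hgan.eqOn_zero_of_preconnected_of_eventuallyEq_zero isPreconnected_univ
      (Set.mem_univ α₁) hEq
    exact hw₀ (this (Set.mem_univ w₀))
  have hne : ∀ᶠ z in nhdsWithin α₁ {α₁}ᶜ, g z ≠ 0 :=
    ((hgdiff.analyticAt α₁).eventually_eq_zero_or_eventually_ne_zero).resolve_left hnotev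
  rw [eventually_nhdsWithin_iff] at hne
  rw [Metric.eventually_nhds_iff] at hne
  obtain ⟨ε, hε, hεne⟩ := hne
  obtain ⟨ε₂, hε₂, hball₂⟩ := Metric.isOpen_iff.mp hB₁ α₁ hα₁
  set r : ℝ := min ε ε₂ / 2 with hrdef
  have hr : 0 < r := by positivity
  have hrε : r < ε := by
    have : min ε ε₂ ≤ ε := min_le_left _ _
    simp only [hrdef]; linarith
  have hrε₂ : r < ε₂ := by
    have : min ε ε₂ ≤ ε₂ := min_le_right _ _
    simp only [hrdef]; linarith
  have hcbB₁ : Metric.closedBall α₁ r ⊆ B₁ := fun z hz => by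
    apply hball₂
    exact lt_of_le_of_lt (Metric.mem_closedBall.mp hz) hrε₂
  -- minimum of ‖g‖ on the sphere
  have hsne : (Metric.sphere α₁ r).Nonempty := NormedSpace.sphere_nonempty.mpr hr.le
  obtain ⟨zm, hzm, hzmin'⟩ := (isCompact_sphere α₁ r).exists_isMinOn hsne
    ((continuous_norm.comp hgdiff.continuous).continuousOn)
  have hzmin : ∀ z ∈ Metric.sphere α₁ r, ‖g zm‖ ≤ ‖g z‖ := fun z hz => hzmin' hz
  set m : ℝ := ‖g zm‖ with hmdef
  have hm : 0 < m := by
    have hdz : dist zm α₁ = r := Metric.mem_sphere.mp hzm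
    have hzne : zm ≠ α₁ := by
      intro h; rw [h, dist_self] at hdz; exact hr.ne hdz
    have := hεne (show dist zm α₁ < ε by rw [hdz]; exact hrε) (by simpa using hzne)
    simpa [hmdef] using norm_pos_iff.mpr this
  -- tube lemma to get uniform closeness
  set N : Set (ℂ × ℂ) := {p | ‖MvPolynomial.eval ![p.1, p.2] f - g p.1‖ < m / 2} with hNdef
  have hNopen : IsOpen N := by
    have hc : Continuous fun p : ℂ × ℂ => ‖MvPolynomial.eval ![p.1, p.2] f - g p.1‖ :=
      ((contF2 f).sub (hgdiff.continuous.comp continuous_fst)).norm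
    exact isOpen_lt hc continuous_const
  have hsubN : Metric.closedBall α₁ r ×ˢ ({α₂} : Set ℂ) ⊆ N := by
    rintro ⟨z, w⟩ ⟨-, hw⟩
    simp only [Set.mem_singleton_iff] at hw
    subst hw
    simp only [hNdef, Set.mem_setOf_eq, hgdef, sub_self, norm_zero]
    positivity
  obtain ⟨u, v, hu, hv, hsu, hsv, huv⟩ := generalized_tube_lemma (isCompact_closedBall α₁ r)
    isCompact_singleton hNopen hsubN
  obtain ⟨δ, hδ, hballδ⟩ := Metric.isOpen_iff.mp hv α₂ (hsv rfl)
  -- pick β ∈ B₂ close to α₂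
  have hα₂cl : α₂ ∈ closure B₂ := frontier_subset_closure hα₂
  obtain ⟨β, hβB₂, hβd⟩ := Metric.mem_closure_iff.mp hα₂cl δ hδ
  have hβv : β ∈ v := hballδ (by simpa [Metric.mem_ball, dist_comm] using hβd)
  have hclose : ∀ z ∈ Metric.closedBall α₁ r,
      ‖MvPolynomial.eval ![z, β] f - g z‖ < m / 2 := by
    intro z hz
    have : (z, β) ∈ N := huv ⟨hsu hz, hβv⟩
    simpa [hNdef] using this
  set h : ℂ → ℂ := fun z => MvPolynomial.eval ![z, β] f with hhdef
  have hhdiff : Differentiable ℂ h := diffSlice f β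
  -- lower bound for ‖h‖ on sphere
  have hsphere : ∀ z ∈ Metric.sphere α₁ r, m / 2 ≤ ‖h z‖ := by
    intro z hz
    have hzcb : z ∈ Metric.closedBall α₁ r := Metric.sphere_subset_closedBall hz
    have h1 : ‖h z - g z‖ < m / 2 := hclose z hzcb
    have h2 : m ≤ ‖g z‖ := hzmin z hz
    have h3 : ‖g z‖ - ‖h z‖ ≤ ‖g z - h z‖ := norm_sub_norm_le _ _
    have h4 : ‖g z - h z‖ = ‖h z - g z‖ := norm_sub_rev _ _
    linarith
  -- h has a zero in the closed ball
  have hzeroh : ∃ z₀ ∈ Metric.closedBall α₁ r, h z₀ = 0 := by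
    by_contra hnz
    push_neg at hnz
    have hcb : closure (Metric.ball α₁ r) = Metric.closedBall α₁ r := closure_ball α₁ hr.ne'
    have hdc : DiffContOnCl ℂ (fun z => (h z)⁻¹) (Metric.ball α₁ r) := by
      constructor
      · exact (hhdiff.differentiableOn).inv fun z hz =>
          hnz z (Metric.ball_subset_closedBall hz)
      · rw [hcb]
        exact (hhdiff.continuous.continuousOn).inv₀ fun z hz => hnz z hz
    have hfr : ∀ z ∈ frontier (Metric.ball α₁ r), ‖(h z)⁻¹‖ ≤ (m / 2)⁻¹ := by
      intro z hz
      rw [frontier_ball α₁ hr.ne'] at hz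
      rw [norm_inv]
      exact inv_anti₀ (by linarith) (hsphere z hz)
    have hmax := Complex.norm_le_of_forall_mem_frontier_norm_le Metric.isBounded_ball hdc hfr
      (by rw [hcb]; exact Metric.mem_closedBall_self hr.le : α₁ ∈ closure (Metric.ball α₁ r))
    have hα₁ne : h α₁ ≠ 0 := hnz α₁ (Metric.mem_closedBall_self hr.le)
    rw [norm_inv] at hmax
    have hge : m / 2 ≤ ‖h α₁‖ := by
      have hpos : 0 < ‖h α₁‖ := norm_pos_iff.mpr hα₁ne
      have := (inv_le_inv₀ hpos (by linarith : (0:ℝ) < m / 2)).mp hmax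
      linarith
    have hlt : ‖h α₁‖ < m / 2 := by
      have := hclose α₁ (Metric.mem_closedBall_self hr.le)
      simpa [hgdef, hzero] using this
    linarith
  obtain ⟨z₀, hz₀cb, hz₀⟩ := hzeroh
  exact hstable z₀ β (hcbB₁ hz₀cb) hβB₂ hz₀
end
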